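/- arXiv:1602.05560 — 6 statements merged into one kernel-verified Lean document; each statement's English description precedes it below -/
import Mathlib

section
/- Let, for each n, Z be a random element of a finite set 𝒵_n, L : 𝒵_n → ℝ a score function, 𝓡 a random transformation of 𝒵_n (a Markov kernel applied independently of Z), and 𝔲 : 𝒵_n → ℤ, 𝔳 : 𝒵_n → ℤ^d, with U := 𝔲(Z), V := 𝔳(Z), and P_{(u,v)} the conditional law of Z given U=u, V=v. Assume: (A1) there exist a universal constant ε_o > 0 and a sequence Δ_n → 0 such that P( E[L(𝓡(Z)) − L(Z) | Z] ≥ ε_o ) ≥ 1 − Δ_n; (A2) there is a universal constant A < ∞ such that L(𝓡(Z)) − L(Z) ≥ −A almost surely; (A3) there exist sets 𝒱_n contained in the support of V and, for each v ∈ 𝒱_n, a discrete interval 𝒰_n(v) = {u_n(v)+1, …, u_n(v)+m_n(v)} contained in the fiber {u : P(U=u, V=v) > 0}, such that for every v ∈ 𝒱_n and u ∈ 𝒰_n(v), if Z ∼ P_{(u,v)} then 𝓡(Z) ∼ P_{(u+1,v)}; (A4) there exist n₁ and a constant c > 0 (independent of n and v) such that for every n ≥ n₁ and v ∈ 𝒱_n,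 m_n(v) ≥ c·φ_v(n)^{−1}, where φ_v(n) > 0 satisfies min_{u ∈ 𝒰_n(v)} P(U=u | V=v) ≥ φ_v(n). Suppose moreover that φ(n) := sup_{v ∈ 𝒱_n} φ_v(n) → 0 as n → ∞ and that there exists b_o > 0 with P(V ∈ 𝒱_n) ≥ b_o for all n large enough. Then for every convex nondecreasing function Φ : ℝ⁺ → ℝ⁺, every sequence of reals μ_n, and every constant c_o ∈ (0, b_o c/8), for all sufficiently large n: E Φ(|L(Z) − μ_n|) ≥ Φ( ε_o c / (16 φ(n)) ) · c_o. -/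
open Finset

noncomputable section

open Classical in
/-- Probability of an event under a pmf on a finite type. -/
def prOf {Ω : Type*} [Fintype Ω] (P : Ω → ℝ) (E : Ω → Prop) : ℝ :=
  ∑ z, if E z then P z else 0

open Classical in
/-- The conditional law `P_{(u,v)}` of `Z` given `𝔲(Z) = u` and `𝔳(Z) = v`. -/
def condUV {Ω : Type*} {d : ℕ} [Fintype Ω] (P : Ω → ℝ) (𝔲 : Ω → ℤ) (𝔳 : Ω → Fin d → ℤ)
    (u : ℤ) (v : Fin d → ℤ) (z : Ω) : ℝ :=
  (if 𝔲 z = u ∧ 𝔳 z = v then P z else 0) / prOf P (fun w => 𝔲 w = u ∧ 𝔳 w = v)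

section prOfHelpers

variable {Ω' : Type*} [Fintype Ω'] (P : Ω' → ℝ)

lemma prOf_nonneg (hP : ∀ z, 0 ≤ P z) (E : Ω' → Prop) : 0 ≤ prOf P E := by
  unfold prOf
  apply Finset.sum_nonneg
  intro z _
  split_ifs
  · exact hP z
  · exact le_rfl

lemma prOf_mono (hP : ∀ z, 0 ≤ P z) {E F : Ω' → Prop} (h : ∀ z, E z → F z) :
    prOf P E ≤ prOf P F := by
  unfold prOf
  apply Finset.sum_le_sum
  intro z _
  by_cases hE : E z
  · rw [if_pos hE, if_pos (h z hE)]
  · rw [if_neg hE]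
    split_ifs
    · exact hP z
    · exact le_rfl

lemma prOf_add_compl (E : Ω' → Prop) : prOf P E + prOf P (fun z => ¬ E z) = ∑ z, P z := by
  unfold prOf
  rw [← Finset.sum_add_distrib]
  apply Finset.sum_congr rfl
  intro z _
  by_cases hE : E z <;> simp [hE]

lemma prOf_split (E F : Ω' → Prop) :
    prOf P E = prOf P (fun z => E z ∧ F z) + prOf P (fun z => E z ∧ ¬ F z) := by
  unfold prOf
  rw [← Finset.sum_add_distrib]
  apply Finset.sum_congr rfl
  intro z _
  by_cases hE : E z <;> by_cases hF : F z <;> simp [hE, hF]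

lemma prOf_congr {E F : Ω' → Prop} (h : ∀ z, E z ↔ F z) : prOf P E = prOf P F := by
  classical
  unfold prOf
  apply Finset.sum_congr rfl
  intro z _
  exact if_congr (h z) rfl rfl

lemma prOf_mem_finset {α : Type*} (S : Finset α) (gv : Ω' → α) :
    prOf P (fun z => gv z ∈ S) = ∑ v ∈ S, prOf P (fun z => gv z = v) := by
  classical
  unfold prOf
  rw [Finset.sum_comm]
  apply Finset.sum_congr rfl
  intro z _
  by_cases hz : gv z ∈ S
  · rw [if_pos hz, Finset.sum_eq_single_of_mem (gv z) hz]
    · rw [if_pos rfl]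
    · intro v _ hne
      rw [if_neg (fun h => hne h.symm)]
  · rw [if_neg hz, Finset.sum_eq_zero]
    intro v hv
    rw [if_neg (fun h => hz (by rw [h]; exact hv))]

lemma prOf_fiber_sum_le {α : Type*} (hP : ∀ z, 0 ≤ P z) (S : Finset α) (gv : Ω' → α)
    (E : Ω' → Prop) :
    ∑ v ∈ S, prOf P (fun z => E z ∧ gv z = v) ≤ prOf P E := by
  classical
  unfold prOf
  rw [Finset.sum_comm]
  apply Finset.sum_le_sum
  intro z _
  beta_reduce
  by_cases hE : E z
  · by_cases hz : gv z ∈ S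
    · rw [if_pos hE, Finset.sum_eq_single_of_mem (gv z) hz]
      · rw [if_pos ⟨hE, rfl⟩]
      · intro v _ hne
        rw [if_neg]
        rintro ⟨-, h⟩
        exact hne h.symm
    · rw [if_pos hE]
      refine le_trans (le_of_eq (Finset.sum_eq_zero ?_)) (hP z)
      intro v hv
      rw [if_neg]
      rintro ⟨-, h⟩
      exact hz (by rw [h]; exact hv)
  · rw [if_neg hE]
    refine le_of_eq (Finset.sum_eq_zero ?_)
    intro v _
    rw [if_neg]
    rintro ⟨h, -⟩
    exact hE h

end prOfHelpers

/-- sum of an indicator-weighted constant over a set where the indicator can hold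
at most once. -/
lemma sum_ite_le_of_subsingleton {ι : Type*} (s : Finset ι) (Q : ι → Prop)
    {inst : DecidablePred Q} (w : ℝ) (hw : 0 ≤ w)
    (hQ : ∀ i ∈ s, ∀ j ∈ s, Q i → Q j → i = j) :
    ∑ i ∈ s, (if Q i then w else 0) ≤ w := by
  by_cases hex : ∃ i ∈ s, Q i
  · obtain ⟨i0, hi0, hQ0⟩ := hex
    rw [Finset.sum_eq_single_of_mem i0 hi0]
    · rw [if_pos hQ0]
    · intro j hj hne
      rw [if_neg]
      intro hQj
      exact hne (hQ j hj i0 hi0 hQj hQ0)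
  · refine le_trans (le_of_eq (Finset.sum_eq_zero ?_)) hw
    intro i hi
    rw [if_neg]
    intro hQi
    exact hex ⟨i, hi, hQi⟩

/-- Finite Jensen for `x ↦ Φ |x - μ|`. -/
lemma jensen_abs {ι : Type*} (t : Finset ι) (Φ : ℝ → ℝ)
    (hΦconv : ConvexOn ℝ (Set.Ici 0) Φ) (hΦmono : MonotoneOn Φ (Set.Ici 0))
    (w x : ι → ℝ) (hw : ∀ i ∈ t, 0 ≤ w i) (h1 : ∑ i ∈ t, w i = 1) (μ : ℝ) :
    Φ |∑ i ∈ t, w i * x i - μ| ≤ ∑ i ∈ t, w i * Φ |x i - μ| := by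
  have key : ∑ i ∈ t, w i * x i - μ = ∑ i ∈ t, w i * (x i - μ) := by
    simp only [mul_sub]
    rw [Finset.sum_sub_distrib, ← Finset.sum_mul, h1, one_mul]
  have h2 : |∑ i ∈ t, w i * (x i - μ)| ≤ ∑ i ∈ t, w i * |x i - μ| := by
    refine (Finset.abs_sum_le_sum_abs _ _).trans ?_
    apply Finset.sum_le_sum
    intro i hi
    rw [abs_mul, abs_of_nonneg (hw i hi)]
  have h3 : Φ |∑ i ∈ t, w i * (x i - μ)| ≤ Φ (∑ i ∈ t, w i * |x i - μ|) := by
    apply hΦmono (Set.mem_Ici.mpr (abs_nonneg _)) _ h2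
    exact Finset.sum_nonneg fun i hi => mul_nonneg (hw i hi) (abs_nonneg _)
  have h4 : Φ (∑ i ∈ t, w i * |x i - μ|) ≤ ∑ i ∈ t, w i * Φ |x i - μ| := by
    have := hΦconv.map_sum_le hw h1 (fun i _ => abs_nonneg (x i - μ) : ∀ i ∈ t, |x i - μ| ∈ Set.Ici 0)
    simpa [smul_eq_mul] using this
  rw [key]
  exact h3.trans h4

lemma descent_exists' (a : ℕ → ℝ) : ∀ t s : ℕ, s ≤ t → a t < a s →
    ∃ k, s ≤ k ∧ k < t ∧ a (k + 1) < a k := by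
  intro t
  induction t with
  | zero =>
    intro s hs h
    interval_cases s
    exact absurd h (lt_irrefl _)
  | succ t ih =>
    intro s hs h
    rcases Nat.lt_succ_iff_lt_or_eq.mp (Nat.lt_succ_of_le hs) with hlt | rfl
    · by_cases hk : a (t + 1) < a t
      · exact ⟨t, Nat.lt_succ_iff.mp hlt, Nat.lt_succ_self t, hk⟩
      · obtain ⟨k, h1, h2, h3⟩ := ih s (Nat.lt_succ_iff.mp hlt)
          (lt_of_le_of_lt (not_lt.mp hk) h)
        exact ⟨k, h1, h2.trans (Nat.lt_succ_self t), h3⟩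
    · exact absurd h (lt_irrefl _)

lemma walk_band_bound (M : ℕ) (a : ℕ → ℝ) (good : ℕ → Prop) [DecidablePred good]
    (ε A' T μ : ℝ) (hε : 0 < ε) (hA' : 0 ≤ A') (hT : 0 < T)
    (hstep : ∀ j, j + 1 < M → a (j + 1) - a j ≥ -A')
    (hgood : ∀ j, j + 1 < M → good j → a (j + 1) - a j ≥ ε / 2) :
    (((Finset.range M).filter (fun j => |a j - μ| < T)).card : ℝ)
      ≤ 4 * T / ε
        + (2 * A' / ε + 2) * (((Finset.range (M - 1)).filter (fun j => ¬ good j)).card : ℝ)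
        + 2 := by
  classical
  set S := Finset.range (M - 1) with hS
  have hmemS : ∀ j, j ∈ S ↔ j + 1 < M := by
    intro j; rw [hS, Finset.mem_range]; omega
  set Bad := S.filter (fun j => ¬ good j) with hBad
  set b := Bad.card with hb
  set f : ℕ → ℝ := fun j => max (μ - T) (min (a j) (μ + T)) with hf
  have hflb : ∀ j, μ - T ≤ f j := fun j => le_max_left _ _
  have hfub : ∀ j, f j ≤ μ + T := by
    intro j; exact max_le (by linarith) (min_le_right _ _)
  have hfmono : ∀ {x y : ℕ}, a x ≤ a y → f x ≤ f y := by
    intro x y h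
    exact max_le_max (le_refl _) (min_le_min h (le_refl _))
  have hflip : ∀ {x y : ℕ}, a y ≤ a x → f x - f y ≤ a x - a y := by
    intro x y h
    simp only [hf, max_def, min_def]
    split_ifs <;> linarith
  have hstep' : ∀ j ∈ S, -A' ≤ f (j + 1) - f j := by
    intro j hj
    rcases le_total (a j) (a (j + 1)) with h | h
    · have := hfmono h; linarith
    · have h1 := hflip h
      have h2 := hstep j ((hmemS j).mp hj)
      linarith
  have hgoodstep : ∀ j ∈ S, good j → 0 ≤ f (j + 1) - f j := by
    intro j hj hg
    have h1 := hgood j ((hmemS j).mp hj) hg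
    have h2 : a j ≤ a (j + 1) := by linarith
    have := hfmono h2; linarith
  have htel2 : ∑ j ∈ S, (f (j + 1) - f j) ≤ 2 * T := by
    rw [hS, Finset.sum_range_sub f (M - 1)]
    have := hfub (M - 1); have := hflb 0; linarith
  set I := (Finset.range M).filter (fun j => |a j - μ| < T) with hI
  set Istep := S.filter (fun j => |a j - μ| < T) with hIstep
  have hIcard : I.card ≤ Istep.card + 1 := by
    have hsub : I ⊆ insert (M - 1) Istep := by
      intro j hj
      simp only [hI, Finset.mem_filter, Finset.mem_range] at hj
      rcases eq_or_ne j (M - 1) with rfl | hne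
      · exact Finset.mem_insert_self _ _
      · apply Finset.mem_insert_of_mem
        simp only [hIstep, Finset.mem_filter, hS, Finset.mem_range]
        exact ⟨by omega, hj.2⟩
    calc I.card ≤ (insert (M - 1) Istep).card := Finset.card_le_card hsub
      _ ≤ Istep.card + 1 := Finset.card_insert_le _ _
  set Low := Istep.filter (fun j => good j ∧ a j ≤ μ + T - ε / 2) with hLow
  set Top := Istep.filter (fun j => good j ∧ ¬ (a j ≤ μ + T - ε / 2)) with hTop
  have hIstepcard : Istep.card ≤ Low.card + Top.card + b := by
    have e1 : (Istep.filter good).card + (Istep.filter (fun j => ¬ good j)).card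
        = Istep.card := Finset.card_filter_add_card_filter_not _
    have e2 : ((Istep.filter good).filter (fun j => a j ≤ μ + T - ε / 2)).card
        + ((Istep.filter good).filter (fun j => ¬ (a j ≤ μ + T - ε / 2))).card
        = (Istep.filter good).card := Finset.card_filter_add_card_filter_not _
    have e3 : (Istep.filter good).filter (fun j => a j ≤ μ + T - ε / 2) = Low := by
      rw [hLow, Finset.filter_filter]
    have e4 : (Istep.filter good).filter (fun j => ¬ (a j ≤ μ + T - ε / 2)) = Top := by
      rw [hTop, Finset.filter_filter]
    rw [e3, e4] at e2
    have e5 : (Istep.filter (fun j => ¬ good j)).card ≤ b := by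
      apply Finset.card_le_card
      rw [hIstep, hBad]
      exact Finset.filter_subset_filter _ (Finset.filter_subset _ _)
    omega
  have hLowS : Low ⊆ S := by
    rw [hLow, hIstep]
    exact (Finset.filter_subset _ _).trans (Finset.filter_subset _ _)
  have hLowsum : (ε / 2) * (Low.card : ℝ) ≤ 2 * T + A' * (b : ℝ) := by
    have h1 : ∀ j ∈ Low, ε / 2 ≤ f (j + 1) - f j := by
      intro j hj
      simp only [hLow, hIstep, Finset.mem_filter] at hj
      obtain ⟨⟨hjS, hband⟩, hg, hle⟩ := hj
      have hstepg := hgood j ((hmemS j).mp hjS) hg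
      have hband' := abs_lt.mp hband
      have hfj : f j = a j := by
        rw [hf]; simp only
        rw [min_eq_left (by linarith), max_eq_right (by linarith)]
      have hfj1 : a j + ε / 2 ≤ f (j + 1) := by
        apply le_max_of_le_right
        exact le_min (by linarith) (by linarith)
      linarith
    have h2 : (ε / 2) * (Low.card : ℝ) = ∑ _j ∈ Low, (ε / 2) := by
      rw [Finset.sum_const, nsmul_eq_mul]; ring
    have h3 : ∑ j ∈ Low, (f (j + 1) - f j)
        = ∑ j ∈ S, (f (j + 1) - f j) - ∑ j ∈ S \ Low, (f (j + 1) - f j) := by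
      rw [← Finset.sum_sdiff hLowS]; ring
    have h4 : ∑ j ∈ S \ Low, -(f (j + 1) - f j)
        ≤ ∑ j ∈ S \ Low, (if good j then 0 else A') := by
      apply Finset.sum_le_sum; intro j hj
      have hjS := (Finset.mem_sdiff.mp hj).1
      by_cases hg : good j
      · simp only [hg, if_true]; linarith [hgoodstep j hjS hg]
      · simp only [hg, if_false]; linarith [hstep' j hjS]
    have h5 : ∑ j ∈ S \ Low, (if good j then 0 else A')
        ≤ ∑ j ∈ S, (if good j then 0 else A') := by
      apply Finset.sum_le_sum_of_subset_of_nonneg Finset.sdiff_subset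
      intro j _ _
      by_cases hg : good j <;> simp [hg, hA']
    have h6 : ∑ j ∈ S, (if good j then 0 else A') = A' * (b : ℝ) := by
      have e : ∑ j ∈ S, (if good j then (0:ℝ) else A') = ∑ _j ∈ Bad, A' := by
        rw [hBad, Finset.sum_filter]
        apply Finset.sum_congr rfl
        intro j _; by_cases hg : good j <;> simp [hg]
      rw [e, Finset.sum_const, nsmul_eq_mul]; ring
    have h7 : -(∑ j ∈ S \ Low, (f (j + 1) - f j)) = ∑ j ∈ S \ Low, -(f (j + 1) - f j) := by
      rw [Finset.sum_neg_distrib]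
    calc (ε / 2) * (Low.card : ℝ) = ∑ _j ∈ Low, (ε / 2) := h2
      _ ≤ ∑ j ∈ Low, (f (j + 1) - f j) := Finset.sum_le_sum h1
      _ = ∑ j ∈ S, (f (j + 1) - f j) - ∑ j ∈ S \ Low, (f (j + 1) - f j) := h3
      _ ≤ 2 * T + A' * (b : ℝ) := by
          have h8 := h4.trans (h5.trans_eq h6)
          linarith [htel2, h7 ▸ h8]
  have hTopcard : Top.card ≤ b + 1 := by
    rcases Finset.eq_empty_or_nonempty Top with hemp | hne
    · simp [hemp]
    · set jm := Top.max' hne with hjm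
      have hjmTop : jm ∈ Top := Top.max'_mem hne
      have hTopfact : ∀ j ∈ Top, j + 1 < M ∧ |a j - μ| < T ∧ μ + T < a (j + 1) := by
        intro j hj
        simp only [hTop, hIstep, Finset.mem_filter] at hj
        obtain ⟨⟨hjS, hband⟩, hg, hgt⟩ := hj
        have hj1 := (hmemS j).mp hjS
        have h2 := hgood j hj1 hg
        have h3 := abs_lt.mp hband
        push_neg at hgt
        exact ⟨hj1, hband, by linarith⟩
      have hbetween : ∀ j ∈ Top, ∀ j' ∈ Top, j < j' → ∃ k, j < k ∧ k < j' ∧ k ∈ Bad := by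
        intro j hj j' hj' hlt
        obtain ⟨hj1, hband, hup⟩ := hTopfact j hj
        obtain ⟨hj'1, hband', _⟩ := hTopfact j' hj'
        have hlt' : a j' < a (j + 1) := by
          have := (abs_lt.mp hband').2; linarith
        obtain ⟨k, hk1, hk2, hk3⟩ := descent_exists' a j' (j + 1) hlt hlt'
        refine ⟨k, by omega, hk2, ?_⟩
        rw [hBad, Finset.mem_filter]
        have hkS : k ∈ S := (hmemS k).mpr (by omega)
        refine ⟨hkS, fun hg => ?_⟩
        have := hgood k ((hmemS k).mp hkS) hg
        linarith
      set F : ℕ → ℕ := fun j => sInf {k | j < k ∧ k ∈ Bad} with hF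
      have hFspec : ∀ j ∈ Top.erase jm, j < F j ∧ F j ∈ Bad := by
        intro j hj
        have hjTop := Finset.mem_of_mem_erase hj
        have hjne := Finset.ne_of_mem_erase hj
        have hjlt : j < jm := lt_of_le_of_ne (Top.le_max' j hjTop) hjne
        obtain ⟨k, hk1, hk2, hk3⟩ := hbetween j hjTop jm hjmTop hjlt
        have hne : {k | j < k ∧ k ∈ Bad}.Nonempty := ⟨k, hk1, hk3⟩
        have := Nat.sInf_mem hne
        exact ⟨this.1, this.2⟩
      have hFlt : ∀ j ∈ Top.erase jm, ∀ j' ∈ Top.erase jm, j < j' → F j < F j' := by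
        intro j hj j' hj' hlt
        obtain ⟨k, hk1, hk2, hk3⟩ :=
          hbetween j (Finset.mem_of_mem_erase hj) j' (Finset.mem_of_mem_erase hj') hlt
        have h1 : F j ≤ k := Nat.sInf_le ⟨hk1, hk3⟩
        have h2 := (hFspec j' hj').1
        omega
      have hinj : Set.InjOn F ↑(Top.erase jm) := by
        intro x hx y hy hxy
        rcases lt_trichotomy x y with h | h | h
        · exact absurd hxy (hFlt x hx y hy h).ne
        · exact h
        · exact absurd hxy.symm (hFlt y hy x hx h).ne
      have hcard : (Top.erase jm).card ≤ Bad.card :=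
        Finset.card_le_card_of_injOn F (fun j hj => (hFspec j hj).2) hinj
      have := Finset.card_erase_add_one hjmTop
      omega
  -- final assembly
  have c1 : (I.card : ℝ) ≤ (Istep.card : ℝ) + 1 := by exact_mod_cast hIcard
  have c2 : (Istep.card : ℝ) ≤ (Low.card : ℝ) + (Top.card : ℝ) + (b : ℝ) := by
    exact_mod_cast hIstepcard
  have c4 : (Top.card : ℝ) ≤ (b : ℝ) + 1 := by exact_mod_cast hTopcard
  have key : ε * (I.card : ℝ)
      ≤ ε * (4 * T / ε + (2 * A' / ε + 2) * (b : ℝ) + 2) := by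
    have e : ε * (4 * T / ε + (2 * A' / ε + 2) * (b : ℝ) + 2)
        = 4 * T + 2 * A' * (b : ℝ) + 2 * ε * (b : ℝ) + 2 * ε := by
      field_simp; ring
    rw [e]
    have hb0 : (0:ℝ) ≤ (b:ℝ) := Nat.cast_nonneg b
    nlinarith [hLowsum, c1, c2, c4]
  exact le_of_mul_le_mul_left key hε

set_option maxHeartbeats 2000000 in
/-- general lower bound theorem: for each `n`, let `Z` be a random
element of a finite set `𝒵_n` with law `P n`, `L n` a score, `R n` a Markov kernel
(random transformation applied independently of `Z`), and `U = 𝔲 n (Z)`,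
`V = 𝔳 n (Z)`. Assume:
(A1) there exist `ε > 0` and `Δ_n → 0` with `P(E[L(𝓡(Z)) - L(Z)|Z] ≥ ε) ≥ 1 - Δ_n`;
(A2) `L(𝓡(Z)) - L(Z) ≥ -A` (on the support of the kernel);
(A3) there exist sets `𝒱_n` inside the support of `V` and discrete intervals
`𝒰_n(v) = {u_n(v)+1, …, u_n(v)+m_n(v)}` inside the fiber `{u : P(U = u, V = v) > 0}`
such that for `v ∈ 𝒱_n`, `u ∈ 𝒰_n(v)`: if `Z ∼ P_{(u,v)}` then `𝓡(Z) ∼ P_{(u+1,v)}`;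
(A4) for `n ≥ n₁` and `v ∈ 𝒱_n`, `m_n(v) ≥ c φ_v(n)⁻¹` where `φ_v(n) > 0` is a lower
bound for `min_{u ∈ 𝒰_n(v)} P(U = u | V = v)`, with `c > 0` independent of `n, v`.
If moreover `φ(n) := sup_{v ∈ 𝒱_n} φ_v(n) → 0` and `P(V ∈ 𝒱_n) ≥ b_o > 0` for all
large `n`, then for every convex nondecreasing `Φ : ℝ⁺ → ℝ⁺`, every sequence of reals
`μ_n` and every `c_o ∈ (0, b_o c/8)`, for all sufficiently large `n`:
`E Φ(|L(Z) - μ_n|) ≥ Φ(ε c/(16 φ(n))) c_o`. -/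
theorem general_moment_lower_bound
    (d : ℕ) (Ω : ℕ → Type) [∀ n, Fintype (Ω n)]
    (P : ∀ n, Ω n → ℝ)
    (hPnn : ∀ n z, 0 ≤ P n z) (hP1 : ∀ n, ∑ z, P n z = 1)
    (L : ∀ n, Ω n → ℝ)
    (R : ∀ n, Ω n → Ω n → ℝ)
    (hRnn : ∀ n z z', 0 ≤ R n z z') (hR1 : ∀ n z, ∑ z', R n z z' = 1)
    (𝔲 : ∀ n, Ω n → ℤ) (𝔳 : ∀ n, Ω n → Fin d → ℤ)
    -- (A1)
    (ε : ℝ) (hε : 0 < ε)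
    (Δ : ℕ → ℝ) (hΔ : Filter.Tendsto Δ Filter.atTop (nhds 0))
    (hA1 : ∀ n, prOf (P n) (fun z => ε ≤ (∑ z', R n z z' * L n z') - L n z) ≥ 1 - Δ n)
    -- (A2)
    (A : ℝ)
    (hA2 : ∀ n z z', 0 < R n z z' → L n z' - L n z ≥ -A)
    -- (A3)
    (𝒱 : ∀ n, Finset (Fin d → ℤ))
    (h𝒱supp : ∀ n, ∀ v ∈ 𝒱 n, 0 < prOf (P n) (fun z => 𝔳 n z = v))
    (un mn : ∀ n : ℕ, (Fin d → ℤ) → ℤ)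
    (hfiber : ∀ n, ∀ v ∈ 𝒱 n, ∀ u : ℤ, un n v < u → u ≤ un n v + mn n v →
      0 < prOf (P n) (fun z => 𝔲 n z = u ∧ 𝔳 n z = v))
    (hA3 : ∀ n, ∀ v ∈ 𝒱 n, ∀ u : ℤ, un n v < u → u ≤ un n v + mn n v →
      ∀ z', (∑ z, condUV (P n) (𝔲 n) (𝔳 n) u v z * R n z z')
        = condUV (P n) (𝔲 n) (𝔳 n) (u + 1) v z')
    -- (A4)
    (φ : ℕ → (Fin d → ℤ) → ℝ)
    (hφpos : ∀ n, ∀ v ∈ 𝒱 n, 0 < φ n v)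
    (hφmin : ∀ n, ∀ v ∈ 𝒱 n, ∀ u : ℤ, un n v < u → u ≤ un n v + mn n v →
      prOf (P n) (fun z => 𝔲 n z = u ∧ 𝔳 n z = v) / prOf (P n) (fun z => 𝔳 n z = v)
        ≥ φ n v)
    (n₁ : ℕ) (c : ℝ) (hc : 0 < c)
    (hA4 : ∀ n, n₁ ≤ n → ∀ v ∈ 𝒱 n, (mn n v : ℝ) ≥ c / φ n v)
    -- `φ(n) = sup_{v ∈ 𝒱_n} φ_v(n) → 0`
    (hφ0 : Filter.Tendsto
      (fun n => sSup ((fun v => φ n v) '' (𝒱 n : Set (Fin d → ℤ))))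
      Filter.atTop (nhds 0))
    -- `P(V ∈ 𝒱_n) ≥ b_o` for large `n`
    (bo : ℝ) (hbo : 0 < bo)
    (hbV : ∀ᶠ n in Filter.atTop, prOf (P n) (fun z => 𝔳 n z ∈ 𝒱 n) ≥ bo)
    -- conclusion
    (Φ : ℝ → ℝ) (hΦconv : ConvexOn ℝ (Set.Ici 0) Φ)
    (hΦmono : MonotoneOn Φ (Set.Ici 0)) (hΦnn : ∀ x : ℝ, 0 ≤ x → 0 ≤ Φ x)
    (μ : ℕ → ℝ)
    (co : ℝ) (hco : 0 < co) (hco' : co < bo * c / 8) :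
    ∀ᶠ n in Filter.atTop,
      (∑ z, P n z * Φ |L n z - μ n|)
        ≥ Φ (ε * c / (16 * sSup ((fun v => φ n v) '' (𝒱 n : Set (Fin d → ℤ))))) * co := by
  classical
  set A' := max A 0 with hA'def
  have hA'0 : (0:ℝ) ≤ A' := le_max_right _ _
  have hεA' : (0:ℝ) < 2 * (ε + A') := by linarith
  set τ := ε / (2 * (ε + A')) with hτdef
  have hτ : 0 < τ := div_pos hε hεA'
  set K := 2 * A' / ε + 2 with hKdef
  have hK : (0:ℝ) < K := by positivity
  set η := c * τ / (8 * K) with hηdef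
  have hη : 0 < η := by positivity
  have hθpos : 0 < bo - 2 * co / c := by
    rw [sub_pos, div_lt_iff₀ hc]
    nlinarith
  have ev2 : ∀ᶠ n in Filter.atTop, Δ n < η * (bo - 2 * co / c) :=
    hΔ.eventually_lt_const (by positivity)
  have ev3 : ∀ᶠ n in Filter.atTop,
      sSup ((fun v => φ n v) '' (𝒱 n : Set (Fin d → ℤ))) < c / 16 :=
    hφ0.eventually_lt_const (by positivity)
  filter_upwards [Filter.eventually_ge_atTop n₁, hbV, ev2, ev3] with n hn1 hbVn hΔn hφn
  set φn := sSup ((fun v => φ n v) '' (𝒱 n : Set (Fin d → ℤ))) with hφndef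
  -- nonemptiness and positivity of `φn`
  have h𝒱ne : (𝒱 n).Nonempty := by
    by_contra hne
    rw [Finset.not_nonempty_iff_eq_empty] at hne
    have h0 : prOf (P n) (fun z => 𝔳 n z ∈ 𝒱 n) = 0 := by
      unfold prOf
      apply Finset.sum_eq_zero
      intro z _
      rw [if_neg (by simp [hne])]
    rw [h0] at hbVn
    linarith
  have hbdd : BddAbove ((fun v => φ n v) '' (𝒱 n : Set (Fin d → ℤ))) :=
    ((𝒱 n).finite_toSet.image _).bddAbove
  obtain ⟨v₀, hv₀⟩ := h𝒱ne
  have hφnpos : 0 < φn :=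
    lt_of_lt_of_le (hφpos n v₀ hv₀) (le_csSup hbdd ⟨v₀, by exact_mod_cast hv₀, rfl⟩)
  set T := ε * c / (16 * φn) with hTdef
  have hT : 0 < T := by positivity
  -- the score increment function
  set g : Ω n → ℝ := fun z => (∑ z', R n z z' * L n z') - L n z with hgdef
  have hgA : ∀ z, -A' ≤ g z := by
    intro z
    have h1 : g z = ∑ z', R n z z' * (L n z' - L n z) := by
      simp only [hgdef, mul_sub]
      rw [Finset.sum_sub_distrib, ← Finset.sum_mul, hR1 n z, one_mul]
    rw [h1]
    have h2 : -A' = ∑ z' : Ω n, R n z z' * (-A') := by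
      rw [← Finset.sum_mul, hR1 n z, one_mul]
    rw [h2]
    apply Finset.sum_le_sum
    intro z' _
    rcases eq_or_lt_of_le (hRnn n z z') with h0 | h0
    · rw [← h0]; simp
    · have h3 := hA2 n z z' h0
      have h4 : -A' ≤ L n z' - L n z := by
        have h5 : A ≤ A' := le_max_left _ _
        linarith
      exact mul_le_mul_of_nonneg_left h4 (hRnn n z z')
  have hA1n : prOf (P n) (fun z => ε ≤ g z) ≥ 1 - Δ n := hA1 n
  have hpB : prOf (P n) (fun z => ¬ (ε ≤ g z)) ≤ Δ n := by
    have h1 := prOf_add_compl (P n) (fun z => ε ≤ g z)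
    rw [hP1 n] at h1
    linarith
  -- probabilities
  set pv : (Fin d → ℤ) → ℝ := fun v => prOf (P n) (fun z => 𝔳 n z = v) with hpvdef
  set pBv : (Fin d → ℤ) → ℝ :=
    fun v => prOf (P n) (fun z => ¬ (ε ≤ g z) ∧ 𝔳 n z = v) with hpBvdef
  set puv : ℤ → (Fin d → ℤ) → ℝ :=
    fun u v => prOf (P n) (fun z => 𝔲 n z = u ∧ 𝔳 n z = v) with hpuvdef
  set pBuv : ℤ → (Fin d → ℤ) → ℝ :=
    fun u v => prOf (P n) (fun z => ¬ (ε ≤ g z) ∧ (𝔲 n z = u ∧ 𝔳 n z = v)) with hpBuvdef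
  set 𝒢 := (𝒱 n).filter (fun v => pBv v ≤ η * pv v) with h𝒢def
  have hGsub : 𝒢 ⊆ 𝒱 n := Finset.filter_subset _ _
  -- mass of good v's
  have h𝒢mass : 2 * co / c ≤ ∑ v ∈ 𝒢, pv v := by
    have h1 : (bo:ℝ) ≤ ∑ v ∈ 𝒱 n, pv v := by
      simp only [hpvdef]
      rw [← prOf_mem_finset (P n) (𝒱 n) (𝔳 n)]
      exact hbVn
    have h2 : ∑ v ∈ 𝒱 n \ 𝒢, pv v + ∑ v ∈ 𝒢, pv v = ∑ v ∈ 𝒱 n, pv v :=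
      Finset.sum_sdiff hGsub
    have h3 : ∑ v ∈ 𝒱 n \ 𝒢, pv v ≤ Δ n / η := by
      have h4 : ∀ v ∈ 𝒱 n \ 𝒢, pv v ≤ pBv v / η := by
        intro v hv
        obtain ⟨hv𝒱, hvn𝒢⟩ := Finset.mem_sdiff.mp hv
        have h4' : ¬ (pBv v ≤ η * pv v) := by
          intro hcon
          exact hvn𝒢 (Finset.mem_filter.mpr ⟨hv𝒱, hcon⟩)
        rw [le_div_iff₀ hη]
        linarith [not_le.mp h4']
      have h5 : ∑ v ∈ 𝒱 n \ 𝒢, pBv v ≤ Δ n := by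
        have h6 : ∑ v ∈ 𝒱 n \ 𝒢, pBv v ≤ ∑ v ∈ 𝒱 n, pBv v := by
          apply Finset.sum_le_sum_of_subset_of_nonneg Finset.sdiff_subset
          intro v _ _
          exact prOf_nonneg (P n) (hPnn n) _
        have h7 : ∑ v ∈ 𝒱 n, pBv v ≤ prOf (P n) (fun z => ¬ (ε ≤ g z)) := by
          simp only [hpBvdef]
          exact prOf_fiber_sum_le (P n) (hPnn n) (𝒱 n) (𝔳 n) _
        linarith
      calc ∑ v ∈ 𝒱 n \ 𝒢, pv v ≤ ∑ v ∈ 𝒱 n \ 𝒢, pBv v / η := Finset.sum_le_sum h4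
        _ = (∑ v ∈ 𝒱 n \ 𝒢, pBv v) / η := by rw [Finset.sum_div]
        _ ≤ Δ n / η := (div_le_div_iff_of_pos_right hη).mpr h5
    have h8 : Δ n / η < bo - 2 * co / c := (div_lt_iff₀ hη).mpr (by linarith)
    linarith
  -- conditional objects
  set aa : ℤ → (Fin d → ℤ) → ℝ :=
    fun u v => ∑ z, condUV (P n) (𝔲 n) (𝔳 n) u v z * L n z with haadef
  set Eg : ℤ → (Fin d → ℤ) → ℝ :=
    fun u v => ∑ z, condUV (P n) (𝔲 n) (𝔳 n) u v z * g z with hEgdef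
  set M : (Fin d → ℤ) → ℕ := fun v => (mn n v).toNat with hMdef
  set uj : (Fin d → ℤ) → ℕ → ℤ := fun v j => un n v + 1 + (j : ℤ) with hujdef
  set av : (Fin d → ℤ) → ℕ → ℝ := fun v j => aa (uj v j) v with havdef
  set Out : (Fin d → ℤ) → Finset ℕ :=
    fun v => (Finset.range (M v)).filter (fun j => ¬ (|av v j - μ n| < T)) with hOutdef
  have hcond_nonneg : ∀ u v z, 0 ≤ condUV (P n) (𝔲 n) (𝔳 n) u v z := by
    intro u v z
    unfold condUV
    apply div_nonneg _ (prOf_nonneg (P n) (hPnn n) _)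
    split_ifs
    · exact hPnn n z
    · exact le_rfl
  have hcond_sum : ∀ u v, 0 < puv u v → ∑ z, condUV (P n) (𝔲 n) (𝔳 n) u v z = 1 := by
    intro u v hu
    have hnz : prOf (P n) (fun w => 𝔲 n w = u ∧ 𝔳 n w = v) ≠ 0 := ne_of_gt hu
    unfold condUV
    rw [← Finset.sum_div, div_eq_one_iff_eq hnz]
    unfold prOf
    apply Finset.sum_congr rfl
    intro z _
    by_cases h : 𝔲 n z = u ∧ 𝔳 n z = v <;> simp [h]
  -- the main per-v estimate
  have keyv : ∀ v ∈ 𝒢, Φ T * ((c / 2) * pv v)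
      ≤ ∑ j ∈ Out v, ∑ z,
          (if 𝔲 n z = uj v j ∧ 𝔳 n z = v then P n z else 0) * Φ |L n z - μ n| := by
    intro v hv𝒢
    have hv𝒱 : v ∈ 𝒱 n := hGsub hv𝒢
    have hvB : pBv v ≤ η * pv v := (Finset.mem_filter.mp hv𝒢).2
    have hpv : 0 < pv v := h𝒱supp n v hv𝒱
    have hφv : 0 < φ n v := hφpos n v hv𝒱
    have hφvle : φ n v ≤ φn := le_csSup hbdd ⟨v, by exact_mod_cast hv𝒱, rfl⟩
    have hmge : c / φ n v ≤ (mn n v : ℝ) := hA4 n hn1 v hv𝒱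
    have hcφ : c / φn ≤ c / φ n v := by
      rw [div_le_div_iff₀ hφnpos hφv]
      nlinarith
    have h16 : (16:ℝ) < c / φn := by
      rw [lt_div_iff₀ hφnpos]
      linarith
    have hm16 : (16:ℝ) ≤ (mn n v : ℝ) := by linarith
    have hmn0 : (0:ℤ) ≤ mn n v := by
      have h0 : (0:ℝ) ≤ (mn n v : ℝ) := by linarith
      exact_mod_cast h0
    have hMZ : ((M v : ℕ) : ℤ) = mn n v := by
      simp only [hMdef]
      exact Int.toNat_of_nonneg hmn0
    have hMcast : ((M v : ℕ) : ℝ) = (mn n v : ℝ) := by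
      exact_mod_cast hMZ
    have hjmem : ∀ j : ℕ, j < M v → un n v < uj v j ∧ uj v j ≤ un n v + mn n v := by
      intro j hj
      have hjZ : (j : ℤ) < mn n v := by
        rw [← hMZ]
        exact_mod_cast hj
      constructor
      · show un n v < un n v + 1 + (j : ℤ)
        omega
      · show un n v + 1 + (j : ℤ) ≤ un n v + mn n v
        omega
    have hpuv : ∀ j : ℕ, j < M v → 0 < puv (uj v j) v := by
      intro j hj
      exact hfiber n v hv𝒱 _ (hjmem j hj).1 (hjmem j hj).2
    have hpuvφ : ∀ j : ℕ, j < M v → φ n v * pv v ≤ puv (uj v j) v := by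
      intro j hj
      have hpv' : 0 < prOf (P n) (fun z => 𝔳 n z = v) := hpv
      have h1 := hφmin n v hv𝒱 _ (hjmem j hj).1 (hjmem j hj).2
      rw [ge_iff_le, le_div_iff₀ hpv'] at h1
      exact h1
    -- recurrence for conditional means
    have hrec : ∀ j : ℕ, j + 1 < M v → av v (j + 1) = av v j + Eg (uj v j) v := by
      intro j hj
      have hu1 : uj v (j + 1) = uj v j + 1 := by
        simp only [hujdef]
        push_cast
        ring
      have hb := hjmem j (by omega)
      have h3 := hA3 n v hv𝒱 (uj v j) hb.1 hb.2
      have e1 : av v (j + 1) = ∑ z', condUV (P n) (𝔲 n) (𝔳 n) (uj v j + 1) v z' * L n z' := by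
        simp only [havdef, haadef, hu1]
      rw [e1]
      calc ∑ z', condUV (P n) (𝔲 n) (𝔳 n) (uj v j + 1) v z' * L n z'
          = ∑ z', (∑ z, condUV (P n) (𝔲 n) (𝔳 n) (uj v j) v z * R n z z') * L n z' := by
            apply Finset.sum_congr rfl
            intro z' _
            rw [h3 z']
        _ = ∑ z', ∑ z, condUV (P n) (𝔲 n) (𝔳 n) (uj v j) v z * (R n z z' * L n z') := by
            apply Finset.sum_congr rfl
            intro z' _
            rw [Finset.sum_mul]
            apply Finset.sum_congr rfl
            intro z _
            ring
        _ = ∑ z, ∑ z', condUV (P n) (𝔲 n) (𝔳 n) (uj v j) v z * (R n z z' * L n z') :=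
            Finset.sum_comm
        _ = ∑ z, condUV (P n) (𝔲 n) (𝔳 n) (uj v j) v z * (g z + L n z) := by
            apply Finset.sum_congr rfl
            intro z _
            rw [← Finset.mul_sum]
            congr 1
            simp only [hgdef]
            ring
        _ = av v j + Eg (uj v j) v := by
            simp only [havdef, haadef, hEgdef, mul_add, Finset.sum_add_distrib]
            ring
    have hEgA : ∀ j : ℕ, j < M v → -A' ≤ Eg (uj v j) v := by
      intro j hj
      have hsum := hcond_sum (uj v j) v (hpuv j hj)
      have h1 : ∑ z, condUV (P n) (𝔲 n) (𝔳 n) (uj v j) v z * (-A') ≤ Eg (uj v j) v := by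
        simp only [hEgdef]
        apply Finset.sum_le_sum
        intro z _
        exact mul_le_mul_of_nonneg_left (hgA z) (hcond_nonneg _ _ z)
      calc -A' = (∑ z, condUV (P n) (𝔲 n) (𝔳 n) (uj v j) v z) * (-A') := by
            rw [hsum, one_mul]
        _ = ∑ z, condUV (P n) (𝔲 n) (𝔳 n) (uj v j) v z * (-A') := by rw [Finset.sum_mul]
        _ ≤ Eg (uj v j) v := h1
    -- probability of a bad step
    have hbadprob : ∀ j : ℕ, j < M v → ¬ (ε / 2 ≤ Eg (uj v j) v) →
        τ * puv (uj v j) v ≤ pBuv (uj v j) v := by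
      intro j hj hbad
      have hp : 0 < puv (uj v j) v := hpuv j hj
      have hp' : prOf (P n) (fun w => 𝔲 n w = uj v j ∧ 𝔳 n w = v) ≠ 0 := ne_of_gt hp
      have hqle : pBuv (uj v j) v ≤ puv (uj v j) v := by
        simp only [hpBuvdef, hpuvdef]
        apply prOf_mono (P n) (hPnn n)
        intro z hz
        exact hz.2
      have hq0 : 0 ≤ pBuv (uj v j) v := prOf_nonneg (P n) (hPnn n) _
      have hnum : Eg (uj v j) v * puv (uj v j) v
          = ∑ z, (if 𝔲 n z = uj v j ∧ 𝔳 n z = v then P n z else 0) * g z := by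
        simp only [hEgdef, hpuvdef]
        rw [Finset.sum_mul]
        apply Finset.sum_congr rfl
        intro z _
        unfold condUV
        field_simp
      have hsplitp : puv (uj v j) v
          = prOf (P n) (fun z => (𝔲 n z = uj v j ∧ 𝔳 n z = v) ∧ (ε ≤ g z))
            + prOf (P n) (fun z => (𝔲 n z = uj v j ∧ 𝔳 n z = v) ∧ ¬ (ε ≤ g z)) := by
        simp only [hpuvdef]
        exact prOf_split (P n) _ _
      have hqeq : prOf (P n) (fun z => (𝔲 n z = uj v j ∧ 𝔳 n z = v) ∧ ¬ (ε ≤ g z))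
          = pBuv (uj v j) v := by
        simp only [hpBuvdef]
        apply prOf_congr
        intro z
        tauto
      have hnumlb : ε * (puv (uj v j) v - pBuv (uj v j) v) + (-A') * pBuv (uj v j) v
          ≤ ∑ z, (if 𝔲 n z = uj v j ∧ 𝔳 n z = v then P n z else 0) * g z := by
        have e0 : puv (uj v j) v - pBuv (uj v j) v
            = prOf (P n) (fun z => (𝔲 n z = uj v j ∧ 𝔳 n z = v) ∧ (ε ≤ g z)) := by
          rw [hsplitp, hqeq]
          ring
        have e1 : ε * (puv (uj v j) v - pBuv (uj v j) v)
            = ∑ z, (if (𝔲 n z = uj v j ∧ 𝔳 n z = v) ∧ (ε ≤ g z) then ε * P n z else 0) := by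
          rw [e0]
          unfold prOf
          rw [Finset.mul_sum]
          apply Finset.sum_congr rfl
          intro z _
          by_cases hcz : (𝔲 n z = uj v j ∧ 𝔳 n z = v) ∧ (ε ≤ g z) <;> simp [hcz]
        have e2 : (-A') * pBuv (uj v j) v
            = ∑ z, (if (𝔲 n z = uj v j ∧ 𝔳 n z = v) ∧ ¬ (ε ≤ g z) then (-A') * P n z else 0) := by
          rw [← hqeq]
          unfold prOf
          rw [Finset.mul_sum]
          apply Finset.sum_congr rfl
          intro z _
          by_cases hcz : (𝔲 n z = uj v j ∧ 𝔳 n z = v) ∧ ¬ (ε ≤ g z) <;> simp [hcz]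
        rw [e1, e2, ← Finset.sum_add_distrib]
        apply Finset.sum_le_sum
        intro z _
        by_cases hcz : 𝔲 n z = uj v j ∧ 𝔳 n z = v
        · by_cases hgz : ε ≤ g z
          · rw [if_pos ⟨hcz, hgz⟩, if_neg (by tauto), if_pos hcz]
            have h01 := mul_nonneg (hPnn n z) (sub_nonneg.mpr hgz)
            nlinarith
          · rw [if_neg (by tauto), if_pos ⟨hcz, hgz⟩, if_pos hcz]
            have h01 : 0 ≤ P n z * (g z + A') := by
              apply mul_nonneg (hPnn n z)
              have := hgA z
              linarith
            nlinarith
        · rw [if_neg (by tauto), if_neg (by tauto), if_neg hcz]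
          simp
      have hEglt : Eg (uj v j) v < ε / 2 := not_le.mp hbad
      have h10 : Eg (uj v j) v * puv (uj v j) v ≤ (ε / 2) * puv (uj v j) v :=
        mul_le_mul_of_nonneg_right hEglt.le hp.le
      have h9 : ε * puv (uj v j) v ≤ 2 * (ε + A') * pBuv (uj v j) v := by
        rw [hnum] at h10
        nlinarith [hnumlb]
      calc τ * puv (uj v j) v = (ε * puv (uj v j) v) / (2 * (ε + A')) := by
            rw [hτdef]
            ring
        _ ≤ pBuv (uj v j) v := by
            rw [div_le_iff₀ hεA']
            linarith
    -- bad steps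
    set goodv : ℕ → Prop := fun j => ε / 2 ≤ Eg (uj v j) v with hgoodvdef
    set BadV := (Finset.range (M v - 1)).filter (fun j => ¬ goodv j) with hBadVdef
    have hbcount : (BadV.card : ℝ) * (τ * (φ n v * pv v)) ≤ pBv v := by
      have h1 : (BadV.card : ℝ) * (τ * (φ n v * pv v)) = ∑ _j ∈ BadV, τ * (φ n v * pv v) := by
        rw [Finset.sum_const, nsmul_eq_mul]
      rw [h1]
      have h2 : ∑ j ∈ BadV, τ * (φ n v * pv v) ≤ ∑ j ∈ BadV, pBuv (uj v j) v := by
        apply Finset.sum_le_sum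
        intro j hj
        have hjM : j < M v := by
          have := Finset.mem_range.mp (Finset.mem_filter.mp hj).1
          omega
        have hbadj : ¬ goodv j := (Finset.mem_filter.mp hj).2
        calc τ * (φ n v * pv v) ≤ τ * puv (uj v j) v :=
              mul_le_mul_of_nonneg_left (hpuvφ j hjM) hτ.le
          _ ≤ pBuv (uj v j) v := hbadprob j hjM (by simpa [hgoodvdef] using hbadj)
      refine h2.trans ?_
      simp only [hpBuvdef, hpBvdef]
      unfold prOf
      rw [Finset.sum_comm]
      apply Finset.sum_le_sum
      intro z _
      by_cases hzB : ¬ (ε ≤ g z) ∧ 𝔳 n z = v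
      · rw [if_pos hzB]
        apply sum_ite_le_of_subsingleton _ _ _ (hPnn n z)
        intro i _ i' _ hQi hQi'
        have e3 : uj v i = uj v i' := (hQi.2.1).symm.trans hQi'.2.1
        simp only [hujdef] at e3
        omega
      · rw [if_neg hzB]
        refine le_of_eq (Finset.sum_eq_zero ?_)
        intro j' _
        rw [if_neg]
        rintro ⟨h1', h2', h3'⟩
        exact hzB ⟨h1', h3'⟩
    have hbK : (BadV.card : ℝ) * K ≤ (mn n v : ℝ) / 8 := by
      have hmφ : c ≤ (mn n v : ℝ) * φ n v := by
        rw [div_le_iff₀ hφv] at hmge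
        linarith
      have h1 : (BadV.card : ℝ) * φ n v ≤ c / (8 * K) := by
        have h2 : (BadV.card : ℝ) * (τ * (φ n v * pv v)) ≤ (c * τ / (8 * K)) * pv v := by
          refine hbcount.trans ?_
          rw [hηdef] at hvB
          linarith
        have h3 : 0 < τ * pv v := mul_pos hτ hpv
        apply le_of_mul_le_mul_right _ h3
        calc (BadV.card : ℝ) * φ n v * (τ * pv v)
            = (BadV.card : ℝ) * (τ * (φ n v * pv v)) := by ring
          _ ≤ (c * τ / (8 * K)) * pv v := h2
          _ = c / (8 * K) * (τ * pv v) := by ring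
      apply le_of_mul_le_mul_right _ hφv
      calc (BadV.card : ℝ) * K * φ n v = K * ((BadV.card : ℝ) * φ n v) := by ring
        _ ≤ K * (c / (8 * K)) := mul_le_mul_of_nonneg_left h1 hK.le
        _ = c / 8 := by
            field_simp
        _ ≤ (mn n v : ℝ) * φ n v / 8 := by linarith
        _ = (mn n v : ℝ) / 8 * φ n v := by ring
    -- the walk lemma
    have hstepw : ∀ j, j + 1 < M v → av v (j + 1) - av v j ≥ -A' := by
      intro j hj
      rw [hrec j hj]
      have := hEgA j (by omega)
      linarith
    have hgoodw : ∀ j, j + 1 < M v → goodv j → av v (j + 1) - av v j ≥ ε / 2 := by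
      intro j hj hgj
      rw [hrec j hj]
      simp only [hgoodvdef] at hgj
      linarith
    have hband := walk_band_bound (M v) (av v) goodv ε A' T (μ n) hε hA'0 hT hstepw hgoodw
    rw [← hBadVdef] at hband
    set Band := (Finset.range (M v)).filter (fun j => |av v j - μ n| < T) with hBanddef
    have hBandle : (Band.card : ℝ) ≤ (mn n v : ℝ) / 2 := by
      have h4T : 4 * T / ε = c / (4 * φn) := by
        rw [hTdef]
        field_simp
        ring
      have hcm : c / φn ≤ (mn n v : ℝ) := hcφ.trans hmge
      have e1 : c / (4 * φn) = (c / φn) / 4 := by ring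
      calc (Band.card : ℝ)
          ≤ 4 * T / ε + (2 * A' / ε + 2) * (BadV.card : ℝ) + 2 := hband
        _ = c / (4 * φn) + (BadV.card : ℝ) * K + 2 := by
            rw [h4T, hKdef]
            ring
        _ ≤ (mn n v : ℝ) / 4 + (mn n v : ℝ) / 8 + (mn n v : ℝ) / 8 := by
            have e2 : c / (4 * φn) ≤ (mn n v : ℝ) / 4 := by
              rw [e1]
              linarith
            linarith [hbK, hm16]
        _ = (mn n v : ℝ) / 2 := by ring
    have hOutcard : (mn n v : ℝ) / 2 ≤ ((Out v).card : ℝ) := by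
      have hsplit : Band.card + (Out v).card = M v := by
        have hOutv : Out v = (Finset.range (M v)).filter (fun j => ¬ (|av v j - μ n| < T)) := by
          simp only [hOutdef]
        rw [hBanddef, hOutv]
        rw [Finset.card_filter_add_card_filter_not]
        exact Finset.card_range _
      have hcast : (Band.card : ℝ) + ((Out v).card : ℝ) = (mn n v : ℝ) := by
        rw [← hMcast]
        exact_mod_cast hsplit
      linarith
    -- Jensen per out-of-band u
    have hjen : ∀ j ∈ Out v, puv (uj v j) v * Φ T
        ≤ ∑ z, (if 𝔲 n z = uj v j ∧ 𝔳 n z = v then P n z else 0) * Φ |L n z - μ n| := by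
      intro j hj
      simp only [hOutdef, Finset.mem_filter, Finset.mem_range] at hj
      obtain ⟨hjM, hout⟩ := hj
      have hp := hpuv j hjM
      have hp' : prOf (P n) (fun w => 𝔲 n w = uj v j ∧ 𝔳 n w = v) ≠ 0 := ne_of_gt hp
      have hjensen := jensen_abs Finset.univ Φ hΦconv hΦmono
        (condUV (P n) (𝔲 n) (𝔳 n) (uj v j) v) (L n)
        (fun z _ => hcond_nonneg _ _ z) (hcond_sum _ _ hp) (μ n)
      have hTle : Φ T ≤ Φ |av v j - μ n| := by
        apply hΦmono (Set.mem_Ici.mpr hT.le) (Set.mem_Ici.mpr (abs_nonneg _))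
        exact not_lt.mp hout
      have hav : av v j = ∑ z, condUV (P n) (𝔲 n) (𝔳 n) (uj v j) v z * L n z := by
        simp only [havdef, haadef]
      calc puv (uj v j) v * Φ T ≤ puv (uj v j) v * Φ |av v j - μ n| :=
            mul_le_mul_of_nonneg_left hTle hp.le
        _ ≤ puv (uj v j) v * ∑ z, condUV (P n) (𝔲 n) (𝔳 n) (uj v j) v z * Φ |L n z - μ n| := by
            apply mul_le_mul_of_nonneg_left _ hp.le
            rw [hav]
            exact hjensen
        _ = ∑ z, (if 𝔲 n z = uj v j ∧ 𝔳 n z = v then P n z else 0) * Φ |L n z - μ n| := by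
            simp only [hpuvdef]
            rw [Finset.mul_sum]
            apply Finset.sum_congr rfl
            intro z _
            unfold condUV
            by_cases hcz : 𝔲 n z = uj v j ∧ 𝔳 n z = v <;> simp [hcz]
            field_simp
    -- out-of-band mass
    have hmass : (c / 2) * pv v ≤ ∑ j ∈ Out v, puv (uj v j) v := by
      have h1 : ∀ j ∈ Out v, φ n v * pv v ≤ puv (uj v j) v := by
        intro j hj
        simp only [hOutdef, Finset.mem_filter, Finset.mem_range] at hj
        exact hpuvφ j hj.1
      have h2 : ((Out v).card : ℝ) * (φ n v * pv v) ≤ ∑ j ∈ Out v, puv (uj v j) v := by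
        calc ((Out v).card : ℝ) * (φ n v * pv v) = ∑ _j ∈ Out v, φ n v * pv v := by
              rw [Finset.sum_const, nsmul_eq_mul]
          _ ≤ ∑ j ∈ Out v, puv (uj v j) v := Finset.sum_le_sum h1
      have hmφ : c ≤ (mn n v : ℝ) * φ n v := by
        rw [div_le_iff₀ hφv] at hmge
        linarith
      have h3 : (c / 2) * pv v ≤ ((mn n v : ℝ) / 2) * (φ n v * pv v) := by
        nlinarith
      have h4 : ((mn n v : ℝ) / 2) * (φ n v * pv v) ≤ ((Out v).card : ℝ) * (φ n v * pv v) := by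
        apply mul_le_mul_of_nonneg_right hOutcard (by positivity)
      linarith
    calc Φ T * ((c / 2) * pv v) ≤ Φ T * ∑ j ∈ Out v, puv (uj v j) v :=
          mul_le_mul_of_nonneg_left hmass (hΦnn T hT.le)
      _ = ∑ j ∈ Out v, puv (uj v j) v * Φ T := by
          rw [Finset.mul_sum]
          apply Finset.sum_congr rfl
          intro j _
          ring
      _ ≤ ∑ j ∈ Out v, ∑ z,
          (if 𝔲 n z = uj v j ∧ 𝔳 n z = v then P n z else 0) * Φ |L n z - μ n| :=
          Finset.sum_le_sum hjen
  -- assembling over v and z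
  have hw : ∀ z : Ω n, 0 ≤ P n z * Φ |L n z - μ n| :=
    fun z => mul_nonneg (hPnn n z) (hΦnn _ (abs_nonneg _))
  have hX1 : ∑ v ∈ 𝒢, ∑ j ∈ Out v, ∑ z,
      (if 𝔲 n z = uj v j ∧ 𝔳 n z = v then P n z else 0) * Φ |L n z - μ n|
      ≤ ∑ z, P n z * Φ |L n z - μ n| := by
    have e1 : ∀ v, ∑ j ∈ Out v, ∑ z,
        (if 𝔲 n z = uj v j ∧ 𝔳 n z = v then P n z else 0) * Φ |L n z - μ n|
        = ∑ z, ∑ j ∈ Out v,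
            (if 𝔲 n z = uj v j ∧ 𝔳 n z = v then P n z * Φ |L n z - μ n| else 0) := by
      intro v
      rw [Finset.sum_comm]
      apply Finset.sum_congr rfl
      intro z _
      apply Finset.sum_congr rfl
      intro j _
      by_cases hc' : 𝔲 n z = uj v j ∧ 𝔳 n z = v <;> simp [hc']
    calc ∑ v ∈ 𝒢, ∑ j ∈ Out v, ∑ z,
        (if 𝔲 n z = uj v j ∧ 𝔳 n z = v then P n z else 0) * Φ |L n z - μ n|
        = ∑ v ∈ 𝒢, ∑ z, ∑ j ∈ Out v,
            (if 𝔲 n z = uj v j ∧ 𝔳 n z = v then P n z * Φ |L n z - μ n| else 0) :=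
          Finset.sum_congr rfl (fun v _ => e1 v)
      _ = ∑ z, ∑ v ∈ 𝒢, ∑ j ∈ Out v,
            (if 𝔲 n z = uj v j ∧ 𝔳 n z = v then P n z * Φ |L n z - μ n| else 0) :=
          Finset.sum_comm
      _ ≤ ∑ z, P n z * Φ |L n z - μ n| := by
          apply Finset.sum_le_sum
          intro z _
          calc ∑ v ∈ 𝒢, ∑ j ∈ Out v,
              (if 𝔲 n z = uj v j ∧ 𝔳 n z = v then P n z * Φ |L n z - μ n| else 0)
              ≤ ∑ v ∈ 𝒢, (if 𝔳 n z = v then P n z * Φ |L n z - μ n| else 0) := by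
                apply Finset.sum_le_sum
                intro v _
                by_cases hv' : 𝔳 n z = v
                · rw [if_pos hv']
                  apply sum_ite_le_of_subsingleton _ _ _ (hw z)
                  intro i _ i' _ hQi hQi'
                  have e3 : uj v i = uj v i' := (hQi.1).symm.trans hQi'.1
                  simp only [hujdef] at e3
                  omega
                · rw [if_neg hv']
                  refine le_of_eq (Finset.sum_eq_zero ?_)
                  intro j _
                  rw [if_neg (fun hc'' => hv' hc''.2)]
            _ ≤ P n z * Φ |L n z - μ n| := by
                apply sum_ite_le_of_subsingleton _ _ _ (hw z)
                intro i _ i' _ hQi hQi'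
                exact hQi.symm.trans hQi'
  -- final chain
  have hΦT : 0 ≤ Φ T := hΦnn T hT.le
  have hcc : (c / 2) * (2 * co / c) = co := by
    field_simp
  calc Φ (ε * c / (16 * φn)) * co = Φ T * ((c / 2) * (2 * co / c)) := by rw [hcc]
    _ ≤ Φ T * ((c / 2) * ∑ v ∈ 𝒢, pv v) := by
        apply mul_le_mul_of_nonneg_left _ hΦT
        apply mul_le_mul_of_nonneg_left h𝒢mass (by positivity)
    _ = ∑ v ∈ 𝒢, Φ T * ((c / 2) * pv v) := by
        rw [Finset.mul_sum, Finset.mul_sum]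
    _ ≤ ∑ v ∈ 𝒢, ∑ j ∈ Out v, ∑ z,
        (if 𝔲 n z = uj v j ∧ 𝔳 n z = v then P n z else 0) * Φ |L n z - μ n| :=
        Finset.sum_le_sum keyv
    _ ≤ ∑ z, P n z * Φ |L n z - μ n| := hX1
end
end

section
/- Let X ∼ B(m,p) with p ∈ (0,1) and let β > 0. Set b(β,p) := √(2π p(1−p)) · exp(β²/(2 p(1−p))). Then for every b > b(β,p) there is m_o such that for all m > m_o and every integer i with mp − β√m ≤ i ≤ mp + β√m, one has C(m,i) p^i (1−p)^{m−i} ≥ 1/(b√m). -/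
set_option maxHeartbeats 1000000

open Real Filter Topology Nat

private lemma bllbe_factorial_stirling (n : ℕ) (hn : 1 ≤ n) :
    (n ! : ℝ) = Stirling.stirlingSeq n * (Real.sqrt (2 * n) * ((n : ℝ) / Real.exp 1) ^ n) := by
  have h0 : (0:ℝ) < (n:ℝ) := by exact_mod_cast hn
  have h : Real.sqrt (2 * (n:ℝ)) * ((n:ℝ) / Real.exp 1) ^ n ≠ 0 := by positivity
  rw [Stirling.stirlingSeq]
  field_simp

private lemma bllbe_sqrt_pi_le (n : ℕ) (hn : 1 ≤ n) : Real.sqrt π ≤ Stirling.stirlingSeq n := by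
  obtain ⟨k, rfl⟩ := Nat.exists_eq_add_of_le hn
  have h2 : Tendsto (Stirling.stirlingSeq ∘ Nat.succ) atTop (𝓝 (Real.sqrt π)) :=
    Stirling.tendsto_stirlingSeq_sqrt_pi.comp (tendsto_add_atTop_nat 1)
  simpa [Nat.add_comm] using Stirling.stirlingSeq'_antitone.le_of_tendsto h2 k

private lemma bllbe_entropy_one_side (p : ℝ) (hp0 : 0 < p) (hp1 : p < 1) (x : ℝ)
    (hpx : p ≤ x) (h2 : x - p ≤ (1 - p)/2) (h3 : x - p ≤ p * (1-p)/2) :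
    x * Real.log (x/p) + (1-x) * Real.log ((1-x)/(1-p))
      ≤ (x - p)^2 / (2 * (p*(1-p) - (x - p))) := by
  have hq : 0 < 1 - p := by linarith
  have hx1 : x < 1 := by linarith
  have hx0 : 0 < x := by linarith
  have hpq : 0 < p * (1-p) := by positivity
  have hpqδ : 0 < p * (1-p) - (x - p) := by linarith
  rcases eq_or_lt_of_le hpx with rfl | hlt
  · simp [div_self hp0.ne', div_self hq.ne']
  set K : ℝ := 1/p + 1/(1-x) with hK
  clear_value K
  set g : ℝ → ℝ := fun t => K*(t-p)^2/2 -
      (t * (Real.log t - Real.log p) + (1-t) * (Real.log (1-t) - Real.log (1-p))) with hg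
  have hderiv : ∀ t ∈ Set.Icc p x, HasDerivAt g
      (K*(t-p) - (Real.log t - Real.log p - (Real.log (1-t) - Real.log (1-p)))) t := by
    intro t ht
    have ht0 : 0 < t := lt_of_lt_of_le hp0 ht.1
    have ht1 : 0 < 1 - t := by have := ht.2; linarith
    have d1 : HasDerivAt (fun t : ℝ => t * (Real.log t - Real.log p))
        (1 * (Real.log t - Real.log p) + t * t⁻¹) t :=
      (hasDerivAt_id t).mul ((Real.hasDerivAt_log ht0.ne').sub_const _)
    have dlog : HasDerivAt (fun t : ℝ => Real.log (1-t)) ((0 - 1)/(1-t)) t :=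
      HasDerivAt.log ((hasDerivAt_const t (1:ℝ)).sub (hasDerivAt_id t)) ht1.ne'
    have d2 : HasDerivAt (fun t : ℝ => (1-t) * (Real.log (1-t) - Real.log (1-p)))
        ((0 - 1) * (Real.log (1-t) - Real.log (1-p)) + (1-t) * ((0-1)/(1-t))) t :=
      ((hasDerivAt_const t (1:ℝ)).sub (hasDerivAt_id t)).mul (dlog.sub_const _)
    have d3 : HasDerivAt (fun t : ℝ => K*(t-p)^2/2) (K * (2*(t-p)^1*1)/2) t := by
      exact ((((hasDerivAt_id t).sub_const p).pow 2).const_mul K).div_const 2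
    have := (d3.sub (d1.add d2))
    refine this.congr_deriv ?_
    have e1 : t * t⁻¹ = 1 := mul_inv_cancel₀ ht0.ne'
    have e2 : (1-t) * ((0-1)/(1-t)) = -1 := by rw [mul_div_assoc', div_eq_iff ht1.ne']; ring
    rw [e1, e2]
    ring
  have hmono : MonotoneOn g (Set.Icc p x) := by
    apply monotoneOn_of_deriv_nonneg (convex_Icc p x)
    · exact fun t ht => (hderiv t ht).continuousAt.continuousWithinAt
    · intro t ht
      rw [interior_Icc] at ht
      exact ((hderiv t (Set.mem_Icc_of_Ioo ht)).differentiableAt).differentiableWithinAt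
    · intro t ht
      rw [interior_Icc] at ht
      rw [(hderiv t (Set.mem_Icc_of_Ioo ht)).deriv]
      have ht0 : 0 < t := lt_trans hp0 ht.1
      have ht1 : 0 < 1 - t := by have := ht.2; linarith
      have htp : 0 ≤ t - p := by linarith [ht.1.le]
      have hxt : 1 - x ≤ 1 - t := by linarith [ht.2.le]
      have h1x : 0 < 1 - x := by linarith
      have l1 : Real.log t - Real.log p ≤ (t - p)/p := by
        rw [← Real.log_div ht0.ne' hp0.ne']
        have := Real.log_le_sub_one_of_pos (show 0 < t/p by positivity)
        have e : t/p - 1 = (t-p)/p := by field_simp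
        linarith [e ▸ this]
      have l2 : Real.log (1-p) - Real.log (1-t) ≤ (t - p)/(1-x) := by
        rw [← Real.log_div hq.ne' ht1.ne']
        have := Real.log_le_sub_one_of_pos (show 0 < (1-p)/(1-t) by positivity)
        have e : (1-p)/(1-t) - 1 = (t-p)/(1-t) := by field_simp; ring
        have mono : (t-p)/(1-t) ≤ (t-p)/(1-x) := by gcongr
        linarith
      have hKe : K*(t-p) = (t-p)/p + (t-p)/(1-x) := by rw [hK]; ring
      linarith
  have hgpx : g p ≤ g x := hmono (Set.left_mem_Icc.2 hpx) (Set.right_mem_Icc.2 hpx) hpx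
  have hgp : g p = 0 := by simp [hg]
  have step1 : x * (Real.log x - Real.log p) + (1-x) * (Real.log (1-x) - Real.log (1-p))
      ≤ K * (x-p)^2/2 := by
    have := hgp ▸ hgpx
    simp only [hg] at this
    linarith
  have h1x : 0 < 1 - x := by linarith
  have hKle : K ≤ 1/(p*(1-p) - (x-p)) := by
    rw [hK, div_add_div _ _ hp0.ne' (by linarith : (1:ℝ) - x ≠ 0),
      div_le_div_iff₀ (by positivity) hpqδ]
    nlinarith
  have step2 : K * (x-p)^2/2 ≤ (x - p)^2 / (2 * (p*(1-p) - (x - p))) := by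
    have h := mul_le_mul_of_nonneg_left hKle (show (0:ℝ) ≤ (x-p)^2/2 by positivity)
    calc K * (x-p)^2/2 = (x-p)^2/2 * K := by ring
      _ ≤ (x-p)^2/2 * (1/(p*(1-p) - (x-p))) := h
      _ = (x - p)^2 / (2 * (p*(1-p) - (x - p))) := by field_simp
  calc x * Real.log (x/p) + (1-x) * Real.log ((1-x)/(1-p))
      = x * (Real.log x - Real.log p) + (1-x) * (Real.log (1-x) - Real.log (1-p)) := by
        rw [Real.log_div hx0.ne' hp0.ne', Real.log_div (by linarith : (1:ℝ)-x ≠ 0) hq.ne']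
    _ ≤ K * (x-p)^2/2 := step1
    _ ≤ _ := step2

private lemma bllbe_entropy_bound (p : ℝ) (hp0 : 0 < p) (hp1 : p < 1) (x : ℝ)
    (h1 : |x - p| ≤ p/2) (h2 : |x - p| ≤ (1-p)/2) (h3 : |x - p| ≤ p*(1-p)/2) :
    x * Real.log (x/p) + (1-x) * Real.log ((1-x)/(1-p))
      ≤ (x - p)^2 / (2 * (p*(1-p) - |x - p|)) := by
  rcases le_or_gt p x with hpx | hxp
  · rw [abs_of_nonneg (by linarith : (0:ℝ) ≤ x - p)] at h1 h2 h3 ⊢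
    exact bllbe_entropy_one_side p hp0 hp1 x hpx h2 h3
  · rw [abs_of_nonpos (by linarith : x - p ≤ 0)] at h1 h2 h3 ⊢
    have h := bllbe_entropy_one_side (1-p) (by linarith) (by linarith) (1-x)
      (by linarith) (by linarith) (by nlinarith)
    simp only [sub_sub_cancel] at h
    have e : ((1-x)-(1-p))^2/(2*((1-p)*p - ((1-x)-(1-p))))
        = (x - p)^2 / (2 * (p*(1-p) - -(x - p))) := by ring_nf
    linarith [e ▸ h]

/-- local lower bound for binomial probabilities with the explicit constant
`b(β,p) = √(2π p(1-p)) · exp(β²/(2p(1-p)))`: for every `b > b(β,p)` there is `m₀` such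
that for all `m > m₀` and every integer `i` with `mp - β√m ≤ i ≤ mp + β√m`,
`C(m,i) p^i (1-p)^(m-i) ≥ 1/(b√m)`. -/
theorem binomial_local_lower_bound_explicit
    (p : ℝ) (hp0 : 0 < p) (hp1 : p < 1) (β : ℝ) (hβ : 0 < β) (b : ℝ)
    (hb : b > Real.sqrt (2 * Real.pi * p * (1 - p)) * Real.exp (β ^ 2 / (2 * p * (1 - p)))) :
    ∃ m₀ : ℕ, ∀ m : ℕ, m₀ < m →
      ∀ i : ℕ, (m : ℝ) * p - β * Real.sqrt m ≤ (i : ℝ) →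
        (i : ℝ) ≤ (m : ℝ) * p + β * Real.sqrt m →
        (m.choose i : ℝ) * p ^ i * (1 - p) ^ (m - i) ≥ 1 / (b * Real.sqrt m) := by
  have hq0 : 0 < 1 - p := by linarith
  have hpq : 0 < p * (1 - p) := by positivity
  have hπ : 0 < Real.sqrt π := Real.sqrt_pos.2 pi_pos
  obtain ⟨A, hAdef⟩ : ∃ A : ℝ, A = Real.sqrt (2*(p*(1-p))) * Real.exp (β^2/(2*(p*(1-p)))) :=
    ⟨_, rfl⟩
  have hA0 : 0 < A := by rw [hAdef]; positivity
  have hb' : Real.sqrt π * A < b := by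
    have e1 : 2*Real.pi*p*(1-p) = π * (2*(p*(1-p))) := by ring
    have e2 : β^2/(2*p*(1-p)) = β^2/(2*(p*(1-p))) := by ring
    rw [e1, Real.sqrt_mul Real.pi_pos.le, e2, mul_assoc, ← hAdef] at hb
    exact hb
  have hb0 : 0 < b := lt_trans (by positivity) hb'
  -- choose ε
  have hmm2 : Real.sqrt π * Real.sqrt π = π := Real.mul_self_sqrt Real.pi_pos.le
  have hπA : π < b * Real.sqrt π / A := by
    rw [lt_div_iff₀ hA0]
    conv_lhs => rw [← hmm2]
    calc Real.sqrt π * Real.sqrt π * A = Real.sqrt π * (Real.sqrt π * A) := by ring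
      _ < Real.sqrt π * b := mul_lt_mul_of_pos_left hb' hπ
      _ = b * Real.sqrt π := mul_comm _ _
  obtain ⟨r, hrdef⟩ : ∃ r : ℝ, r = Real.sqrt (b * Real.sqrt π / A) := ⟨_, rfl⟩
  have hr : Real.sqrt π < r := by
    rw [hrdef]
    exact Real.sqrt_lt_sqrt Real.pi_pos.le hπA
  obtain ⟨ε, hεdef⟩ : ∃ ε : ℝ, ε = (r - Real.sqrt π)/2 := ⟨_, rfl⟩
  have hε0 : 0 < ε := by rw [hεdef]; linarith
  have hεA : (Real.sqrt π + ε)^2 * A < b * Real.sqrt π := by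
    have h1 : Real.sqrt π + ε < r := by rw [hεdef]; linarith
    have h2 : (Real.sqrt π + ε)^2 < r^2 :=
      pow_lt_pow_left₀ h1 (by positivity) (by norm_num)
    have h3 : r^2 = b * Real.sqrt π / A := by
      rw [hrdef]; exact Real.sq_sqrt (by positivity)
    rw [h3] at h2
    calc (Real.sqrt π + ε)^2 * A < (b * Real.sqrt π / A) * A := by
          exact mul_lt_mul_of_pos_right h2 hA0
      _ = b * Real.sqrt π := by field_simp
  -- Stirling upper bound threshold
  have hup : ∀ᶠ n in atTop, Stirling.stirlingSeq n < Real.sqrt π + ε :=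
    Stirling.tendsto_stirlingSeq_sqrt_pi.eventually_lt_const (by linarith)
  obtain ⟨N₀, hN₀⟩ := eventually_atTop.1 hup
  obtain ⟨N, hNdef⟩ : ∃ N : ℕ, N = max N₀ 1 := ⟨_, rfl⟩
  have hN1 : 1 ≤ N := by omega
  have hNup : ∀ n : ℕ, N ≤ n → Stirling.stirlingSeq n < Real.sqrt π + ε := by
    intro n hn; exact hN₀ n (by omega)
  -- sqrt m tends to infinity
  have hsqrtTop : Tendsto (fun m : ℕ => Real.sqrt m) atTop atTop := by
    apply tendsto_atTop_atTop.2
    intro C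
    refine ⟨(⌈C⌉₊)^2, fun n hn => ?_⟩
    have h1 : (C:ℝ) ≤ Real.sqrt (((⌈C⌉₊)^2 : ℕ) : ℝ) := by
      rw [Nat.cast_pow, Real.sqrt_sq (Nat.cast_nonneg _)]
      exact Nat.le_ceil C
    exact h1.trans (Real.sqrt_le_sqrt (by exact_mod_cast hn))
  have ht0 : Tendsto (fun m : ℕ => β / Real.sqrt m) atTop (𝓝 0) := by
    simpa [div_eq_mul_inv] using hsqrtTop.inv_tendsto_atTop.const_mul β
  -- eventual bound condition
  have hGlim : Tendsto (fun m : ℕ => (Real.sqrt π + ε)^2/Real.sqrt π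
      * Real.sqrt (2*(p*(1-p) + β/Real.sqrt m))
      * Real.exp (β^2/(2*(p*(1-p) - β/Real.sqrt m)))) atTop
      (𝓝 ((Real.sqrt π + ε)^2/Real.sqrt π * Real.sqrt (2*(p*(1-p) + 0))
        * Real.exp (β^2/(2*(p*(1-p) - 0))))) := by
    have h1 : Tendsto (fun m : ℕ => p*(1-p) + β/Real.sqrt m) atTop (𝓝 (p*(1-p) + 0)) :=
      tendsto_const_nhds.add ht0
    have h2 : Tendsto (fun m : ℕ => p*(1-p) - β/Real.sqrt m) atTop (𝓝 (p*(1-p) - 0)) :=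
      tendsto_const_nhds.sub ht0
    have h3 : Tendsto (fun m : ℕ => Real.sqrt (2*(p*(1-p) + β/Real.sqrt m))) atTop
        (𝓝 (Real.sqrt (2*(p*(1-p) + 0)))) := ((h1.const_mul 2)).sqrt
    have harg : Tendsto (fun m : ℕ => β^2/(2*(p*(1-p) - β/Real.sqrt m))) atTop
        (𝓝 (β^2/(2*(p*(1-p) - 0)))) := by
      refine Filter.Tendsto.div tendsto_const_nhds (h2.const_mul 2) ?_
      simp only [sub_zero]
      positivity
    have h4 : Tendsto (fun m : ℕ => Real.exp (β^2/(2*(p*(1-p) - β/Real.sqrt m)))) atTop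
        (𝓝 (Real.exp (β^2/(2*(p*(1-p) - 0))))) := by
      simpa [Function.comp_def] using
        ((Real.continuous_exp.continuousAt
          (x := β^2/(2*(p*(1-p) - 0)))).tendsto.comp harg)
    exact ((h3.const_mul _).mul h4)
  have hGlt : ((Real.sqrt π + ε)^2/Real.sqrt π * Real.sqrt (2*(p*(1-p) + 0))
        * Real.exp (β^2/(2*(p*(1-p) - 0)))) < b := by
    rw [add_zero, sub_zero]
    have h := hεA
    rw [hAdef] at h
    calc (Real.sqrt π + ε)^2/Real.sqrt π * Real.sqrt (2*(p*(1-p)))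
          * Real.exp (β^2/(2*(p*(1-p))))
        = ((Real.sqrt π + ε)^2 * (Real.sqrt (2*(p*(1-p)))
          * Real.exp (β^2/(2*(p*(1-p))))))/Real.sqrt π := by ring
      _ < (b * Real.sqrt π)/Real.sqrt π := by exact div_lt_div_of_pos_right h hπ
      _ = b := by field_simp
  have hGev : ∀ᶠ m : ℕ in atTop, (Real.sqrt π + ε)^2/Real.sqrt π
      * Real.sqrt (2*(p*(1-p) + β/Real.sqrt m))
      * Real.exp (β^2/(2*(p*(1-p) - β/Real.sqrt m))) ≤ b :=
    hGlim.eventually_le_const hGlt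
  -- assemble all eventual conditions
  have hev : ∀ᶠ m : ℕ in atTop, (1 ≤ m ∧ 1 ≤ Real.sqrt m ∧ 2*β/p ≤ Real.sqrt m
      ∧ 2*β/(1-p) ≤ Real.sqrt m ∧ 2*β/(p*(1-p)) ≤ Real.sqrt m
      ∧ 2*(N:ℝ)/p ≤ Real.sqrt m ∧ 2*(N:ℝ)/(1-p) ≤ Real.sqrt m)
      ∧ (Real.sqrt π + ε)^2/Real.sqrt π * Real.sqrt (2*(p*(1-p) + β/Real.sqrt m))
        * Real.exp (β^2/(2*(p*(1-p) - β/Real.sqrt m))) ≤ b := by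
    refine Filter.Eventually.and ?_ hGev
    refine Filter.Eventually.and (eventually_ge_atTop 1) ?_
    refine Filter.Eventually.and (hsqrtTop.eventually_ge_atTop 1) ?_
    refine Filter.Eventually.and (hsqrtTop.eventually_ge_atTop _) ?_
    refine Filter.Eventually.and (hsqrtTop.eventually_ge_atTop _) ?_
    refine Filter.Eventually.and (hsqrtTop.eventually_ge_atTop _) ?_
    exact Filter.Eventually.and (hsqrtTop.eventually_ge_atTop _) (hsqrtTop.eventually_ge_atTop _)
  obtain ⟨m₀, hm₀⟩ := eventually_atTop.1 hev
  refine ⟨m₀, fun m hm i hlo hhi => ?_⟩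
  obtain ⟨⟨hm1, hs1, hs2, hs3, hs4, hs5, hs6⟩, hGb⟩ := hm₀ m hm.le
  -- notation
  have hM0 : (0:ℝ) < (m:ℝ) := by exact_mod_cast hm1
  obtain ⟨s, hsdef⟩ : ∃ s : ℝ, s = Real.sqrt m := ⟨_, rfl⟩
  rw [← hsdef] at hlo hhi hs1 hs2 hs3 hs4 hs5 hs6 hGb ⊢
  have hs0 : 0 < s := by rw [hsdef]; exact Real.sqrt_pos.2 hM0
  have hss : s * s = (m:ℝ) := by rw [hsdef]; exact Real.mul_self_sqrt hM0.le
  -- basic bounds from sqrt conditions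
  have hβs1 : β/s ≤ p/2 := by
    rw [div_le_div_iff₀ hs0 two_pos]
    have := (div_le_iff₀ hp0).1 hs2
    linarith
  have hβs2 : β/s ≤ (1-p)/2 := by
    rw [div_le_div_iff₀ hs0 two_pos]
    have := (div_le_iff₀ hq0).1 hs3
    linarith
  have hβs3 : β/s ≤ p*(1-p)/2 := by
    rw [div_le_div_iff₀ hs0 two_pos]
    have := (div_le_iff₀ hpq).1 hs4
    linarith
  have hβspos : 0 < β/s := by positivity
  have hβsM : β * s ≤ (m:ℝ) * p / 2 := by
    have hβle : β ≤ p/2*s := (div_le_iff₀ hs0).1 hβs1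
    have h := mul_le_mul_of_nonneg_right hβle hs0.le
    rw [mul_assoc, hss] at h
    linarith
  have hβsM2 : β * s ≤ (m:ℝ) * (1-p) / 2 := by
    have hβle : β ≤ (1-p)/2*s := (div_le_iff₀ hs0).1 hβs2
    have h := mul_le_mul_of_nonneg_right hβle hs0.le
    rw [mul_assoc, hss] at h
    linarith
  have hIlb : (m:ℝ)*p/2 ≤ (i:ℝ) := by linarith
  have hJlb : (m:ℝ)*(1-p)/2 ≤ (m:ℝ) - (i:ℝ) := by linarith
  have hiltm : i < m := by
    have h0 : 0 < (m:ℝ)*(1-p)/2 := by positivity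
    have : (i:ℝ) < (m:ℝ) := by linarith
    exact_mod_cast this
  have hNI : (N:ℝ) ≤ (m:ℝ)*p/2 := by
    have h1 : 2*(N:ℝ)/p ≤ s*s := le_trans hs5 (by nlinarith [hs1, hs0.le])
    rw [hss] at h1
    have := (div_le_iff₀ hp0).1 h1
    linarith
  have hNJ : (N:ℝ) ≤ (m:ℝ)*(1-p)/2 := by
    have h1 : 2*(N:ℝ)/(1-p) ≤ s*s := le_trans hs6 (by nlinarith [hs1, hs0.le])
    rw [hss] at h1
    have := (div_le_iff₀ hq0).1 h1
    linarith
  have hNi : N ≤ i := by exact_mod_cast le_trans hNI hIlb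
  have hi1 : 1 ≤ i := le_trans hN1 hNi
  have hI0 : (0:ℝ) < (i:ℝ) := by exact_mod_cast hi1
  obtain ⟨j, hjdef⟩ : ∃ j : ℕ, j = m - i := ⟨_, rfl⟩
  have hJcast : (j:ℝ) = (m:ℝ) - (i:ℝ) := by
    rw [hjdef, Nat.cast_sub hiltm.le]
  have hNj : N ≤ j := by
    have : (N:ℝ) ≤ (j:ℝ) := by rw [hJcast]; linarith
    exact_mod_cast this
  have hj1 : 1 ≤ j := le_trans hN1 hNj
  have hJ0 : (0:ℝ) < (j:ℝ) := by exact_mod_cast hj1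
  have hij : i + j = m := by omega
  rw [← hjdef]
  -- Stirling bounds on factorials
  have hπε0 : (0:ℝ) < Real.sqrt π + ε := by positivity
  have hfm : Real.sqrt π * (Real.sqrt (2*(m:ℝ)) * ((m:ℝ)/Real.exp 1)^m) ≤ (m ! : ℝ) := by
    rw [bllbe_factorial_stirling m hm1]
    exact mul_le_mul_of_nonneg_right (bllbe_sqrt_pi_le m hm1) (by positivity)
  have hfi : (i ! : ℝ) ≤ (Real.sqrt π + ε) * (Real.sqrt (2*(i:ℝ)) * ((i:ℝ)/Real.exp 1)^i) := by
    rw [bllbe_factorial_stirling i hi1]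
    exact mul_le_mul_of_nonneg_right (hNup i hNi).le (by positivity)
  have hfj : (j ! : ℝ) ≤ (Real.sqrt π + ε) * (Real.sqrt (2*(j:ℝ)) * ((j:ℝ)/Real.exp 1)^j) := by
    rw [bllbe_factorial_stirling j hj1]
    exact mul_le_mul_of_nonneg_right (hNup j hNj).le (by positivity)
  have hchoose : (m.choose i : ℝ) = (m ! : ℝ)/((i ! : ℝ) * (j ! : ℝ)) := by
    rw [Nat.cast_choose ℝ hiltm.le, hjdef]
  -- the ratio x = i/m
  obtain ⟨x, hxdef⟩ : ∃ x : ℝ, x = (i:ℝ)/(m:ℝ) := ⟨_, rfl⟩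
  have hMx : (m:ℝ) * x = (i:ℝ) := by rw [hxdef]; field_simp
  have hMx2 : (m:ℝ) * (1-x) = (j:ℝ) := by rw [hJcast, hxdef]; field_simp
  have hx1 : p - β/s ≤ x := by
    rw [hxdef, le_div_iff₀ hM0]
    have e : (p - β/s)*(m:ℝ) = (m:ℝ)*p - β*s := by
      rw [← hss]; field_simp
    rw [e]; linarith
  have hx2 : x ≤ p + β/s := by
    rw [hxdef, div_le_iff₀ hM0]
    have e : (p + β/s)*(m:ℝ) = (m:ℝ)*p + β*s := by
      rw [← hss]; field_simp
    rw [e]; linarith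
  have hxd : |x - p| ≤ β/s := abs_le.2 ⟨by linarith, by linarith⟩
  have hx0 : 0 < x := by linarith
  have hx1' : x < 1 := by linarith [hβs2]
  -- entropy bound
  have hent := bllbe_entropy_bound p hp0 hp1 x (le_trans hxd hβs1) (le_trans hxd hβs2)
    (le_trans hxd hβs3)
  have hpqβ : 0 < p*(1-p) - β/s := by linarith
  have hpqx : 0 < p*(1-p) - |x-p| := by linarith [le_trans hxd hβs3]
  have hent2 : (x-p)^2/(2*(p*(1-p) - |x-p|)) ≤ (β/s)^2/(2*(p*(1-p) - β/s)) := by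
    apply div_le_div₀ (by positivity) ?_ (by linarith) (by linarith)
    calc (x-p)^2 = |x-p|^2 := (sq_abs _).symm
      _ ≤ (β/s)^2 := by
          apply pow_le_pow_left₀ (abs_nonneg _) hxd
  have hentM : (m:ℝ) * (x * Real.log (x/p) + (1-x) * Real.log ((1-x)/(1-p)))
      ≤ β^2/(2*(p*(1-p) - β/s)) := by
    have h1 : (m:ℝ) * (x * Real.log (x/p) + (1-x) * Real.log ((1-x)/(1-p)))
        ≤ (m:ℝ) * ((β/s)^2/(2*(p*(1-p) - β/s))) :=
      mul_le_mul_of_nonneg_left (le_trans hent hent2) hM0.le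
    have h2 : (m:ℝ) * ((β/s)^2/(2*(p*(1-p) - β/s))) = β^2/(2*(p*(1-p) - β/s)) := by
      have e : (β/s)^2 = β^2/(m:ℝ) := by rw [div_pow, ← hss, pow_two s]
      rw [e, div_div, mul_div_assoc', mul_div_mul_left _ _ hM0.ne']
    linarith [h2 ▸ h1]
  -- the exponential identity
  obtain ⟨L, hLdef⟩ : ∃ L : ℝ, L = (i:ℝ) * Real.log ((i:ℝ)/((m:ℝ)*p))
      + (j:ℝ) * Real.log ((j:ℝ)/((m:ℝ)*(1-p))) := ⟨_, rfl⟩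
  have hLeq : L = (m:ℝ) * (x * Real.log (x/p) + (1-x) * Real.log ((1-x)/(1-p))) := by
    have a1 : x/p = (i:ℝ)/((m:ℝ)*p) := by rw [hxdef, div_div]
    have a3 : (1-x)/(1-p) = (j:ℝ)/((m:ℝ)*(1-p)) := by
      rw [← hMx2, mul_div_mul_left _ _ hM0.ne']
    rw [hLdef, a1, a3]
    linear_combination (Real.log ((i:ℝ)/((m:ℝ)*p))) * hMx.symm
      + (Real.log ((j:ℝ)/((m:ℝ)*(1-p)))) * hMx2.symm
  have hL : L ≤ β^2/(2*(p*(1-p) - β/s)) := hLeq ▸ hentM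
  obtain ⟨R, hRdef⟩ : ∃ R : ℝ, R = ((i:ℝ)/((m:ℝ)*p))^i * ((j:ℝ)/((m:ℝ)*(1-p)))^j := ⟨_, rfl⟩
  have hR0 : 0 < R := by rw [hRdef]; positivity
  have hRL : R = Real.exp L := by
    rw [hRdef, hLdef, Real.exp_add, Real.exp_nat_mul, Real.exp_nat_mul,
      Real.exp_log (by positivity), Real.exp_log (by positivity)]
  have hRE : R ≤ Real.exp (β^2/(2*(p*(1-p) - β/s))) := by
    rw [hRL]; exact Real.exp_le_exp.2 hL
  -- product bound for the sqrt denominators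
  have hIJ : (i:ℝ) * (j:ℝ) ≤ (m:ℝ)*(m:ℝ)*(p*(1-p) + β/s) := by
    have habs : |(x-p)*(1-x-p)| ≤ β/s := by
      rw [abs_mul]
      calc |x - p| * |1 - x - p| ≤ (β/s)*1 :=
            mul_le_mul hxd (abs_le.mpr ⟨by linarith, by linarith⟩) (abs_nonneg _) hβspos.le
        _ = β/s := mul_one _
    have key : x*(1-x) ≤ p*(1-p) + β/s := by
      have h5 : (x-p)*(1-x-p) ≤ β/s := le_trans (le_abs_self _) habs
      calc x*(1-x) = p*(1-p) + (x-p)*(1-x-p) := by ring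
        _ ≤ p*(1-p) + β/s := by linarith
    have e : (i:ℝ) * (j:ℝ) = (m:ℝ)*(m:ℝ)*(x*(1-x)) := by
      rw [← hMx, ← hMx2]; ring
    rw [e]
    exact mul_le_mul_of_nonneg_left key (by positivity : (0:ℝ) ≤ (m:ℝ)*(m:ℝ))
  have hmid : Real.sqrt (2*(i:ℝ)) * Real.sqrt (2*(j:ℝ))
      ≤ Real.sqrt (2*(m:ℝ)) * (s * Real.sqrt (2*(p*(1-p) + β/s))) := by
    have h4 : (2*(i:ℝ))*(2*(j:ℝ)) ≤ (2*(m:ℝ))*((m:ℝ)*(2*(p*(1-p) + β/s))) := by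
      linarith [hIJ]
    calc Real.sqrt (2*(i:ℝ)) * Real.sqrt (2*(j:ℝ))
        = Real.sqrt ((2*(i:ℝ))*(2*(j:ℝ))) := (Real.sqrt_mul (by positivity) _).symm
      _ ≤ Real.sqrt ((2*(m:ℝ))*((m:ℝ)*(2*(p*(1-p) + β/s)))) := Real.sqrt_le_sqrt h4
      _ = Real.sqrt (2*(m:ℝ)) * (s * Real.sqrt (2*(p*(1-p) + β/s))) := by
          rw [Real.sqrt_mul (by positivity), Real.sqrt_mul hM0.le, hsdef]
  -- main calculation
  have hsq2M : 0 < Real.sqrt (2*(m:ℝ)) := Real.sqrt_pos.2 (by positivity)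
  have hsqI : 0 < Real.sqrt (2*(i:ℝ)) := Real.sqrt_pos.2 (by positivity)
  have hsqJ : 0 < Real.sqrt (2*(j:ℝ)) := Real.sqrt_pos.2 (by positivity)
  have hfipos : (0:ℝ) < (i ! : ℝ) := by exact_mod_cast i.factorial_pos
  have hfjpos : (0:ℝ) < (j ! : ℝ) := by exact_mod_cast j.factorial_pos
  have hexp1 : (0:ℝ) < Real.exp 1 := Real.exp_pos 1
  have hEpos : 0 < Real.exp (β^2/(2*(p*(1-p) - β/s))) := Real.exp_pos _
  calc (m.choose i : ℝ) * p ^ i * (1 - p) ^ j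
      = (m ! : ℝ)/((i ! : ℝ)*(j ! : ℝ)) * p^i * (1-p)^j := by rw [hchoose]
    _ ≥ (Real.sqrt π * (Real.sqrt (2*(m:ℝ)) * ((m:ℝ)/Real.exp 1)^m))
        / ((Real.sqrt π + ε) * (Real.sqrt (2*(i:ℝ)) * ((i:ℝ)/Real.exp 1)^i)
          * ((Real.sqrt π + ε) * (Real.sqrt (2*(j:ℝ)) * ((j:ℝ)/Real.exp 1)^j)))
        * p^i * (1-p)^j := by
        refine mul_le_mul_of_nonneg_right (mul_le_mul_of_nonneg_right ?_ (by positivity))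
          (by positivity)
        refine div_le_div₀ (by positivity) hfm (mul_pos hfipos hfjpos) ?_
        exact mul_le_mul hfi hfj (by positivity) (mul_nonneg hπε0.le (by positivity))
    _ = (Real.sqrt π/(Real.sqrt π + ε)^2)
        * (Real.sqrt (2*(m:ℝ))/(Real.sqrt (2*(i:ℝ)) * Real.sqrt (2*(j:ℝ))))
        * (1/R) := by
        have hpowm : ((m:ℝ)/Real.exp 1)^m
            = ((m:ℝ)/Real.exp 1)^i * ((m:ℝ)/Real.exp 1)^j := by rw [← pow_add, hij]
        have k1 : ((i:ℝ)/((m:ℝ)*p))^i ≠ 0 := pow_ne_zero _ (by positivity)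
        have k2 : ((j:ℝ)/((m:ℝ)*(1-p)))^j ≠ 0 := pow_ne_zero _ (by positivity)
        rw [hpowm, hRdef]
        field_simp
        simp only [div_pow, mul_pow]
        field_simp
    _ ≥ (Real.sqrt π/(Real.sqrt π + ε)^2)
        * (Real.sqrt (2*(m:ℝ))/(Real.sqrt (2*(m:ℝ)) * (s * Real.sqrt (2*(p*(1-p) + β/s)))))
        * (1/Real.exp (β^2/(2*(p*(1-p) - β/s)))) := by
        have t1 : Real.sqrt (2*(m:ℝ))/(Real.sqrt (2*(m:ℝ)) * (s * Real.sqrt (2*(p*(1-p) + β/s))))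
            ≤ Real.sqrt (2*(m:ℝ))/(Real.sqrt (2*(i:ℝ)) * Real.sqrt (2*(j:ℝ))) := by
          gcongr
        have t2 : 1/Real.exp (β^2/(2*(p*(1-p) - β/s))) ≤ 1/R :=
          one_div_le_one_div_of_le hR0 hRE
        exact mul_le_mul (mul_le_mul_of_nonneg_left t1 (by positivity)) t2
          (by positivity) (by positivity)
    _ = (Real.sqrt π/(Real.sqrt π + ε)^2)
        * (1/(s * Real.sqrt (2*(p*(1-p) + β/s))))
        * (1/Real.exp (β^2/(2*(p*(1-p) - β/s)))) := by
        rw [show Real.sqrt (2*(m:ℝ))/(Real.sqrt (2*(m:ℝ)) * (s * Real.sqrt (2*(p*(1-p) + β/s))))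
            = 1/(s * Real.sqrt (2*(p*(1-p) + β/s))) from by
          rw [div_mul_eq_div_div, div_self hsq2M.ne']]
    _ ≥ 1/(b*s) := by
        have hW : 0 < Real.sqrt (2*(p*(1-p) + β/s)) := Real.sqrt_pos.2 (by positivity)
        rw [ge_iff_le]
        rw [show (Real.sqrt π/(Real.sqrt π + ε)^2)
            * (1/(s * Real.sqrt (2*(p*(1-p) + β/s))))
            * (1/Real.exp (β^2/(2*(p*(1-p) - β/s))))
            = Real.sqrt π/((Real.sqrt π + ε)^2
              * (s * Real.sqrt (2*(p*(1-p) + β/s)) * Real.exp (β^2/(2*(p*(1-p) - β/s)))))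
            from by field_simp]
        rw [div_le_div_iff₀ (by positivity) (by positivity)]
        have h1 := mul_le_mul_of_nonneg_right hGb (mul_nonneg hs0.le hπ.le)
        have e2 : ((Real.sqrt π + ε)^2/Real.sqrt π
            * Real.sqrt (2*(p*(1-p) + β/s))
            * Real.exp (β^2/(2*(p*(1-p) - β/s)))) * (s * Real.sqrt π)
            = (Real.sqrt π + ε)^2
              * (s * Real.sqrt (2*(p*(1-p) + β/s)) * Real.exp (β^2/(2*(p*(1-p) - β/s)))) := by
          field_simp
        rw [e2] at h1
        rw [one_mul]
        calc (Real.sqrt π + ε)^2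
              * (s * Real.sqrt (2*(p*(1-p) + β/s)) * Real.exp (β^2/(2*(p*(1-p) - β/s))))
            ≤ b * (s * Real.sqrt π) := h1
          _ = Real.sqrt π * (b*s) := by ring
end

section
/- Let X ∼ B(v₁,q) and Y ∼ B(v₂,q) be two independent binomially distributed random variables with q ∈ (0,1). Then for any integers l and u with u < v₁ + v₂ and (u − v₂) ∨ 0 < l ≤ u ∧ v₁, one has ((v₁ − l + 1)/(v₁ + v₂ − u)) · P(X = l−1 | X+Y = u) + ((v₂ − u + l)/(v₁ + v₂ − u)) · P(X = l | X+Y = u) = P(X = l | X+Y = u+1). Moreover, when u < v₂, ((v₂ − u)/(v₁ + v₂ − u)) · P(X = 0 | X+Y = u) = P(X = 0 | X+Y = u+1). -/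
noncomputable section

/-- The probability mass function of the binomial distribution `B(v,q)` at `k`. -/
def binomPMF (v : ℕ) (q : ℝ) (k : ℕ) : ℝ :=
  (v.choose k : ℝ) * q ^ k * (1 - q) ^ (v - k)

/-- `P(X = l | X + Y = u)` for independent `X ~ B(v₁,q)`, `Y ~ B(v₂,q)`:
the joint probability `P(X = l, Y = u - l)` divided by
`P(X + Y = u) = ∑_{j=0}^{u} P(X = j) P(Y = u - j)`. -/
def condBinom (v₁ v₂ : ℕ) (q : ℝ) (u l : ℕ) : ℝ :=
  (binomPMF v₁ q l * binomPMF v₂ q (u - l)) /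
    ∑ j ∈ Finset.range (u + 1), binomPMF v₁ q j * binomPMF v₂ q (u - j)

lemma pmf_mul (v₁ v₂ : ℕ) (q : ℝ) (u j : ℕ) (hj : j ≤ u) (hu : u ≤ v₁ + v₂) :
    binomPMF v₁ q j * binomPMF v₂ q (u - j)
      = ((v₁.choose j : ℝ) * v₂.choose (u - j)) * (q ^ u * (1 - q) ^ (v₁ + v₂ - u)) := by
  unfold binomPMF
  by_cases h1 : j ≤ v₁
  · by_cases h2 : u - j ≤ v₂
    · have hq : q ^ j * q ^ (u - j) = q ^ u := by
        rw [← pow_add]; congr 1; omega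
      have hq' : (1 - q) ^ (v₁ - j) * (1 - q) ^ (v₂ - (u - j)) = (1 - q) ^ (v₁ + v₂ - u) := by
        rw [← pow_add]; congr 1; omega
      calc (v₁.choose j : ℝ) * q ^ j * (1 - q) ^ (v₁ - j) *
            ((v₂.choose (u - j) : ℝ) * q ^ (u - j) * (1 - q) ^ (v₂ - (u - j)))
          = ((v₁.choose j : ℝ) * v₂.choose (u - j)) *
            ((q ^ j * q ^ (u - j)) * ((1 - q) ^ (v₁ - j) * (1 - q) ^ (v₂ - (u - j)))) := by ring
        _ = _ := by rw [hq, hq']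
    · have h3 : v₂.choose (u - j) = 0 := Nat.choose_eq_zero_of_lt (by omega)
      simp [h3]
  · have h3 : v₁.choose j = 0 := Nat.choose_eq_zero_of_lt (by omega)
    simp [h3]

lemma sum_pmf (v₁ v₂ : ℕ) (q : ℝ) (u : ℕ) (hu : u ≤ v₁ + v₂) :
    ∑ j ∈ Finset.range (u + 1), binomPMF v₁ q j * binomPMF v₂ q (u - j)
      = (((v₁ + v₂).choose u : ℕ) : ℝ) * (q ^ u * (1 - q) ^ (v₁ + v₂ - u)) := by
  rw [Finset.sum_congr rfl (fun j hj => pmf_mul v₁ v₂ q u j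
    (by simpa [Nat.lt_succ_iff] using Finset.mem_range.mp hj) hu), ← Finset.sum_mul]
  congr 1
  rw [Nat.add_choose_eq, Finset.Nat.sum_antidiagonal_eq_sum_range_succ_mk]
  push_cast
  rfl

lemma condBinom_eq (v₁ v₂ : ℕ) (q : ℝ) (hq0 : 0 < q) (hq1 : q < 1) (u l : ℕ)
    (hl : l ≤ u) (hu : u ≤ v₁ + v₂) :
    condBinom v₁ v₂ q u l
      = ((v₁.choose l : ℝ) * v₂.choose (u - l)) / ((v₁ + v₂).choose u : ℝ) := by
  unfold condBinom
  rw [sum_pmf v₁ v₂ q u hu, pmf_mul v₁ v₂ q u l hl hu]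
  have h1q : (0:ℝ) < 1 - q := by linarith
  have hpow : q ^ u * (1 - q) ^ (v₁ + v₂ - u) ≠ 0 := by positivity
  rw [mul_div_mul_right _ _ hpow]

/-- for independent `X ~ B(v₁,q)`, `Y ~ B(v₂,q)` with `q ∈ (0,1)` and
integers `u < v₁ + v₂` and `(u - v₂) ∨ 0 < l ≤ u ∧ v₁` (note that for naturals the
truncated subtraction `u - v₂` equals `(u - v₂) ∨ 0`):
`((v₁-l+1)/(v₁+v₂-u))·P(X=l-1|X+Y=u) + ((v₂-u+l)/(v₁+v₂-u))·P(X=l|X+Y=u) = P(X=l|X+Y=u+1)`;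
moreover, when `u < v₂`, `((v₂-u)/(v₁+v₂-u))·P(X=0|X+Y=u) = P(X=0|X+Y=u+1)`. -/
theorem binomial_conditional_recursion
    (v₁ v₂ : ℕ) (q : ℝ) (hq0 : 0 < q) (hq1 : q < 1) (u : ℕ) (hu : u < v₁ + v₂) :
    (∀ l : ℕ, u - v₂ < l → l ≤ min u v₁ →
      ((v₁ : ℝ) - l + 1) / ((v₁ : ℝ) + v₂ - u) * condBinom v₁ v₂ q u (l - 1) +
        ((v₂ : ℝ) - u + l) / ((v₁ : ℝ) + v₂ - u) * condBinom v₁ v₂ q u l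
        = condBinom v₁ v₂ q (u + 1) l) ∧
    (u < v₂ →
      ((v₂ : ℝ) - u) / ((v₁ : ℝ) + v₂ - u) * condBinom v₁ v₂ q u 0
        = condBinom v₁ v₂ q (u + 1) 0) := by
  have hW : (0:ℝ) < (v₁ : ℝ) + v₂ - u := by
    have : (u:ℝ) < (v₁:ℝ) + v₂ := by exact_mod_cast hu
    linarith
  have he : (0:ℝ) < ((v₁ + v₂).choose u : ℝ) := by
    exact_mod_cast Nat.choose_pos (by omega)
  have hf : (0:ℝ) < ((v₁ + v₂).choose (u+1) : ℝ) := by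
    exact_mod_cast Nat.choose_pos (by omega)
  have I3 : ((v₁ + v₂).choose (u+1) : ℝ) * (u + 1)
      = ((v₁ + v₂).choose u : ℝ) * ((v₁:ℝ) + v₂ - u) := by
    have h := Nat.choose_succ_right_eq (v₁ + v₂) u
    have h' : ((v₁ + v₂).choose (u+1) : ℝ) * (u + 1)
        = ((v₁ + v₂).choose u : ℝ) * (((v₁ + v₂) - u : ℕ) : ℝ) := by exact_mod_cast h
    rw [Nat.cast_sub (le_of_lt hu)] at h'
    push_cast at h' ⊢
    linarith
  constructor
  · intro l hl1 hl2
    have hl : 1 ≤ l := by omega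
    have hlu : l ≤ u := by omega
    have hlv : l ≤ v₁ := by omega
    have hulv : u - l ≤ v₂ := by omega
    rw [condBinom_eq v₁ v₂ q hq0 hq1 u (l-1) (by omega) (by omega),
        condBinom_eq v₁ v₂ q hq0 hq1 u l hlu (by omega),
        condBinom_eq v₁ v₂ q hq0 hq1 (u+1) l (by omega) (by omega)]
    have h1 : u - (l - 1) = u - l + 1 := by omega
    have h2 : u + 1 - l = u - l + 1 := by omega
    rw [h1, h2]
    have hcl : ((l - 1 : ℕ) : ℝ) = (l:ℝ) - 1 := by
      rw [Nat.cast_sub hl]; norm_num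
    have hcul : ((u - l : ℕ) : ℝ) = (u:ℝ) - l := by
      rw [Nat.cast_sub hlu]
    have I1 : (v₁.choose l : ℝ) * l = (v₁.choose (l-1) : ℝ) * ((v₁:ℝ) - l + 1) := by
      have h := Nat.choose_succ_right_eq v₁ (l-1)
      rw [Nat.sub_add_cancel hl] at h
      have h' : (v₁.choose l : ℝ) * l
          = (v₁.choose (l-1) : ℝ) * ((v₁ - (l-1) : ℕ) : ℝ) := by exact_mod_cast h
      rw [Nat.cast_sub (by omega : l - 1 ≤ v₁), hcl] at h'
      linarith
    have I2 : (v₂.choose (u - l + 1) : ℝ) * ((u:ℝ) - l + 1)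
        = (v₂.choose (u - l) : ℝ) * ((v₂:ℝ) - u + l) := by
      have h := Nat.choose_succ_right_eq v₂ (u - l)
      have h' : (v₂.choose (u - l + 1) : ℝ) * (((u - l : ℕ) : ℝ) + 1)
          = (v₂.choose (u - l) : ℝ) * ((v₂ - (u - l) : ℕ) : ℝ) := by exact_mod_cast h
      rw [Nat.cast_sub hulv, hcul] at h'
      linarith
    field_simp
    linear_combination (-(((v₂.choose (u - l + 1) : ℝ)) * ((v₁ + v₂).choose (u+1) : ℝ))) * I1
      - ((v₁.choose l : ℝ) * ((v₁ + v₂).choose (u+1) : ℝ)) * I2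
      + ((v₁.choose l : ℝ) * (v₂.choose (u - l + 1) : ℝ)) * I3
  · intro hv
    rw [condBinom_eq v₁ v₂ q hq0 hq1 u 0 (by omega) (by omega),
        condBinom_eq v₁ v₂ q hq0 hq1 (u+1) 0 (by omega) (by omega)]
    simp only [Nat.sub_zero, Nat.choose_zero_right, Nat.cast_one, one_mul]
    have I2 : (v₂.choose (u + 1) : ℝ) * ((u:ℝ) + 1)
        = (v₂.choose u : ℝ) * ((v₂:ℝ) - u) := by
      have h := Nat.choose_succ_right_eq v₂ u
      have h' : (v₂.choose (u + 1) : ℝ) * ((u:ℝ) + 1)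
          = (v₂.choose u : ℝ) * ((v₂ - u : ℕ) : ℝ) := by exact_mod_cast h
      rw [Nat.cast_sub (le_of_lt hv)] at h'
      linarith
    field_simp
    linear_combination (-((v₁ + v₂).choose (u+1) : ℝ)) * I2
      + (v₂.choose (u + 1) : ℝ) * I3
end
end

section
/- Let Z₁, Z₂, … be a Markov chain on a finite state space X with transition matrix ℙ = (p_{xy})_{x,y∈X}. Suppose {A_i}_{i∈I} is a partition of X and define π : X → I by π(x) = i if and only if x ∈ A_i. Then the following are equivalent: (1) for every initial distribution of Z₀, the process π(Z₁), π(Z₂), … is a Markov chain on I with transition matrix ℚ = (q_{ij})_{i,j∈I}; (2) for all i, j ∈ I and every x ∈ A_i, Σ_{y∈A_j} p_{xy} = q_{ij}. -/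
open Finset

noncomputable section

/-- Law of the path `(Z₀, …, Z_n)` of a Markov chain with initial distribution `μ` and
transition matrix `p`, as a pmf on `Fin (n+1) → X`. -/
def pathLaw {X : Type*} (μ : X → ℝ) (p : X → X → ℝ) (n : ℕ) (z : Fin (n + 1) → X) : ℝ :=
  μ (z 0) * ∏ i : Fin n, p (z i.castSucc) (z i.succ)

open Classical in
/-- Probability of a path event under the Markov chain with initial distribution `μ`. -/
def prPath {X : Type*} [Fintype X] (μ : X → ℝ) (p : X → X → ℝ) (n : ℕ)
    (E : (Fin (n + 1) → X) → Prop) : ℝ :=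
  ∑ z, if E z then pathLaw μ p n z else 0

lemma pathLaw_snoc {X : Type*} (μ : X → ℝ) (p : X → X → ℝ) (n : ℕ)
    (f : Fin (n+1) → X) (y : X) :
    pathLaw μ p (n+1) (Fin.snoc f y) = pathLaw μ p n f * p (f (Fin.last n)) y := by
  unfold pathLaw
  rw [Fin.prod_univ_castSucc]
  have h0 : (Fin.snoc f y : Fin (n+2) → X) 0 = f 0 := by
    rw [show (0 : Fin (n+2)) = Fin.castSucc 0 by simp, Fin.snoc_castSucc]
  have h1 : ∀ i : Fin n, (Fin.snoc f y : Fin (n+2) → X) (Fin.castSucc i).castSucc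
      = f i.castSucc := fun i => Fin.snoc_castSucc ..
  have h2 : ∀ i : Fin n, (Fin.snoc f y : Fin (n+2) → X) (Fin.castSucc i).succ
      = f i.succ := by
    intro i; rw [Fin.succ_castSucc, Fin.snoc_castSucc]
  simp only [h0, h1, h2, Fin.snoc_castSucc, Fin.succ_last, Fin.snoc_last]
  ring

lemma sum_snoc {X : Type*} [Fintype X] (n : ℕ) (g : (Fin (n+2) → X) → ℝ) :
    ∑ z, g z = ∑ f : Fin (n+1) → X, ∑ y : X, g (Fin.snoc f y) := by
  rw [← (Fin.snocEquiv (fun _ => X)).sum_comp g, Fintype.sum_prod_type, Finset.sum_comm]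
  rfl

open Classical in
lemma prPath_snoc {X : Type*} [Fintype X] (μ : X → ℝ) (p : X → X → ℝ) (n : ℕ)
    (E : (Fin (n + 2) → X) → Prop) :
    prPath μ p (n+1) E
      = ∑ f : Fin (n+1) → X, ∑ y : X,
          if E (Fin.snoc f y) then pathLaw μ p n f * p (f (Fin.last n)) y else 0 := by
  unfold prPath
  rw [sum_snoc]
  refine Finset.sum_congr rfl fun f _ => Finset.sum_congr rfl fun y _ => ?_
  rw [pathLaw_snoc]

lemma event_pre {X I : Type*} (π : X → I) (n : ℕ) (is : Fin (n+2) → I)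
    (f : Fin (n+1) → X) (y : X) :
    (∀ t : Fin (n+2), (t : ℕ) < n + 1 → π ((Fin.snoc f y : Fin (n+2) → X) t) = is t)
      ↔ ∀ s : Fin (n+1), π (f s) = is s.castSucc := by
  constructor
  · intro h s
    have := h s.castSucc (by simp; exact Nat.le_of_lt_succ s.isLt)
    rwa [Fin.snoc_castSucc] at this
  · intro h t ht
    have : t = (⟨(t : ℕ), ht⟩ : Fin (n+1)).castSucc := by ext; simp
    rw [this, Fin.snoc_castSucc]
    exact h _

lemma event_full {X I : Type*} (π : X → I) (n : ℕ) (is : Fin (n+2) → I)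
    (f : Fin (n+1) → X) (y : X) :
    (∀ t : Fin (n+2), π ((Fin.snoc f y : Fin (n+2) → X) t) = is t)
      ↔ (∀ s : Fin (n+1), π (f s) = is s.castSucc) ∧ π y = is (Fin.last (n+1)) := by
  constructor
  · intro h
    refine ⟨fun s => ?_, ?_⟩
    · have := h s.castSucc; rwa [Fin.snoc_castSucc] at this
    · have := h (Fin.last (n+1)); rwa [Fin.snoc_last] at this
  · rintro ⟨h1, h2⟩ t
    refine Fin.lastCases ?_ ?_ t
    · rw [Fin.snoc_last]; exact h2
    · intro s; rw [Fin.snoc_castSucc]; exact h1 s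

open Classical in
lemma key_identity {X I : Type*} [Fintype X] [Fintype I]
    (p : X → X → ℝ) (hprow : ∀ x, ∑ y, p x y = 1) (π : X → I) (q : I → I → ℝ)
    (h2 : ∀ (i j : I) (x : X), π x = i → ∑ y ∈ univ.filter (fun y => π y = j), p x y = q i j)
    (μ : X → ℝ) (n : ℕ) (is : Fin (n + 2) → I) :
    prPath μ p (n + 1) (fun z => ∀ t : Fin (n + 2), π (z t) = is t)
      = q (is ⟨n, Nat.lt_add_of_pos_right Nat.zero_lt_two⟩) (is ⟨n + 1, Nat.lt_succ_self (n + 1)⟩) *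
        prPath μ p (n + 1) (fun z => ∀ t : Fin (n + 2), (t : ℕ) < n + 1 → π (z t) = is t) := by
  rw [prPath_snoc, prPath_snoc, Finset.mul_sum]
  refine Finset.sum_congr rfl fun f _ => ?_
  by_cases hA : ∀ s : Fin (n+1), π (f s) = is s.castSucc
  · have hxl : π (f (Fin.last n)) = is ⟨n, by omega⟩ := hA (Fin.last n)
    have hq := h2 (is ⟨n, by omega⟩) (is ⟨n+1, by omega⟩) (f (Fin.last n)) hxl
    have hlast : is (Fin.last (n+1)) = is ⟨n+1, by omega⟩ := rfl
    simp only [event_full, event_pre, hA, hlast, true_and, forall_const, if_true]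
    rw [← Finset.mul_sum, hprow, mul_one]
    rw [show (∑ y : X, if π y = is ⟨n+1, by omega⟩ then pathLaw μ p n f * p (f (Fin.last n)) y else 0)
        = pathLaw μ p n f * ∑ y ∈ univ.filter (fun y => π y = is ⟨n+1, by omega⟩), p (f (Fin.last n)) y by
      rw [Finset.sum_filter, Finset.mul_sum]
      exact Finset.sum_congr rfl fun y _ => by split <;> simp]
    rw [hq]; ring
  · simp only [event_full, event_pre, hA, false_and, if_false]
    simp

open Classical in
lemma prPath_delta {X : Type*} [Fintype X] (p : X → X → ℝ) (x : X)
    (E : (Fin 2 → X) → Prop) :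
    prPath (fun z => if z = x then (1:ℝ) else 0) p 1 E
      = ∑ y : X, if E (Fin.snoc (fun _ => x) y) then p x y else 0 := by
  rw [prPath_snoc]
  rw [← (Equiv.funUnique (Fin 1) X).symm.sum_comp
      (fun f : Fin 1 → X => ∑ y : X,
        if E (Fin.snoc f y) then
          pathLaw (fun z => if z = x then (1:ℝ) else 0) p 0 f * p (f (Fin.last 0)) y else 0)]
  rw [Finset.sum_eq_single x]
  · refine Finset.sum_congr rfl fun y _ => ?_
    have : pathLaw (fun z => if z = x then (1:ℝ) else 0) p 0
        ((Equiv.funUnique (Fin 1) X).symm x) = 1 := by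
      simp [pathLaw]
    rw [this, one_mul]
    rfl
  · intro b _ hb
    refine Finset.sum_eq_zero fun y _ => ?_
    have hz : pathLaw (fun z => if z = x then (1:ℝ) else 0) p 0
        ((Equiv.funUnique (Fin 1) X).symm b) = 0 := by
      simp [pathLaw, uniqueElim_const, hb]
    rw [hz, zero_mul, ite_self]
  · intro h; exact absurd (Finset.mem_univ x) h

open Classical in
/-- lumping of Markov chains: let `Z₀, Z₁, …` be a Markov chain on a
finite state space `X` with transition matrix `p`, and let `{A_i}_{i ∈ I}` be a
partition of `X`, encoded by the surjection `π : X → I` with fibers `A_i = π⁻¹(i)`.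
Then the following are equivalent:
(1) for every initial distribution `μ`, the process `π(Z₀), π(Z₁), …` is a Markov chain
on `I` with transition matrix `q`, i.e. whenever the conditioning event has positive
probability, `P(π(Z_{n+1}) = i_{n+1} | π(Z_n) = i_n, …, π(Z₀) = i₀) = q i_n i_{n+1}`;
(2) for all `i, j ∈ I` and every `x ∈ A_i`, `Σ_{y ∈ A_j} p x y = q i j`. -/
theorem lumped_markov_chain_iff
    {X I : Type*} [Fintype X] [Fintype I]
    (p : X → X → ℝ) (hpnn : ∀ x y, 0 ≤ p x y) (hprow : ∀ x, ∑ y, p x y = 1)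
    (π : X → I) (hπ : Function.Surjective π)
    (q : I → I → ℝ) :
    (∀ μ : X → ℝ, (∀ x, 0 ≤ μ x) → (∑ x, μ x = 1) →
      ∀ n : ℕ, ∀ is : Fin (n + 2) → I,
        0 < prPath μ p (n + 1) (fun z => ∀ t : Fin (n + 2), (t : ℕ) < n + 1 → π (z t) = is t) →
        prPath μ p (n + 1) (fun z => ∀ t : Fin (n + 2), π (z t) = is t) /
            prPath μ p (n + 1) (fun z => ∀ t : Fin (n + 2), (t : ℕ) < n + 1 → π (z t) = is t)
          = q (is ⟨n, by omega⟩) (is ⟨n + 1, by omega⟩))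
    ↔ (∀ (i j : I) (x : X), π x = i → ∑ y ∈ univ.filter (fun y => π y = j), p x y = q i j) := by
  constructor
  · intro h1 i j x hx
    set μ : X → ℝ := fun z => if z = x then (1:ℝ) else 0 with hμ
    have hμnn : ∀ z, 0 ≤ μ z := fun z => by by_cases h : z = x <;> simp [hμ, h]
    have hμsum : ∑ z, μ z = 1 := by simp [hμ]
    have e0 : ∀ y : X, (Fin.snoc (fun _ => x) y : Fin 2 → X) 0 = x := fun y => rfl
    have e1 : ∀ y : X, (Fin.snoc (fun _ => x) y : Fin 2 → X) 1 = y := fun y => rfl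
    have hden : prPath μ p (0 + 1)
        (fun z => ∀ t : Fin (0 + 2), (t : ℕ) < 0 + 1 → π (z t) = ![i, j] t) = 1 := by
      show prPath μ p 1
        (fun z : Fin 2 → X => ∀ t : Fin 2, (t : ℕ) < 0 + 1 → π (z t) = ![i, j] t) = 1
      rw [prPath_delta]
      have hc : ∀ y : X, ∀ t : Fin 2, (t : ℕ) < 0 + 1 →
          π ((Fin.snoc (fun _ => x) y : Fin 2 → X) t) = ![i, j] t := by
        intro y t ht
        have ht0 : t = 0 := by
          apply Fin.ext; simpa using ht
        subst ht0
        rw [e0 y]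
        simpa using hx
      trans (∑ y : X, p x y)
      · exact Finset.sum_congr rfl fun y _ => if_pos (hc y)
      · exact hprow x
    have hnum : prPath μ p (0 + 1)
        (fun z => ∀ t : Fin (0 + 2), π (z t) = ![i, j] t)
        = ∑ y ∈ univ.filter (fun y => π y = j), p x y := by
      show prPath μ p 1 (fun z : Fin 2 → X => ∀ t : Fin 2, π (z t) = ![i, j] t)
        = ∑ y ∈ univ.filter (fun y => π y = j), p x y
      rw [prPath_delta, Finset.sum_filter]
      refine Finset.sum_congr rfl fun y _ => ?_
      have hiff : (∀ t : Fin 2, π ((Fin.snoc (fun _ => x) y : Fin 2 → X) t) = ![i, j] t)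
          ↔ π y = j := by
        rw [Fin.forall_fin_two, e0 y, e1 y]
        simp [hx]
      by_cases hyj : π y = j
      · rw [if_pos (hiff.mpr hyj), if_pos hyj]
      · rw [if_neg (fun hc => hyj (hiff.mp hc)), if_neg hyj]
    have key := h1 μ hμnn hμsum 0 ![i, j] (by rw [hden]; norm_num)
    rw [hnum, hden, div_one] at key
    have hv0 : (![i, j] : Fin 2 → I) ⟨0, by omega⟩ = i := rfl
    have hv1 : (![i, j] : Fin 2 → I) ⟨0 + 1, by omega⟩ = j := rfl
    rw [hv0, hv1] at key
    exact key
  · intro h2 μ hμnn hμsum n is hpos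
    rw [key_identity p hprow π q h2 μ n is, mul_div_assoc, div_self hpos.ne', mul_one]
end
end

section
/- If Z has law P_{(u,v)} for some 0 ≤ u < v (i.e., Z is distributed as the chain conditioned on U = u and V = v), then 𝓡(Z) has law P_{(u+1,v)}. -/
open Finset

noncomputable section

/-- Law of the first `n` terms `(Z₁, …, Z_n)` of a Markov chain with initial
distribution `π` and transition matrix `p`, as a pmf on `Fin n → S`. -/
def chainLaw {S : Type*} (π : S → ℝ) (p : S → S → ℝ) (n : ℕ) (z : Fin n → S) : ℝ :=
  if hn : 0 < n then
    π (z ⟨0, hn⟩) *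
      ∏ i : Fin (n - 1),
        p (z ⟨i.1, by have := i.isLt; omega⟩) (z ⟨i.1 + 1, by have := i.isLt; omega⟩)
  else 1

/-- The position of the first letter of the `i`-th triplet (`0`-indexed). -/
def posA (n : ℕ) (i : Fin (n / 3)) : Fin n := ⟨3 * i.1, by have := i.isLt; omega⟩
/-- The position of the middle letter of the `i`-th triplet. -/
def posM (n : ℕ) (i : Fin (n / 3)) : Fin n := ⟨3 * i.1 + 1, by have := i.isLt; omega⟩
/-- The position of the last letter of the `i`-th triplet. -/
def posB (n : ℕ) (i : Fin (n / 3)) : Fin n := ⟨3 * i.1 + 2, by have := i.isLt; omega⟩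

open Classical in
/-- `V`: the number of `(𝐀·𝐁)`-triplets. -/
def Vcount {S : Type*} (A B : S) (n : ℕ) (z : Fin n → S) : ℕ :=
  (univ.filter fun i : Fin (n / 3) => z (posA n i) = A ∧ z (posB n i) = B).card

open Classical in
/-- `U`: the number of `(𝐀·𝐁)`-triplets with middle letter `𝐃`. -/
def Ucount {S : Type*} (A B D : S) (n : ℕ) (z : Fin n → S) : ℕ :=
  (univ.filter fun i : Fin (n / 3) =>
    z (posA n i) = A ∧ z (posB n i) = B ∧ z (posM n i) = D).card

open Classical in
/-- The random transformation `𝓡` as a Markov kernel: it picks, uniformly at random,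
one of the `(𝐀·𝐁)`-triplets whose middle letter is not `𝐃`, and replaces that middle
letter by `𝐃` (acting as the identity if there is no such triplet). -/
def kernelR {S : Type*} (A B D : S) (n : ℕ) (z z' : Fin n → S) : ℝ :=
  let J : Finset (Fin (n / 3)) := univ.filter fun i =>
    z (posA n i) = A ∧ z (posB n i) = B ∧ z (posM n i) ≠ D
  if J.Nonempty then
    ((J.filter fun i => Function.update z (posM n i) D = z').card : ℝ) / J.card
  else if z' = z then 1 else 0

/-- The conditional law `P_{(u,v)}` of the chain given `U = u`, `V = v`. -/
def condLawUV {𝔸 : Type*} [Fintype 𝔸] (π : (𝔸 × 𝔸) → ℝ) (p : (𝔸 × 𝔸) → (𝔸 × 𝔸) → ℝ)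
    (A B D : 𝔸 × 𝔸) (n : ℕ) (u v : ℕ) (z : Fin n → 𝔸 × 𝔸) : ℝ :=
  (if Ucount A B D n z = u ∧ Vcount A B n z = v then chainLaw π p n z else 0) /
    prOf (chainLaw π p n) (fun w => Ucount A B D n w = u ∧ Vcount A B n w = v)

set_option linter.unusedSectionVars false

lemma prod_split_two {M : Type*} [CommMonoid M] {m : ℕ} (g : Fin m → M) (a b : Fin m)
    (hab : a ≠ b) :
    ∏ j, g j = g a * (g b * ∏ j ∈ (Finset.univ.erase a).erase b, g j) := by
  rw [← Finset.mul_prod_erase Finset.univ g (Finset.mem_univ a),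
      ← Finset.mul_prod_erase _ g
        (by simp [Finset.mem_erase, hab.symm] : b ∈ Finset.univ.erase a)]

section Aux
open Classical
variable {S : Type*} [Fintype S] [DecidableEq S]

lemma posA_ne_posM (n : ℕ) (i j : Fin (n/3)) : posA n i ≠ posM n j := by
  simp only [posA, posM, ne_eq, Fin.mk.injEq]; omega

lemma posB_ne_posM (n : ℕ) (i j : Fin (n/3)) : posB n i ≠ posM n j := by
  simp only [posB, posM, ne_eq, Fin.mk.injEq]; omega

lemma posM_inj {n : ℕ} {i j : Fin (n/3)} (h : posM n i = posM n j) : i = j := by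
  simp only [posM, Fin.mk.injEq] at h
  exact Fin.ext (by omega)

lemma update_posA (n : ℕ) (i j : Fin (n/3)) (z : Fin n → S) (C : S) :
    Function.update z (posM n i) C (posA n j) = z (posA n j) :=
  Function.update_of_ne (posA_ne_posM n j i) _ _

lemma update_posB (n : ℕ) (i j : Fin (n/3)) (z : Fin n → S) (C : S) :
    Function.update z (posM n i) C (posB n j) = z (posB n j) :=
  Function.update_of_ne (posB_ne_posM n j i) _ _

lemma update_posM_ne (n : ℕ) {i j : Fin (n/3)} (h : j ≠ i) (z : Fin n → S) (C : S) :
    Function.update z (posM n i) C (posM n j) = z (posM n j) :=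
  Function.update_of_ne (fun hh => h (posM_inj hh)) _ _

lemma update_posM_self (n : ℕ) (i : Fin (n/3)) (z : Fin n → S) (C : S) :
    Function.update z (posM n i) C (posM n i) = C :=
  Function.update_self _ _ _

lemma Vcount_update (A B : S) (n : ℕ) (i : Fin (n/3)) (z : Fin n → S) (C : S) :
    Vcount A B n (Function.update z (posM n i) C) = Vcount A B n z := by
  unfold Vcount
  congr 1
  ext j
  simp only [Finset.mem_filter, update_posA, update_posB]

lemma chainLaw_update (π : S → ℝ) (p : S → S → ℝ) (n : ℕ) (z : Fin n → S)
    (i : Fin (n/3)) (C C' : S) :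
    chainLaw π p n (Function.update z (posM n i) C) *
      (p (z (posA n i)) C' * p C' (z (posB n i))) =
    chainLaw π p n (Function.update z (posM n i) C') *
      (p (z (posA n i)) C * p C (z (posB n i))) := by
  have hlt : 3 * i.1 + 2 < n := (posB n i).isLt
  have hn : 0 < n := by omega
  obtain ⟨K, hK⟩ : ∃ K, ∀ C, chainLaw π p n (Function.update z (posM n i) C)
      = (p (z (posA n i)) C * p C (z (posB n i))) * K := by
    have hJ12 : (⟨3 * i.1, by omega⟩ : Fin (n-1)) ≠ ⟨3 * i.1 + 1, by omega⟩ := by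
      simp only [ne_eq, Fin.mk.injEq]; omega
    refine ⟨π (z ⟨0, hn⟩) * ∏ j ∈ (Finset.univ.erase (⟨3 * i.1, by omega⟩ : Fin (n-1))).erase
        ⟨3 * i.1 + 1, by omega⟩,
      p (z ⟨j.1, by have := j.isLt; omega⟩) (z ⟨j.1 + 1, by have := j.isLt; omega⟩),
      fun C => ?_⟩
    unfold chainLaw
    rw [dif_pos hn]
    have h0 : Function.update z (posM n i) C ⟨0, hn⟩ = z ⟨0, hn⟩ :=
      Function.update_of_ne (by simp [posM, Fin.ext_iff]) _ _
    rw [h0, prod_split_two _ _ _ hJ12]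
    have e1 : Function.update z (posM n i) C ⟨3 * i.1, by omega⟩ = z (posA n i) := by
      show Function.update z (posM n i) C (posA n i) = _
      rw [update_posA]
    have e2 : Function.update z (posM n i) C ⟨3 * i.1 + 1, by omega⟩ = C := by
      show Function.update z (posM n i) C (posM n i) = _
      rw [update_posM_self]
    have e2' : Function.update z (posM n i) C ⟨3 * i.1 + 1 + 1, by omega⟩ = z (posB n i) := by
      show Function.update z (posM n i) C (posB n i) = _
      rw [update_posB]
    rw [e1, e2, e2']
    have hrest : ∀ j ∈ (Finset.univ.erase (⟨3 * i.1, by omega⟩ : Fin (n-1))).erase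
        ⟨3 * i.1 + 1, by omega⟩,
        p (Function.update z (posM n i) C ⟨j.1, by have := j.isLt; omega⟩)
          (Function.update z (posM n i) C ⟨j.1 + 1, by have := j.isLt; omega⟩)
        = p (z ⟨j.1, by have := j.isLt; omega⟩) (z ⟨j.1 + 1, by have := j.isLt; omega⟩) := by
      intro j hj
      simp only [Finset.mem_erase, ne_eq, Fin.ext_iff] at hj
      rw [Function.update_of_ne (by simp only [ne_eq, posM, Fin.ext_iff]; simp at hj ⊢; omega),
          Function.update_of_ne (by simp only [ne_eq, posM, Fin.ext_iff]; simp at hj ⊢; omega)]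
    rw [Finset.prod_congr rfl hrest]
    ring
  rw [hK, hK]
  ring

end Aux
lemma filter_card_shift {α : Type*} [DecidableEq α] [Fintype α] {p q : α → Prop}
    {ip : DecidablePred p} {iq : DecidablePred q} {i : α}
    (hpq : ∀ j, j ≠ i → (p j ↔ q j)) (hpi : ¬ p i) (hqi : q i) :
    (@Finset.filter _ p ip Finset.univ).card + 1
      = (@Finset.filter _ q iq Finset.univ).card := by
  have h : Finset.univ.filter p = (Finset.univ.filter q).erase i := by
    ext j
    by_cases hj : j = i
    · subst hj; simp [hpi]
    · simp [Finset.mem_filter, Finset.mem_erase, hj, hpq j hj]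
  rw [h, Finset.card_erase_add_one (by simp [Finset.mem_filter, hqi])]

lemma filter_card_split {α : Type*} [Fintype α] {p q r : α → Prop}
    {ip : DecidablePred p} {iq : DecidablePred q} {ir : DecidablePred r}
    (hdisj : ∀ j, ¬ (p j ∧ q j)) (hr : ∀ j, r j ↔ p j ∨ q j) :
    (@Finset.filter _ p ip Finset.univ).card + (@Finset.filter _ q iq Finset.univ).card
      = (@Finset.filter _ r ir Finset.univ).card := by
  classical
  have h : Finset.univ.filter r = Finset.univ.filter p ∪ Finset.univ.filter q := by
    ext j; simp [Finset.mem_filter, hr j]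
  rw [h, Finset.card_union_of_disjoint]
  rw [Finset.disjoint_left]
  intro j hj1 hj2
  simp only [Finset.mem_filter] at hj1 hj2
  exact hdisj j ⟨hj1.2, hj2.2⟩

section Aux2
open Classical
variable {S : Type*} [Fintype S] [DecidableEq S]

lemma Ucount_update_erase (A B D : S) (n : ℕ) (i : Fin (n/3)) (z : Fin n → S)
    (hA : z (posA n i) = A) (hB : z (posB n i) = B) (hD : z (posM n i) = D)
    (C : S) (hC : C ≠ D) :
    Ucount A B D n (Function.update z (posM n i) C) + 1 = Ucount A B D n z := by
  unfold Ucount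
  refine filter_card_shift (i := i) (fun j hj => ?_) ?_ ?_
  · rw [update_posA, update_posB, update_posM_ne n hj]
  · rw [update_posA, update_posB, update_posM_self]
    rintro ⟨-, -, h⟩; exact hC h
  · exact ⟨hA, hB, hD⟩

lemma Ucount_update_insert (A B D : S) (n : ℕ) (i : Fin (n/3)) (z : Fin n → S)
    (hA : z (posA n i) = A) (hB : z (posB n i) = B) (hD : z (posM n i) ≠ D) :
    Ucount A B D n (Function.update z (posM n i) D) = Ucount A B D n z + 1 := by
  unfold Ucount
  refine (filter_card_shift (i := i) (fun j hj => ?_) ?_ ?_).symm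
  · rw [update_posA, update_posB, update_posM_ne n hj]
  · rintro ⟨-, -, h⟩; exact hD h
  · rw [update_posA, update_posB, update_posM_self]
    exact ⟨hA, hB, rfl⟩

lemma Jcard_add_Ucount (A B D : S) (n : ℕ) (z : Fin n → S)
    {iJ : DecidablePred fun i : Fin (n/3) =>
      z (posA n i) = A ∧ z (posB n i) = B ∧ z (posM n i) ≠ D} :
    (@Finset.filter _ _ iJ Finset.univ).card
      + Ucount A B D n z = Vcount A B n z := by
  unfold Ucount Vcount
  refine filter_card_split (fun j hj => hj.1.2.2 hj.2.2.2) (fun j => ?_)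
  constructor
  · rintro ⟨h1, h2⟩
    by_cases hD : z (posM n j) = D
    · exact Or.inr ⟨h1, h2, hD⟩
    · exact Or.inl ⟨h1, h2, hD⟩
  · rintro (⟨h1, h2, -⟩ | ⟨h1, h2, -⟩) <;> exact ⟨h1, h2⟩

lemma chainLaw_nonneg (π : S → ℝ) (p : S → S → ℝ) (hπ : ∀ x, 0 ≤ π x)
    (hp : ∀ x y, 0 ≤ p x y) (n : ℕ) (z : Fin n → S) : 0 ≤ chainLaw π p n z := by
  unfold chainLaw
  split
  · exact mul_nonneg (hπ _) (Finset.prod_nonneg fun j _ => hp _ _)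
  · exact zero_le_one

end Aux2
lemma filter_inst_eq {α : Type*} {P : α → Prop} {i1 i2 : DecidablePred P} {s : Finset α} :
    @Finset.filter _ P i1 s = @Finset.filter _ P i2 s := by
  rw [Subsingleton.elim i1 i2]

lemma ite_inst {α : Sort*} {c : Prop} {i1 i2 : Decidable c} (a b : α) :
    @ite _ c i1 a b = @ite _ c i2 a b := by
  rw [Subsingleton.elim i1 i2]

lemma sum_ite_ne_eq_sub {S : Type*} [Fintype S] [DecidableEq S] (D : S) (f : S → ℝ) :
    ∑ C, (if C ≠ D then f C else 0) = (∑ C, f C) - f D := by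
  have h1 : ∀ C, (if C ≠ D then f C else 0) = f C - (if C = D then f C else 0) := by
    intro C
    by_cases hC : C = D
    · subst hC; simp
    · simp [hC]
  rw [Finset.sum_congr rfl fun C _ => h1 C, Finset.sum_sub_distrib]
  congr 1
  rw [Finset.sum_ite_eq' Finset.univ D f, if_pos (Finset.mem_univ D)]

lemma sum_ite_const_eq_card {α : Type*} [Fintype α] {P : α → Prop} [DecidablePred P]
    (k : ℝ) : ∑ i, (if P i then k else 0) = (Finset.univ.filter P).card * k := by
  rw [← Finset.sum_filter, Finset.sum_const, nsmul_eq_mul]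

lemma card_filter_inst {α : Type*} [Fintype α] {P : α → Prop}
    {i1 i2 : DecidablePred P} :
    (@Finset.filter _ P i1 Finset.univ).card = (@Finset.filter _ P i2 Finset.univ).card := by
  congr 1
  exact filter_inst_eq

section Aux3
variable {S : Type*} [Fintype S] [DecidableEq S]

lemma update_eq_self_of_eq {n : ℕ} {z : Fin n → S} {i : Fin (n/3)} {D : S}
    (hD : z (posM n i) = D) : Function.update z (posM n i) D = z := by
  rw [← hD]; exact Function.update_eq_self _ _

lemma chainLaw_update_key (π : S → ℝ) (p : S → S → ℝ) {A B D : S} {n : ℕ}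
    {z' : Fin n → S} {i : Fin (n/3)}
    (hA : z' (posA n i) = A) (hB : z' (posB n i) = B) (hD : z' (posM n i) = D) (C : S) :
    chainLaw π p n (Function.update z' (posM n i) C) * (p A D * p D B)
      = chainLaw π p n z' * (p A C * p C B) := by
  have h := chainLaw_update π p n z' i C D
  rw [hA, hB, update_eq_self_of_eq hD] at h
  exact h

lemma middle_inner_sum (π : S → ℝ) (p : S → S → ℝ) (A B D : S) (n u : ℕ)
    (z' : Fin n → S) (hU : Ucount A B D n z' = u + 1) :
    (∑ i : Fin (n/3), ∑ C : S,
      if (z' (posA n i) = A ∧ z' (posB n i) = B ∧ z' (posM n i) = D) ∧ C ≠ D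
        then chainLaw π p n (Function.update z' (posM n i) C) else 0) * (p A D * p D B)
    = ((u : ℝ) + 1) *
        (chainLaw π p n z' * ((∑ C, p A C * p C B) - p A D * p D B)) := by
  rw [Finset.sum_mul]
  have hstep : ∀ i : Fin (n/3),
      (∑ C : S, if (z' (posA n i) = A ∧ z' (posB n i) = B ∧ z' (posM n i) = D) ∧ C ≠ D
        then chainLaw π p n (Function.update z' (posM n i) C) else 0) * (p A D * p D B)
      = if z' (posA n i) = A ∧ z' (posB n i) = B ∧ z' (posM n i) = D
          then chainLaw π p n z' * ((∑ C, p A C * p C B) - p A D * p D B) else 0 := by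
    intro i
    by_cases hT : z' (posA n i) = A ∧ z' (posB n i) = B ∧ z' (posM n i) = D
    · rw [if_pos hT, Finset.sum_mul]
      have h2 : ∀ C : S,
          (if (z' (posA n i) = A ∧ z' (posB n i) = B ∧ z' (posM n i) = D) ∧ C ≠ D
            then chainLaw π p n (Function.update z' (posM n i) C) else 0) * (p A D * p D B)
          = if C ≠ D then chainLaw π p n z' * (p A C * p C B) else 0 := by
        intro C
        by_cases hC : C ≠ D
        · rw [if_pos ⟨hT, hC⟩, if_pos hC,
            chainLaw_update_key π p hT.1 hT.2.1 hT.2.2 C]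
        · rw [if_neg (fun h => hC h.2), if_neg hC, zero_mul]
      rw [Finset.sum_congr rfl fun C _ => h2 C, sum_ite_ne_eq_sub D]
      rw [← Finset.mul_sum]
      ring
    · rw [if_neg hT]
      have h2 : ∀ C : S,
          (if (z' (posA n i) = A ∧ z' (posB n i) = B ∧ z' (posM n i) = D) ∧ C ≠ D
            then chainLaw π p n (Function.update z' (posM n i) C) else 0) * (p A D * p D B)
          = 0 := by
        intro C
        rw [if_neg (fun h => hT h.1), zero_mul]
      rw [Finset.sum_mul, Finset.sum_congr rfl fun C _ => h2 C, Finset.sum_const_zero]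
  rw [Finset.sum_congr rfl fun i _ => hstep i, sum_ite_const_eq_card]
  have hcard : (Finset.univ.filter fun i : Fin (n/3) =>
      z' (posA n i) = A ∧ z' (posB n i) = B ∧ z' (posM n i) = D).card = u + 1 := by
    rw [← hU]
    unfold Ucount
    exact card_filter_inst
  rw [hcard]
  push_cast
  ring

end Aux3
set_option maxHeartbeats 1600000
section Aux4
variable {S : Type*} [Fintype S] [DecidableEq S]

lemma star_identity (π : S → ℝ) (p : S → S → ℝ) (A B D : S) (n u v : ℕ) (huv : u < v) :
    (((v : ℝ) - u) * prOf (chainLaw π p n)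
        (fun w => Ucount A B D n w = u ∧ Vcount A B n w = v)) * (p A D * p D B)
    = prOf (chainLaw π p n) (fun w => Ucount A B D n w = u + 1 ∧ Vcount A B n w = v)
        * (((u : ℝ) + 1) * ((∑ C, p A C * p C B) - p A D * p D B)) := by
  have hT1 : ∑ w : Fin n → S, ∑ i : Fin (n/3),
      (if (Ucount A B D n w = u ∧ Vcount A B n w = v) ∧
          (w (posA n i) = A ∧ w (posB n i) = B ∧ w (posM n i) ≠ D)
        then chainLaw π p n w else 0)
      = ((v : ℝ) - u) * prOf (chainLaw π p n)
          (fun w => Ucount A B D n w = u ∧ Vcount A B n w = v) := by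
    unfold prOf
    rw [Finset.mul_sum]
    refine Finset.sum_congr rfl fun w _ => ?_
    by_cases hw : Ucount A B D n w = u ∧ Vcount A B n w = v
    · rw [if_pos hw]
      have h1 : ∀ i : Fin (n/3),
          (if (Ucount A B D n w = u ∧ Vcount A B n w = v) ∧
              (w (posA n i) = A ∧ w (posB n i) = B ∧ w (posM n i) ≠ D)
            then chainLaw π p n w else 0)
          = (if (w (posA n i) = A ∧ w (posB n i) = B ∧ w (posM n i) ≠ D)
            then chainLaw π p n w else 0) := by
        intro i
        by_cases hi : w (posA n i) = A ∧ w (posB n i) = B ∧ w (posM n i) ≠ D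
        · rw [if_pos ⟨hw, hi⟩, if_pos hi]
        · rw [if_neg (fun h => hi h.2), if_neg hi]
      rw [Finset.sum_congr rfl fun i _ => h1 i, sum_ite_const_eq_card]
      have hcard : (Finset.univ.filter fun i : Fin (n/3) =>
          w (posA n i) = A ∧ w (posB n i) = B ∧ w (posM n i) ≠ D).card = v - u := by
        have h := Jcard_add_Ucount A B D n w (iJ := inferInstance)
        rw [hw.1, hw.2] at h
        omega
      rw [hcard, Nat.cast_sub (le_of_lt huv)]
    · rw [if_neg hw, mul_zero]
      exact Finset.sum_eq_zero fun i _ => if_neg (fun h => hw h.1)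
  have hT2 : (∑ w : Fin n → S, ∑ i : Fin (n/3),
      (if (Ucount A B D n w = u ∧ Vcount A B n w = v) ∧
          (w (posA n i) = A ∧ w (posB n i) = B ∧ w (posM n i) ≠ D)
        then chainLaw π p n w else 0))
      = ∑ z' : Fin n → S, ∑ i : Fin (n/3), ∑ C : S,
        (if (Ucount A B D n z' = u + 1 ∧ Vcount A B n z' = v) ∧
            ((z' (posA n i) = A ∧ z' (posB n i) = B ∧ z' (posM n i) = D) ∧ C ≠ D)
          then chainLaw π p n (Function.update z' (posM n i) C) else 0) := by
    calc
      ∑ w : Fin n → S, ∑ i : Fin (n/3),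
          (if (Ucount A B D n w = u ∧ Vcount A B n w = v) ∧
              (w (posA n i) = A ∧ w (posB n i) = B ∧ w (posM n i) ≠ D)
            then chainLaw π p n w else 0)
        = ∑ x : (Fin n → S) × Fin (n/3),
            (if (Ucount A B D n x.1 = u ∧ Vcount A B n x.1 = v) ∧
                (x.1 (posA n x.2) = A ∧ x.1 (posB n x.2) = B ∧ x.1 (posM n x.2) ≠ D)
              then chainLaw π p n x.1 else 0) :=
            (Fintype.sum_prod_type (fun x : (Fin n → S) × Fin (n/3) =>
              if (Ucount A B D n x.1 = u ∧ Vcount A B n x.1 = v) ∧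
                  (x.1 (posA n x.2) = A ∧ x.1 (posB n x.2) = B ∧ x.1 (posM n x.2) ≠ D)
                then chainLaw π p n x.1 else 0)).symm
      _ = ∑ x ∈ Finset.univ.filter (fun x : (Fin n → S) × Fin (n/3) =>
              (Ucount A B D n x.1 = u ∧ Vcount A B n x.1 = v) ∧
              (x.1 (posA n x.2) = A ∧ x.1 (posB n x.2) = B ∧ x.1 (posM n x.2) ≠ D)),
            chainLaw π p n x.1 :=
            (Finset.sum_filter (fun x : (Fin n → S) × Fin (n/3) =>
              (Ucount A B D n x.1 = u ∧ Vcount A B n x.1 = v) ∧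
              (x.1 (posA n x.2) = A ∧ x.1 (posB n x.2) = B ∧ x.1 (posM n x.2) ≠ D))
              (fun x => chainLaw π p n x.1)).symm
      _ = ∑ y ∈ Finset.univ.filter (fun y : (Fin n → S) × (Fin (n/3) × S) =>
              (Ucount A B D n y.1 = u + 1 ∧ Vcount A B n y.1 = v) ∧
              ((y.1 (posA n y.2.1) = A ∧ y.1 (posB n y.2.1) = B ∧
                y.1 (posM n y.2.1) = D) ∧ y.2.2 ≠ D)),
            chainLaw π p n (Function.update y.1 (posM n y.2.1) y.2.2) := ?_
      _ = ∑ y : (Fin n → S) × (Fin (n/3) × S),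
            (if (Ucount A B D n y.1 = u + 1 ∧ Vcount A B n y.1 = v) ∧
                ((y.1 (posA n y.2.1) = A ∧ y.1 (posB n y.2.1) = B ∧
                  y.1 (posM n y.2.1) = D) ∧ y.2.2 ≠ D)
              then chainLaw π p n (Function.update y.1 (posM n y.2.1) y.2.2) else 0) :=
            Finset.sum_filter (fun y : (Fin n → S) × (Fin (n/3) × S) =>
              (Ucount A B D n y.1 = u + 1 ∧ Vcount A B n y.1 = v) ∧
              ((y.1 (posA n y.2.1) = A ∧ y.1 (posB n y.2.1) = B ∧
                y.1 (posM n y.2.1) = D) ∧ y.2.2 ≠ D))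
              (fun y => chainLaw π p n (Function.update y.1 (posM n y.2.1) y.2.2))
      _ = ∑ z' : Fin n → S, ∑ yc : Fin (n/3) × S,
            (if (Ucount A B D n z' = u + 1 ∧ Vcount A B n z' = v) ∧
                ((z' (posA n yc.1) = A ∧ z' (posB n yc.1) = B ∧
                  z' (posM n yc.1) = D) ∧ yc.2 ≠ D)
              then chainLaw π p n (Function.update z' (posM n yc.1) yc.2) else 0) :=
            Fintype.sum_prod_type (fun y : (Fin n → S) × (Fin (n/3) × S) =>
              if (Ucount A B D n y.1 = u + 1 ∧ Vcount A B n y.1 = v) ∧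
                  ((y.1 (posA n y.2.1) = A ∧ y.1 (posB n y.2.1) = B ∧
                    y.1 (posM n y.2.1) = D) ∧ y.2.2 ≠ D)
                then chainLaw π p n (Function.update y.1 (posM n y.2.1) y.2.2) else 0)
      _ = ∑ z' : Fin n → S, ∑ i : Fin (n/3), ∑ C : S,
            (if (Ucount A B D n z' = u + 1 ∧ Vcount A B n z' = v) ∧
                ((z' (posA n i) = A ∧ z' (posB n i) = B ∧ z' (posM n i) = D) ∧ C ≠ D)
              then chainLaw π p n (Function.update z' (posM n i) C) else 0) :=
            Finset.sum_congr rfl fun z' _ => Fintype.sum_prod_type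
              (fun yc : Fin (n/3) × S =>
                if (Ucount A B D n z' = u + 1 ∧ Vcount A B n z' = v) ∧
                    ((z' (posA n yc.1) = A ∧ z' (posB n yc.1) = B ∧
                      z' (posM n yc.1) = D) ∧ yc.2 ≠ D)
                  then chainLaw π p n (Function.update z' (posM n yc.1) yc.2) else 0)
    refine Finset.sum_nbij'
      (fun x => (Function.update x.1 (posM n x.2) D, (x.2, x.1 (posM n x.2))))
      (fun y => (Function.update y.1 (posM n y.2.1) y.2.2, y.2.1))
      ?_ ?_ ?_ ?_ ?_
    · rintro ⟨w, i⟩ hx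
      rw [Finset.mem_filter] at hx ⊢
      dsimp only at hx ⊢
      obtain ⟨-, ⟨hU, hV⟩, hA, hB, hD⟩ := hx
      refine ⟨Finset.mem_univ _, ⟨?_, ?_⟩, ⟨?_, ?_, ?_⟩, hD⟩
      · rw [Ucount_update_insert A B D n i w hA hB hD, hU]
      · rw [Vcount_update, hV]
      · rw [update_posA]; exact hA
      · rw [update_posB]; exact hB
      · exact update_posM_self n i w D
    · rintro ⟨z', i, C⟩ hy
      rw [Finset.mem_filter] at hy ⊢
      dsimp only at hy ⊢
      obtain ⟨-, ⟨hU, hV⟩, ⟨hA, hB, hD⟩, hC⟩ := hy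
      have hU2 := Ucount_update_erase A B D n i z' hA hB hD C hC
      refine ⟨Finset.mem_univ _, ⟨by omega, ?_⟩, ?_, ?_, ?_⟩
      · rw [Vcount_update, hV]
      · rw [update_posA]; exact hA
      · rw [update_posB]; exact hB
      · rw [update_posM_self]; exact hC
    · rintro ⟨w, i⟩ hx
      dsimp only
      rw [Function.update_idem, Function.update_eq_self]
    · rintro ⟨z', i, C⟩ hy
      rw [Finset.mem_filter] at hy
      dsimp only at hy ⊢
      obtain ⟨-, -, ⟨-, -, hD⟩, -⟩ := hy
      rw [Function.update_idem, update_eq_self_of_eq hD, update_posM_self]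
    · rintro ⟨w, i⟩ hx
      dsimp only
      rw [Function.update_idem, Function.update_eq_self]
  have hT3 : (∑ z' : Fin n → S, ∑ i : Fin (n/3), ∑ C : S,
      (if (Ucount A B D n z' = u + 1 ∧ Vcount A B n z' = v) ∧
          ((z' (posA n i) = A ∧ z' (posB n i) = B ∧ z' (posM n i) = D) ∧ C ≠ D)
        then chainLaw π p n (Function.update z' (posM n i) C) else 0)) * (p A D * p D B)
      = prOf (chainLaw π p n) (fun w => Ucount A B D n w = u + 1 ∧ Vcount A B n w = v)
        * (((u : ℝ) + 1) * ((∑ C, p A C * p C B) - p A D * p D B)) := by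
    unfold prOf
    rw [Finset.sum_mul, Finset.sum_mul]
    refine Finset.sum_congr rfl fun z' _ => ?_
    by_cases hz : Ucount A B D n z' = u + 1 ∧ Vcount A B n z' = v
    · rw [if_pos hz]
      have h1 : ∀ i : Fin (n/3), ∀ C : S,
          (if (Ucount A B D n z' = u + 1 ∧ Vcount A B n z' = v) ∧
              ((z' (posA n i) = A ∧ z' (posB n i) = B ∧ z' (posM n i) = D) ∧ C ≠ D)
            then chainLaw π p n (Function.update z' (posM n i) C) else 0)
          = (if (z' (posA n i) = A ∧ z' (posB n i) = B ∧ z' (posM n i) = D) ∧ C ≠ D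
            then chainLaw π p n (Function.update z' (posM n i) C) else 0) := by
        intro i C
        by_cases hi : (z' (posA n i) = A ∧ z' (posB n i) = B ∧ z' (posM n i) = D) ∧ C ≠ D
        · rw [if_pos ⟨hz, hi⟩, if_pos hi]
        · rw [if_neg (fun h => hi h.2), if_neg hi]
      rw [Finset.sum_congr rfl fun i _ =>
        Finset.sum_congr rfl fun C _ => h1 i C]
      rw [middle_inner_sum π p A B D n u z' hz.1]
      ring
    · rw [if_neg hz, zero_mul]
      have h1 : ∀ i : Fin (n/3), (∑ C : S,
          (if (Ucount A B D n z' = u + 1 ∧ Vcount A B n z' = v) ∧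
              ((z' (posA n i) = A ∧ z' (posB n i) = B ∧ z' (posM n i) = D) ∧ C ≠ D)
            then chainLaw π p n (Function.update z' (posM n i) C) else 0)) = 0 :=
        fun i => Finset.sum_eq_zero fun C _ => if_neg (fun h => hz h.1)
      rw [Finset.sum_congr rfl fun i _ => h1 i, Finset.sum_const_zero, zero_mul]
  rw [← hT1, hT2]
  exact hT3

end Aux4
section Aux5
variable {S : Type*} [Fintype S] [DecidableEq S]

lemma Jcard_eq (A B D : S) (n u v : ℕ) (z : Fin n → S)
    (hz : Ucount A B D n z = u ∧ Vcount A B n z = v)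
    {ii : DecidablePred fun i : Fin (n/3) =>
      z (posA n i) = A ∧ z (posB n i) = B ∧ z (posM n i) ≠ D} :
    (@Finset.filter _ _ ii Finset.univ).card = v - u := by
  have h := Jcard_add_Ucount A B D n z (iJ := ii)
  rw [hz.1, hz.2] at h
  omega

lemma kernelR_mul (π : S → ℝ) (p : S → S → ℝ) (A B D : S) (n u v : ℕ) (huv : u < v)
    (z z' : Fin n → S) (hz : Ucount A B D n z = u ∧ Vcount A B n z = v) :
    chainLaw π p n z * kernelR A B D n z z'
      = ∑ i : Fin (n/3), (if (z (posA n i) = A ∧ z (posB n i) = B ∧ z (posM n i) ≠ D) ∧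
            Function.update z (posM n i) D = z'
          then chainLaw π p n z / ((v : ℝ) - u) else 0) := by
  unfold kernelR
  dsimp only
  split
  · rw [Jcard_eq A B D n u v z hz, Nat.cast_sub (le_of_lt huv), Finset.card_filter,
      Finset.sum_filter, Nat.cast_sum, mul_comm, div_mul_eq_mul_div, Finset.sum_mul,
      Finset.sum_div]
    refine Finset.sum_congr rfl fun i _ => ?_
    by_cases hP : z (posA n i) = A ∧ z (posB n i) = B ∧ z (posM n i) ≠ D
    · rw [if_pos hP]
      by_cases hQ : Function.update z (posM n i) D = z'
      · rw [if_pos hQ, if_pos ⟨hP, hQ⟩]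
        push_cast
        ring
      · rw [if_neg hQ, if_neg (fun h => hQ h.2)]
        push_cast
        ring
    · rw [if_neg hP, if_neg (fun h => hP h.1)]
      push_cast
      ring
  · rename_i hne
    exfalso
    exact hne (Finset.card_pos.mp (by rw [Jcard_eq A B D n u v z hz]; omega))

lemma mem_filter' {α : Type*} {p : α → Prop} {ip : DecidablePred p} {s : Finset α} {a : α}
    (h : a ∈ @Finset.filter _ p ip s) : p a := by
  letI := ip
  exact (Finset.mem_filter.mp h).2

lemma filter_eq_empty_iff' {α : Type*} {p : α → Prop} {ip : DecidablePred p} {s : Finset α} :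
    (@Finset.filter _ p ip s = ∅) ↔ ∀ ⦃x⦄, x ∈ s → ¬ p x := by
  letI := ip
  exact Finset.filter_eq_empty_iff

lemma kernelR_eq_zero (A B D : S) (n u v : ℕ) (huv : u < v)
    (z z' : Fin n → S) (hz : Ucount A B D n z = u ∧ Vcount A B n z = v)
    (hz' : ¬ (Ucount A B D n z' = u + 1 ∧ Vcount A B n z' = v)) :
    kernelR A B D n z z' = 0 := by
  unfold kernelR
  dsimp only
  split
  · rw [div_eq_zero_iff]
    left
    rw [Nat.cast_eq_zero, Finset.card_eq_zero, filter_eq_empty_iff']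
    intro i hi hQ
    have hP := mem_filter' hi
    exact hz' ⟨by rw [← hQ, Ucount_update_insert A B D n i z hP.1 hP.2.1 hP.2.2, hz.1],
      by rw [← hQ, Vcount_update, hz.2]⟩
  · rename_i hne
    exfalso
    exact hne (Finset.card_pos.mp (by rw [Jcard_eq A B D n u v z hz]; omega))

end Aux5
section Aux6
variable {S : Type*} [Fintype S] [DecidableEq S]

lemma W_identity (π : S → ℝ) (p : S → S → ℝ) (A B D : S) (n u v : ℕ) (huv : u < v)
    (z' : Fin n → S) (hz' : Ucount A B D n z' = u + 1 ∧ Vcount A B n z' = v) :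
    (∑ z : Fin n → S, (if Ucount A B D n z = u ∧ Vcount A B n z = v
        then chainLaw π p n z else 0) * kernelR A B D n z z')
      * (((v : ℝ) - u) * (p A D * p D B))
    = chainLaw π p n z' * (((u : ℝ) + 1) * ((∑ C, p A C * p C B) - p A D * p D B)) := by
  have hvu : ((v : ℝ) - u) ≠ 0 := by
    have : (u : ℝ) < v := by exact_mod_cast huv
    linarith
  have hstep1 : ∀ z : Fin n → S,
      (if Ucount A B D n z = u ∧ Vcount A B n z = v then chainLaw π p n z else 0)
        * kernelR A B D n z z'
      = ∑ i : Fin (n/3),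
          (if (Ucount A B D n z = u ∧ Vcount A B n z = v) ∧
              ((z (posA n i) = A ∧ z (posB n i) = B ∧ z (posM n i) ≠ D) ∧
                Function.update z (posM n i) D = z')
            then chainLaw π p n z / ((v : ℝ) - u) else 0) := by
    intro z
    by_cases hz : Ucount A B D n z = u ∧ Vcount A B n z = v
    · rw [if_pos hz, kernelR_mul π p A B D n u v huv z z' hz]
      refine Finset.sum_congr rfl fun i _ => ?_
      by_cases hi : (z (posA n i) = A ∧ z (posB n i) = B ∧ z (posM n i) ≠ D) ∧
          Function.update z (posM n i) D = z'
      · rw [if_pos hi, if_pos ⟨hz, hi⟩]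
      · rw [if_neg hi, if_neg (fun h => hi h.2)]
    · rw [if_neg hz, zero_mul]
      exact (Finset.sum_eq_zero fun i _ => if_neg (fun h => hz h.1)).symm
  rw [Finset.sum_congr rfl fun z _ => hstep1 z]
  have hbij : ∑ z : Fin n → S, ∑ i : Fin (n/3),
      (if (Ucount A B D n z = u ∧ Vcount A B n z = v) ∧
          ((z (posA n i) = A ∧ z (posB n i) = B ∧ z (posM n i) ≠ D) ∧
            Function.update z (posM n i) D = z')
        then chainLaw π p n z / ((v : ℝ) - u) else 0)
      = ∑ i : Fin (n/3), ∑ C : S,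
        (if (z' (posA n i) = A ∧ z' (posB n i) = B ∧ z' (posM n i) = D) ∧ C ≠ D
          then chainLaw π p n (Function.update z' (posM n i) C) / ((v : ℝ) - u) else 0) := by
    calc
      ∑ z : Fin n → S, ∑ i : Fin (n/3),
          (if (Ucount A B D n z = u ∧ Vcount A B n z = v) ∧
              ((z (posA n i) = A ∧ z (posB n i) = B ∧ z (posM n i) ≠ D) ∧
                Function.update z (posM n i) D = z')
            then chainLaw π p n z / ((v : ℝ) - u) else 0)
        = ∑ x : (Fin n → S) × Fin (n/3),
            (if (Ucount A B D n x.1 = u ∧ Vcount A B n x.1 = v) ∧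
                ((x.1 (posA n x.2) = A ∧ x.1 (posB n x.2) = B ∧ x.1 (posM n x.2) ≠ D) ∧
                  Function.update x.1 (posM n x.2) D = z')
              then chainLaw π p n x.1 / ((v : ℝ) - u) else 0) :=
          (Fintype.sum_prod_type (fun x : (Fin n → S) × Fin (n/3) =>
            if (Ucount A B D n x.1 = u ∧ Vcount A B n x.1 = v) ∧
                ((x.1 (posA n x.2) = A ∧ x.1 (posB n x.2) = B ∧ x.1 (posM n x.2) ≠ D) ∧
                  Function.update x.1 (posM n x.2) D = z')
              then chainLaw π p n x.1 / ((v : ℝ) - u) else 0)).symm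
      _ = ∑ x ∈ Finset.univ.filter (fun x : (Fin n → S) × Fin (n/3) =>
              (Ucount A B D n x.1 = u ∧ Vcount A B n x.1 = v) ∧
              ((x.1 (posA n x.2) = A ∧ x.1 (posB n x.2) = B ∧ x.1 (posM n x.2) ≠ D) ∧
                Function.update x.1 (posM n x.2) D = z')),
            chainLaw π p n x.1 / ((v : ℝ) - u) :=
          (Finset.sum_filter (fun x : (Fin n → S) × Fin (n/3) =>
              (Ucount A B D n x.1 = u ∧ Vcount A B n x.1 = v) ∧
              ((x.1 (posA n x.2) = A ∧ x.1 (posB n x.2) = B ∧ x.1 (posM n x.2) ≠ D) ∧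
                Function.update x.1 (posM n x.2) D = z'))
            (fun x => chainLaw π p n x.1 / ((v : ℝ) - u))).symm
      _ = ∑ y ∈ Finset.univ.filter (fun y : Fin (n/3) × S =>
              (z' (posA n y.1) = A ∧ z' (posB n y.1) = B ∧ z' (posM n y.1) = D) ∧
                y.2 ≠ D),
            chainLaw π p n (Function.update z' (posM n y.1) y.2) / ((v : ℝ) - u) := ?_
      _ = ∑ y : Fin (n/3) × S,
            (if (z' (posA n y.1) = A ∧ z' (posB n y.1) = B ∧ z' (posM n y.1) = D) ∧
                y.2 ≠ D
              then chainLaw π p n (Function.update z' (posM n y.1) y.2) / ((v : ℝ) - u)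
              else 0) :=
          Finset.sum_filter (fun y : Fin (n/3) × S =>
              (z' (posA n y.1) = A ∧ z' (posB n y.1) = B ∧ z' (posM n y.1) = D) ∧ y.2 ≠ D)
            (fun y => chainLaw π p n (Function.update z' (posM n y.1) y.2) / ((v : ℝ) - u))
      _ = ∑ i : Fin (n/3), ∑ C : S,
            (if (z' (posA n i) = A ∧ z' (posB n i) = B ∧ z' (posM n i) = D) ∧ C ≠ D
              then chainLaw π p n (Function.update z' (posM n i) C) / ((v : ℝ) - u)
              else 0) :=
          Fintype.sum_prod_type (fun y : Fin (n/3) × S =>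
            if (z' (posA n y.1) = A ∧ z' (posB n y.1) = B ∧ z' (posM n y.1) = D) ∧ y.2 ≠ D
              then chainLaw π p n (Function.update z' (posM n y.1) y.2) / ((v : ℝ) - u)
              else 0)
    refine Finset.sum_nbij'
      (fun x => (x.2, x.1 (posM n x.2)))
      (fun y => (Function.update z' (posM n y.1) y.2, y.1))
      ?_ ?_ ?_ ?_ ?_
    · rintro ⟨z, i⟩ hx
      rw [Finset.mem_filter] at hx ⊢
      dsimp only at hx ⊢
      obtain ⟨-, ⟨hU, hV⟩, ⟨hA, hB, hD⟩, hQ⟩ := hx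
      refine ⟨Finset.mem_univ _, ⟨?_, ?_, ?_⟩, hD⟩
      · rw [← hQ, update_posA]; exact hA
      · rw [← hQ, update_posB]; exact hB
      · rw [← hQ, update_posM_self]
    · rintro ⟨i, C⟩ hy
      rw [Finset.mem_filter] at hy ⊢
      dsimp only at hy ⊢
      obtain ⟨-, ⟨hA, hB, hD⟩, hC⟩ := hy
      have hU2 := Ucount_update_erase A B D n i z' hA hB hD C hC
      refine ⟨Finset.mem_univ _, ⟨by omega, by rw [Vcount_update, hz'.2]⟩,
        ⟨?_, ?_, ?_⟩, ?_⟩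
      · rw [update_posA]; exact hA
      · rw [update_posB]; exact hB
      · rw [update_posM_self]; exact hC
      · rw [Function.update_idem]; exact update_eq_self_of_eq hD
    · rintro ⟨z, i⟩ hx
      rw [Finset.mem_filter] at hx
      dsimp only at hx ⊢
      obtain ⟨-, -, -, hQ⟩ := hx
      rw [← hQ, Function.update_idem, Function.update_eq_self]
    · rintro ⟨i, C⟩ hy
      dsimp only
      rw [update_posM_self]
    · rintro ⟨z, i⟩ hx
      rw [Finset.mem_filter] at hx
      dsimp only at hx ⊢
      obtain ⟨-, -, -, hQ⟩ := hx
      rw [← hQ, Function.update_idem, Function.update_eq_self]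
  rw [hbij]
  have hdiv : ∀ (i : Fin (n/3)) (C : S),
      (if (z' (posA n i) = A ∧ z' (posB n i) = B ∧ z' (posM n i) = D) ∧ C ≠ D
        then chainLaw π p n (Function.update z' (posM n i) C) / ((v : ℝ) - u) else 0)
      = (if (z' (posA n i) = A ∧ z' (posB n i) = B ∧ z' (posM n i) = D) ∧ C ≠ D
        then chainLaw π p n (Function.update z' (posM n i) C) else 0) / ((v : ℝ) - u) := by
    intro i C
    by_cases h : (z' (posA n i) = A ∧ z' (posB n i) = B ∧ z' (posM n i) = D) ∧ C ≠ D
    · rw [if_pos h, if_pos h]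
    · rw [if_neg h, if_neg h, zero_div]
  rw [Finset.sum_congr rfl fun i _ => Finset.sum_congr rfl fun C _ => hdiv i C]
  rw [Finset.sum_congr rfl fun i _ => (Finset.sum_div _ _ _).symm,
    (Finset.sum_div _ _ _).symm]
  have hfin := middle_inner_sum π p A B D n u z' hz'.1
  field_simp
  linear_combination hfin

end Aux6

/-- if `Z` has law `P_{(u,v)}` (the chain conditioned on `U = u`,
`V = v`) with `0 ≤ u < v`, then `𝓡(Z)` has law `P_{(u+1,v)}`; that is, the pushforward
of `P_{(u,v)}` through the kernel `𝓡` equals `P_{(u+1,v)}`. -/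
theorem kernel_maps_condLaw
    {𝔸 : Type*} [Fintype 𝔸] [DecidableEq 𝔸]
    (p : (𝔸 × 𝔸) → (𝔸 × 𝔸) → ℝ)
    (hpnn : ∀ x y, 0 ≤ p x y) (hprow : ∀ x, ∑ y, p x y = 1)
    (π : (𝔸 × 𝔸) → ℝ) (hπnn : ∀ x, 0 ≤ π x) (hπsum : ∑ x, π x = 1)
    (hstat : ∀ y, ∑ x, π x * p x y = π y)
    (haper : ∃ m : ℕ, ∀ x y, 0 < (Matrix.of p ^ m) x y)
    (A B D : 𝔸 × 𝔸)
    (hAB : 0 < π A * ∑ C : 𝔸 × 𝔸, p A C * p C B)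
    (q : ℝ) (hq : q = p A D * p D B / ∑ D' : 𝔸 × 𝔸, p A D' * p D' B)
    (hqpos : 0 < q)
    (n : ℕ) (u v : ℕ) (huv : u < v)
    (hpos : 0 < prOf (chainLaw π p n)
      (fun z => Ucount A B D n z = u ∧ Vcount A B n z = v)) :
    ∀ z' : Fin n → 𝔸 × 𝔸,
      (∑ z, condLawUV π p A B D n u v z * kernelR A B D n z z')
        = condLawUV π p A B D n (u + 1) v z' := by
  intro z'
  have hd : 0 < p A D * p D B := by
    rcases (mul_nonneg (hpnn A D) (hpnn D B)).eq_or_lt with h | h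
    · exfalso
      rw [← h, zero_div] at hq
      linarith
    · exact h
  have hvu_pos : (0:ℝ) < (v:ℝ) - u := by
    have : (u:ℝ) < v := by exact_mod_cast huv
    linarith
  have hstar := star_identity π p A B D n u v huv
  have hZu1_nonneg : 0 ≤ prOf (chainLaw π p n)
      (fun w => Ucount A B D n w = u + 1 ∧ Vcount A B n w = v) := by
    unfold prOf
    refine Finset.sum_nonneg fun z _ => ?_
    by_cases h : Ucount A B D n z = u + 1 ∧ Vcount A B n z = v
    · rw [if_pos h]; exact chainLaw_nonneg π p hπnn hpnn n z
    · rw [if_neg h]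
  have hprod : 0 < prOf (chainLaw π p n)
      (fun w => Ucount A B D n w = u + 1 ∧ Vcount A B n w = v)
      * (((u:ℝ)+1) * ((∑ C, p A C * p C B) - p A D * p D B)) := by
    rw [← hstar]
    exact mul_pos (mul_pos hvu_pos hpos) hd
  have hZu1 : 0 < prOf (chainLaw π p n)
      (fun w => Ucount A B D n w = u + 1 ∧ Vcount A B n w = v) := by
    rcases mul_pos_iff.mp hprod with ⟨h1, -⟩ | ⟨h1, -⟩
    · exact h1
    · linarith
  by_cases hz' : Ucount A B D n z' = u + 1 ∧ Vcount A B n z' = v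
  · have hW := W_identity π p A B D n u v huv z' hz'
    have hRHS : condLawUV π p A B D n (u + 1) v z'
        = chainLaw π p n z' / prOf (chainLaw π p n)
            (fun w => Ucount A B D n w = u + 1 ∧ Vcount A B n w = v) := by
      unfold condLawUV
      rw [if_pos hz']
    rw [hRHS]
    have hform : ∀ z : Fin n → 𝔸 × 𝔸,
        condLawUV π p A B D n u v z * kernelR A B D n z z'
        = ((if Ucount A B D n z = u ∧ Vcount A B n z = v then chainLaw π p n z else 0)
            * kernelR A B D n z z')
          / prOf (chainLaw π p n) (fun w => Ucount A B D n w = u ∧ Vcount A B n w = v) := by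
      intro z
      unfold condLawUV
      by_cases h : Ucount A B D n z = u ∧ Vcount A B n z = v
      · rw [if_pos h, div_mul_eq_mul_div]
      · rw [if_neg h]
        simp
    rw [Finset.sum_congr rfl fun z _ => hform z, ← Finset.sum_div]
    rw [div_eq_div_iff (ne_of_gt hpos) (ne_of_gt hZu1)]
    refine mul_right_cancel₀ (ne_of_gt (mul_pos hvu_pos hd)) ?_
    linear_combination prOf (chainLaw π p n)
        (fun w => Ucount A B D n w = u + 1 ∧ Vcount A B n w = v) * hW
      - chainLaw π p n z' * hstar
  · have hRHS : condLawUV π p A B D n (u + 1) v z' = 0 := by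
      unfold condLawUV
      rw [if_neg hz', zero_div]
    rw [hRHS]
    refine Finset.sum_eq_zero fun z _ => ?_
    by_cases hz : Ucount A B D n z = u ∧ Vcount A B n z = v
    · rw [kernelR_eq_zero A B D n u v huv z z' hz hz', mul_zero]
    · unfold condLawUV
      rw [if_neg hz, zero_div, zero_mul]
end
end

section
/- For every v with P(V = v) > 0, the conditional distribution of U given V = v is binomial B(v, q) with q := p_{𝐀𝐃} p_{𝐃𝐁} / Σ_{𝐃'∈𝔸×𝔸} p_{𝐀𝐃'} p_{𝐃'𝐁}; that is, P(U = u | V = v) = C(v,u) q^u (1−q)^{v−u} for u = 0, …, v. -/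
open Finset

noncomputable section

section Chain
variable {S : Type*}

def Mid (n : ℕ) (j : Fin n) : Prop := j.1 % 3 = 1 ∧ j.1 < 3 * (n / 3)

instance (n : ℕ) (j : Fin n) : Decidable (Mid n j) := by unfold Mid; infer_instance

def eMid (n : ℕ) : Fin (n / 3) ≃ {j : Fin n // Mid n j} where
  toFun i := ⟨posM n i, by constructor <;> (simp only [posM]; omega)⟩
  invFun j := ⟨j.1.1 / 3, by have := j.2.2; have := j.1.2; omega⟩
  left_inv i := by ext; simp [posM]; omega
  right_inv j := by
    have h1 := j.2.1
    apply Subtype.ext; apply Fin.ext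
    simp only [posM]
    omega

def chainEquiv (S : Type*) (n : ℕ) :
    (Fin n → S) ≃ (Fin (n / 3) → S) × ({j : Fin n // ¬ Mid n j} → S) :=
  (Equiv.piEquivPiSubtypeProd (Mid n) (fun _ => S)).trans
    (Equiv.prodCongr (Equiv.arrowCongr (eMid n).symm (Equiv.refl S)) (Equiv.refl _))

lemma chainEquiv_symm_apply (n : ℕ) (g : Fin (n / 3) → S) (w : {j : Fin n // ¬ Mid n j} → S)
    (j : Fin n) :
    (chainEquiv S n).symm (g, w) j
      = if h : Mid n j then g ((eMid n).symm ⟨j, h⟩) else w ⟨j, by exact h⟩ := by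
  simp only [chainEquiv, Equiv.symm_trans_apply, Equiv.prodCongr_symm, Equiv.prodCongr_apply,
    Equiv.coe_refl, Prod.map, Equiv.piEquivPiSubtypeProd, Equiv.coe_fn_symm_mk,
    Equiv.arrowCongr, Equiv.symm_symm, Equiv.coe_fn_mk, Function.comp, id_eq]
  split <;> simp

lemma z_notmid (n : ℕ) (g : Fin (n / 3) → S) (w : {j : Fin n // ¬ Mid n j} → S)
    (j : Fin n) (h : ¬ Mid n j) :
    (chainEquiv S n).symm (g, w) j = w ⟨j, h⟩ := by
  rw [chainEquiv_symm_apply, dif_neg h]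

lemma z_mid (n : ℕ) (g : Fin (n / 3) → S) (w : {j : Fin n // ¬ Mid n j} → S)
    (i : Fin (n / 3)) :
    (chainEquiv S n).symm (g, w) (posM n i) = g i := by
  have h : Mid n (posM n i) := by
    constructor <;> (simp only [posM]; omega)
  rw [chainEquiv_symm_apply, dif_pos h]
  congr 1
  ext
  simp [eMid, posM]
  omega

end Chain

section Fact
variable {S : Type*}

def Touch (n : ℕ) (t : Fin (n - 1)) : Prop :=
  t.1 % 3 = 1 ∨ (t.1 % 3 = 0 ∧ t.1 < 3 * (n / 3))

instance (n : ℕ) (t : Fin (n - 1)) : Decidable (Touch n t) := by unfold Touch; infer_instance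

def eTouch (n : ℕ) : Fin (n / 3) × Bool ≃ {t : Fin (n - 1) // Touch n t} where
  toFun ib := ⟨⟨3 * ib.1.1 + (if ib.2 then 1 else 0), by
      have := ib.1.isLt; split <;> omega⟩, by
    rcases ib with ⟨i, b⟩
    have := i.isLt
    cases b
    · right
      refine ⟨?_, ?_⟩
      · show (3 * i.1 + 0) % 3 = 0; omega
      · show 3 * i.1 + 0 < 3 * (n / 3); omega
    · left; show (3 * i.1 + 1) % 3 = 1; omega⟩
  invFun t := (⟨t.1.1 / 3, by
      have h2 := t.2; have h3 := t.1.isLt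
      unfold Touch at h2
      rcases h2 with h | h <;> omega⟩, decide (t.1.1 % 3 = 1))
  left_inv := by
    rintro ⟨i, b⟩
    have := i.isLt
    cases b
    · refine Prod.ext (Fin.ext ?_) ?_
      · show (3 * i.1 + 0) / 3 = i.1; omega
      · show decide ((3 * i.1 + 0) % 3 = 1) = false
        rw [decide_eq_false_iff_not]; omega
    · refine Prod.ext (Fin.ext ?_) ?_
      · show (3 * i.1 + 1) / 3 = i.1; omega
      · show decide ((3 * i.1 + 1) % 3 = 1) = true
        rw [decide_eq_true_eq]; omega
  right_inv := by
    rintro ⟨t, ht⟩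
    unfold Touch at ht
    apply Subtype.ext; apply Fin.ext
    show 3 * (t.1 / 3) + (if decide (t.1 % 3 = 1) then 1 else 0) = t.1
    by_cases hm : t.1 % 3 = 1
    · rw [if_pos (by rw [decide_eq_true_eq]; exact hm)]; omega
    · rw [if_neg (by rw [decide_eq_true_eq]; exact hm)]
      have h0 : t.1 % 3 = 0 := by rcases ht with h | h; exact absurd h hm; exact h.1
      omega

lemma notMid_fst (n : ℕ) (t : Fin (n - 1)) (ht : ¬ Touch n t) :
    ¬ Mid n ⟨t.1, by have := t.isLt; omega⟩ := by
  unfold Touch at ht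
  push_neg at ht
  rintro ⟨h1, h2⟩
  have h1' : t.1 % 3 = 1 := h1
  exact absurd h1' ht.1

lemma notMid_snd (n : ℕ) (t : Fin (n - 1)) (ht : ¬ Touch n t) :
    ¬ Mid n ⟨t.1 + 1, by have := t.isLt; omega⟩ := by
  unfold Touch at ht
  push_neg at ht
  rintro ⟨h1, h2⟩
  have h1' : (t.1 + 1) % 3 = 1 := h1
  have h2' : t.1 + 1 < 3 * (n / 3) := h2
  have h0 : t.1 % 3 = 0 := by omega
  have := ht.2 h0
  omega

lemma notMid_zero (n : ℕ) (hn : 0 < n) : ¬ Mid n ⟨0, hn⟩ := by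
  rintro ⟨h1, _⟩
  have h1' : (0 : ℕ) % 3 = 1 := h1
  omega

def Fw (π : S → ℝ) (p : S → S → ℝ) (n : ℕ) (w : {j : Fin n // ¬ Mid n j} → S) : ℝ :=
  (if hn : 0 < n then π (w ⟨⟨0, hn⟩, notMid_zero n hn⟩) else 1) *
  ∏ t : {t : Fin (n - 1) // ¬ Touch n t},
    p (w ⟨⟨t.1.1, by have := t.1.isLt; omega⟩, notMid_fst n t.1 t.2⟩)
      (w ⟨⟨t.1.1 + 1, by have := t.1.isLt; omega⟩, notMid_snd n t.1 t.2⟩)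

lemma notMid_posA (n : ℕ) (i : Fin (n / 3)) : ¬ Mid n (posA n i) := by
  rintro ⟨h1, _⟩
  have h1' : (3 * i.1) % 3 = 1 := h1
  omega

lemma notMid_posB (n : ℕ) (i : Fin (n / 3)) : ¬ Mid n (posB n i) := by
  rintro ⟨h1, _⟩
  have h1' : (3 * i.1 + 2) % 3 = 1 := h1
  omega

def avv (n : ℕ) (i : Fin (n / 3)) : {j : Fin n // ¬ Mid n j} := ⟨posA n i, notMid_posA n i⟩
def bvv (n : ℕ) (i : Fin (n / 3)) : {j : Fin n // ¬ Mid n j} := ⟨posB n i, notMid_posB n i⟩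

lemma chain_factor (π : S → ℝ) (p : S → S → ℝ) (n : ℕ)
    (g : Fin (n / 3) → S) (w : {j : Fin n // ¬ Mid n j} → S) :
    chainLaw π p n ((chainEquiv S n).symm (g, w))
      = Fw π p n w * ∏ i : Fin (n / 3), (p (w (avv n i)) (g i) * p (g i) (w (bvv n i))) := by
  classical
  rcases Nat.eq_zero_or_pos n with hn | hn
  · subst hn
    rw [chainLaw, dif_neg (by omega), Fw, dif_neg (by omega)]
    have e1 : IsEmpty (Fin (0 / 3)) := ⟨fun i => by have := i.isLt; omega⟩
    have e2 : IsEmpty {t : Fin (0 - 1) // ¬ Touch 0 t} := ⟨fun t => by have := t.1.isLt; omega⟩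
    simp
  · set z := (chainEquiv S n).symm (g, w) with hz
    rw [chainLaw, dif_pos hn, Fw, dif_pos hn]
    have hz0 : z ⟨0, hn⟩ = w ⟨⟨0, hn⟩, notMid_zero n hn⟩ :=
      z_notmid n g w _ (notMid_zero n hn)
    rw [hz0]
    rw [← Finset.prod_filter_mul_prod_filter_not univ (Touch n)]
    rw [show ∀ a b c : ℝ, a * (b * c) = (a * c) * b from fun a b c => by ring]
    congr 1
    · -- non-touch part
      congr 1
      refine Finset.prod_bij'
        (fun t ht => (⟨t, by simpa using ht⟩ : {t : Fin (n-1) // ¬ Touch n t}))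
        (fun t _ => t.1) ?_ ?_ ?_ ?_ ?_
      · intro a ha; exact Finset.mem_univ _
      · intro a _; simpa using a.2
      · intro a ha; rfl
      · intro a _; rfl
      · intro t ht
        have h2 : ¬ Touch n t := by simpa using ht
        rw [hz, z_notmid n g w _ (notMid_fst n t h2), z_notmid n g w _ (notMid_snd n t h2)]
    · -- touch part
      have step : ∏ t ∈ univ.filter (Touch n),
          p (z ⟨t.1, by have := t.isLt; omega⟩) (z ⟨t.1 + 1, by have := t.isLt; omega⟩)
          = ∏ t : {t : Fin (n-1) // Touch n t},
            p (z ⟨t.1.1, by have := t.1.isLt; omega⟩)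
              (z ⟨t.1.1 + 1, by have := t.1.isLt; omega⟩) := by
        refine Finset.prod_bij'
          (fun t ht => (⟨t, by simpa using ht⟩ : {t : Fin (n-1) // Touch n t}))
          (fun t _ => t.1) ?_ ?_ ?_ ?_ ?_
        · intro a ha; exact Finset.mem_univ _
        · intro a _; simpa using a.2
        · intro a ha; rfl
        · intro a _; rfl
        · intro t ht; rfl
      rw [step, ← Equiv.prod_comp (eTouch n), Fintype.prod_prod_type]
      refine Finset.prod_congr rfl fun i _ => ?_
      rw [Fintype.prod_bool]
      have hiv : ∀ b : Bool, ((eTouch n (i, b)).1.1 : ℕ) = 3 * i.1 + (if b then 1 else 0) := by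
        intro b; rfl
      have hA : (⟨((eTouch n (i, false)).1.1 : ℕ), by
            have := (eTouch n (i, false)).1.isLt; omega⟩ : Fin n) = posA n i := by
        apply Fin.ext; rw [hiv false]; simp [posA]
      have hM : (⟨((eTouch n (i, false)).1.1 : ℕ) + 1, by
            have := (eTouch n (i, false)).1.isLt; omega⟩ : Fin n) = posM n i := by
        apply Fin.ext; show ((eTouch n (i, false)).1.1 : ℕ) + 1 = _
        rw [hiv false]; simp [posM]
      have hM' : (⟨((eTouch n (i, true)).1.1 : ℕ), by
            have := (eTouch n (i, true)).1.isLt; omega⟩ : Fin n) = posM n i := by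
        apply Fin.ext; show ((eTouch n (i, true)).1.1 : ℕ) = _
        rw [hiv true]; simp [posM]
      have hB : (⟨((eTouch n (i, true)).1.1 : ℕ) + 1, by
            have := (eTouch n (i, true)).1.isLt; omega⟩ : Fin n) = posB n i := by
        apply Fin.ext; show ((eTouch n (i, true)).1.1 : ℕ) + 1 = _
        rw [hiv true]; simp [posB]
      rw [mul_comm]
      congr 1
      · rw [hA, hM, hz, z_notmid n g w _ (notMid_posA n i), z_mid n g w i]; rfl
      · rw [hM', hB, hz, z_mid n g w i, z_notmid n g w _ (notMid_posB n i)]; rfl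

end Fact

section Trans
variable {S : Type*}

lemma card_filter_congr {α : Type*} [Fintype α] {p q : α → Prop}
    {dp : DecidablePred p} {dq : DecidablePred q} (h : ∀ i, p i ↔ q i) :
    (@Finset.filter _ p dp univ).card = (@Finset.filter _ q dq univ).card := by
  have e : @Finset.filter _ p dp univ = @Finset.filter _ q dq univ := by
    ext i
    simp only [Finset.mem_filter]
    exact ⟨fun hh => ⟨hh.1, (h i).mp hh.2⟩, fun hh => ⟨hh.1, (h i).mpr hh.2⟩⟩
  rw [e]

lemma Vcount_factor (A B : S) (n : ℕ) (g : Fin (n / 3) → S)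
    (w : {j : Fin n // ¬ Mid n j} → S) [DecidableEq S] :
    Vcount A B n ((chainEquiv S n).symm (g, w))
      = (univ.filter fun i : Fin (n / 3) => w (avv n i) = A ∧ w (bvv n i) = B).card := by
  unfold Vcount
  refine card_filter_congr fun i => ?_
  rw [z_notmid n g w (posA n i) (notMid_posA n i), z_notmid n g w (posB n i) (notMid_posB n i)]
  exact Iff.rfl

lemma Ucount_factor (A B D : S) (n : ℕ) (g : Fin (n / 3) → S)
    (w : {j : Fin n // ¬ Mid n j} → S) [DecidableEq S] :
    Ucount A B D n ((chainEquiv S n).symm (g, w))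
      = (univ.filter fun i : Fin (n / 3) =>
          (w (avv n i) = A ∧ w (bvv n i) = B) ∧ g i = D).card := by
  unfold Ucount
  refine card_filter_congr fun i => ?_
  rw [z_notmid n g w (posA n i) (notMid_posA n i), z_notmid n g w (posB n i) (notMid_posB n i),
    z_mid n g w i, and_assoc]
  exact Iff.rfl

end Trans

section Binom
variable {S : Type*} [Fintype S] [DecidableEq S]

lemma binom_count (h : S → ℝ) (D : S) : ∀ (k u : ℕ),
    ∑ g : Fin k → S, (if (univ.filter fun i => g i = D).card = u then ∏ i, h (g i) else 0)
    = (k.choose u : ℝ) * h D ^ u * (∑ x, h x - h D) ^ (k - u) := by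
  intro k
  induction k with
  | zero =>
    intro u
    cases u with
    | zero => simp
    | succ u => simp [Nat.choose_eq_zero_of_lt]
  | succ k ih =>
    intro u
    rw [← (Fin.consEquiv (fun _ : Fin (k+1) => S)).sum_comp]
    rw [Fintype.sum_prod_type]
    have key : ∀ (x : S) (g : Fin k → S),
        (univ.filter fun i => (Fin.cons x g : Fin (k+1) → S) i = D).card
          = (if x = D then 1 else 0) + (univ.filter fun i => g i = D).card := by
      intro x g
      rw [Finset.card_filter, Finset.card_filter, Fin.sum_univ_succ]
      simp [Fin.cons_zero, Fin.cons_succ]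
    have key2 : ∀ (x : S) (g : Fin k → S),
        ∏ i, h ((Fin.cons x g : Fin (k+1) → S) i) = h x * ∏ i, h (g i) := by
      intro x g
      rw [Fin.prod_univ_succ]
      simp
    simp only [Fin.consEquiv_apply, key, key2]
    rw [Finset.sum_eq_sum_sdiff_singleton_add (Finset.mem_univ D)]
    have hDD : (if D = D then (1:ℕ) else 0) = 1 := if_pos rfl
    simp only [hDD, eq_self_iff_true, if_true]
    have hne : ∀ x ∈ univ \ {D}, x ≠ D := by intro x hx; simp at hx; exact hx
    have step1 : ∑ x ∈ univ \ {D}, ∑ g : Fin k → S,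
        (if (if x = D then 1 else 0) + (univ.filter fun i => g i = D).card = u
          then h x * ∏ i, h (g i) else 0)
        = (∑ x ∈ univ \ {D}, h x) *
          ∑ g : Fin k → S, (if (univ.filter fun i => g i = D).card = u then ∏ i, h (g i) else 0) := by
      rw [Finset.sum_mul]
      refine Finset.sum_congr rfl fun x hx => ?_
      rw [Finset.mul_sum]
      refine Finset.sum_congr rfl fun g _ => ?_
      rw [if_neg (hne x hx)]
      simp only [zero_add]
      split <;> simp
    have hsum : ∑ x ∈ univ \ {D}, h x = (∑ x, h x) - h D := by
      rw [Finset.sum_sdiff_eq_sub (by simp)]; simp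
    rw [step1, hsum, ih]
    cases u with
    | zero =>
      have : ∀ g : Fin k → S,
          (if 1 + (univ.filter fun i => g i = D).card = 0 then h D * ∏ i, h (g i) else 0) = 0 := by
        intro g; rw [if_neg (by omega)]
      simp only [this, Finset.sum_const_zero, add_zero, Nat.choose_zero_right,
        Nat.cast_one, pow_zero, one_mul, mul_one, Nat.sub_zero]
      rw [← pow_succ']
    | succ u =>
      have : ∀ g : Fin k → S,
          (if 1 + (univ.filter fun i => g i = D).card = u + 1 then h D * ∏ i, h (g i) else 0)
          = h D * (if (univ.filter fun i => g i = D).card = u then ∏ i, h (g i) else 0) := by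
        intro g
        have : (1 + (univ.filter fun i => g i = D).card = u + 1) ↔
            ((univ.filter fun i => g i = D).card = u) := by omega
        rw [if_congr this rfl rfl]; split <;> simp
      simp only [this, ← Finset.mul_sum, ih]
      rw [Nat.choose_succ_succ k u]
      push_cast
      simp only [Nat.succ_eq_add_one]
      rcases Nat.lt_or_ge u k with hlt | hge
      · have e1 : k - u = (k - (u+1)) + 1 := by omega
        rw [e1]
        ring
      · rcases Nat.eq_or_lt_of_le hge with heq | hlt2
        · have h1 : k.choose (u+1) = 0 := Nat.choose_eq_zero_of_lt (by omega)
          have h2 : k - u = 0 := by omega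
          rw [h1, h2]
          push_cast
          ring
        · have h1 : k.choose (u+1) = 0 := Nat.choose_eq_zero_of_lt (by omega)
          have h2 : k.choose u = 0 := Nat.choose_eq_zero_of_lt (by omega)
          rw [h1, h2]
          push_cast
          ring

end Binom

section Binom2
variable {S : Type*} [Fintype S] [DecidableEq S]

lemma binom_count' {ι : Type*} [Fintype ι] [DecidableEq ι] (h : S → ℝ) (D : S) (u : ℕ) :
    ∑ g : ι → S, (if (univ.filter fun i => g i = D).card = u then ∏ i, h (g i) else 0)
    = ((Fintype.card ι).choose u : ℝ) * h D ^ u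
        * (∑ x, h x - h D) ^ (Fintype.card ι - u) := by
  classical
  set e := Fintype.equivFin ι
  rw [← binom_count h D (Fintype.card ι) u]
  refine Fintype.sum_equiv (Equiv.arrowCongr e (Equiv.refl S)) _ _ fun g => ?_
  have hc : (univ.filter fun i : ι => g i = D).card
      = (univ.filter fun j : Fin (Fintype.card ι) =>
          (Equiv.arrowCongr e (Equiv.refl S)) g j = D).card := by
    refine Finset.card_bij' (fun i _ => e i) (fun j _ => e.symm j) ?_ ?_ ?_ ?_
    · intro i hi
      simp only [Finset.mem_filter, Finset.mem_univ, true_and] at hi ⊢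
      simpa [Equiv.arrowCongr] using hi
    · intro j hj
      simp only [Finset.mem_filter, Finset.mem_univ, true_and] at hj ⊢
      simpa [Equiv.arrowCongr] using hj
    · intro i _; simp
    · intro j _; simp
  have hp : ∏ i : ι, h (g i)
      = ∏ j : Fin (Fintype.card ι), h ((Equiv.arrowCongr e (Equiv.refl S)) g j) := by
    rw [← Equiv.prod_comp e]
    refine Finset.prod_congr rfl fun i _ => ?_
    simp [Equiv.arrowCongr]
  rw [← hc, ← hp]

lemma binom_count_full {ι : Type*} [Fintype ι] [DecidableEq ι]
    (H : ι → S → ℝ) (P : ι → Prop) [DecidablePred P] (h : S → ℝ) (D : S)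
    (hconst : ∀ i, P i → H i = h) (u : ℕ) :
    ∑ g : ι → S, (if (univ.filter fun i => P i ∧ g i = D).card = u then ∏ i, H i (g i) else 0)
    = ((Fintype.card {i // P i}).choose u : ℝ) * h D ^ u
        * (∑ x, h x - h D) ^ (Fintype.card {i // P i} - u)
        * ∏ i ∈ univ.filter (fun i => ¬ P i), ∑ x, H i x := by
  classical
  rw [← (Equiv.piEquivPiSubtypeProd P (fun _ => S)).symm.sum_comp]
  rw [Fintype.sum_prod_type]
  have hz : ∀ (g₁ : {x // P x} → S) (g₂ : {x // ¬ P x} → S) (i : ι) (hi : P i),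
      (Equiv.piEquivPiSubtypeProd P (fun _ => S)).symm (g₁, g₂) i = g₁ ⟨i, hi⟩ := by
    intro g₁ g₂ i hi
    simp [Equiv.piEquivPiSubtypeProd, dif_pos hi]
  have hz' : ∀ (g₁ : {x // P x} → S) (g₂ : {x // ¬ P x} → S) (i : ι) (hi : ¬ P i),
      (Equiv.piEquivPiSubtypeProd P (fun _ => S)).symm (g₁, g₂) i = g₂ ⟨i, hi⟩ := by
    intro g₁ g₂ i hi
    simp [Equiv.piEquivPiSubtypeProd, dif_neg hi]
  have key : ∀ (g₁ : {x // P x} → S) (g₂ : {x // ¬ P x} → S),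
      (if (univ.filter fun i => P i ∧
          (Equiv.piEquivPiSubtypeProd P (fun _ => S)).symm (g₁, g₂) i = D).card = u
        then ∏ i, H i ((Equiv.piEquivPiSubtypeProd P (fun _ => S)).symm (g₁, g₂) i) else 0)
      = (if (univ.filter fun i : {x // P x} => g₁ i = D).card = u
          then ∏ i : {x // P x}, h (g₁ i) else 0)
        * ∏ i : {x // ¬ P x}, H i.1 (g₂ i) := by
    intro g₁ g₂
    have hcard : (univ.filter fun i => P i ∧
        (Equiv.piEquivPiSubtypeProd P (fun _ => S)).symm (g₁, g₂) i = D).card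
        = (univ.filter fun i : {x // P x} => g₁ i = D).card := by
      refine Finset.card_bij' (fun i hi => (⟨i, by
          simp only [Finset.mem_filter] at hi; exact hi.2.1⟩ : {x // P x}))
        (fun j _ => j.1) ?_ ?_ ?_ ?_
      · intro i hi
        simp only [Finset.mem_filter, Finset.mem_univ, true_and] at hi ⊢
        rw [← hz g₁ g₂ i hi.1]; exact hi.2
      · intro j hj
        simp only [Finset.mem_filter, Finset.mem_univ, true_and] at hj ⊢
        exact ⟨j.2, by rw [hz g₁ g₂ j.1 j.2]; exact hj⟩
      · intro i _; rfl
      · intro j _; rfl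
    have hprod : ∏ i, H i ((Equiv.piEquivPiSubtypeProd P (fun _ => S)).symm (g₁, g₂) i)
        = (∏ i : {x // P x}, h (g₁ i)) * ∏ i : {x // ¬ P x}, H i.1 (g₂ i) := by
      rw [← Fintype.prod_subtype_mul_prod_subtype P
        (fun i => H i ((Equiv.piEquivPiSubtypeProd P (fun _ => S)).symm (g₁, g₂) i))]
      congr 1
      · refine Finset.prod_congr rfl fun i _ => ?_
        rw [hz g₁ g₂ i.1 i.2, hconst i.1 i.2]
      · refine Finset.prod_congr rfl fun i _ => ?_
        rw [hz' g₁ g₂ i.1 i.2]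
    rw [hcard, hprod]
    split <;> simp
  simp only [key]
  rw [← Finset.sum_mul_sum]
  rw [binom_count' h D u]
  congr 1
  rw [← Fintype.piFinset_univ, ← Finset.prod_univ_sum]
  rw [← Finset.prod_subtype (univ.filter fun i => ¬ P i)
    (fun i => by simp) (fun i => ∑ x, H i x)]

end Binom2

section PerW
variable {S : Type*} [Fintype S] [DecidableEq S]

lemma per_w_main (p : S → S → ℝ) (A B D : S) (n u v : ℕ) (hu : u ≤ v) (q s F : ℝ)
    (hs : s = ∑ x, p A x * p x B) (hts : p A D * p D B = q * s)
    (w : {j : Fin n // ¬ Mid n j} → S)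
    (hV' : (univ.filter fun i : Fin (n / 3) => w (avv n i) = A ∧ w (bvv n i) = B).card = v) :
    ∑ g : Fin (n / 3) → S,
      (if (univ.filter fun i => (w (avv n i) = A ∧ w (bvv n i) = B) ∧ g i = D).card = u
        then F * ∏ i, (p (w (avv n i)) (g i) * p (g i) (w (bvv n i))) else 0)
    = (v.choose u : ℝ) * q ^ u * (1 - q) ^ (v - u)
      * ∑ g : Fin (n / 3) → S, F * ∏ i, (p (w (avv n i)) (g i) * p (g i) (w (bvv n i))) := by
  have pull : ∀ g : Fin (n / 3) → S,
      (if (univ.filter fun i => (w (avv n i) = A ∧ w (bvv n i) = B) ∧ g i = D).card = u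
        then F * ∏ i, (p (w (avv n i)) (g i) * p (g i) (w (bvv n i))) else 0)
      = F * (if (univ.filter fun i => (w (avv n i) = A ∧ w (bvv n i) = B) ∧ g i = D).card = u
        then ∏ i, (p (w (avv n i)) (g i) * p (g i) (w (bvv n i))) else 0) := by
    intro g; split <;> simp
  simp only [pull]
  rw [← Finset.mul_sum, ← Finset.mul_sum]
  have hcard : Fintype.card {i : Fin (n / 3) // w (avv n i) = A ∧ w (bvv n i) = B} = v := by
    rw [Fintype.card_subtype]; exact hV'
  have hconst : ∀ i : Fin (n / 3), (w (avv n i) = A ∧ w (bvv n i) = B) →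
      (fun x => p (w (avv n i)) x * p x (w (bvv n i))) = (fun x => p A x * p x B) := by
    intro i hi; funext x; rw [hi.1, hi.2]
  have e1 : ∑ g : Fin (n / 3) → S,
      (if (univ.filter fun i => (w (avv n i) = A ∧ w (bvv n i) = B) ∧ g i = D).card = u
        then ∏ i, (p (w (avv n i)) (g i) * p (g i) (w (bvv n i))) else 0)
      = (v.choose u : ℝ) * (p A D * p D B) ^ u * (s - p A D * p D B) ^ (v - u)
        * ∏ i ∈ univ.filter (fun i : Fin (n / 3) => ¬ (w (avv n i) = A ∧ w (bvv n i) = B)),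
            ∑ x, (p (w (avv n i)) x * p x (w (bvv n i))) := by
    have hb := binom_count_full (fun i x => p (w (avv n i)) x * p x (w (bvv n i)))
      (fun i => w (avv n i) = A ∧ w (bvv n i) = B) (fun x => p A x * p x B) D hconst u
    rw [hcard] at hb
    rw [hs]
    exact hb
  have e2 : ∑ g : Fin (n / 3) → S, ∏ i, (p (w (avv n i)) (g i) * p (g i) (w (bvv n i)))
      = ∏ i, ∑ x, (p (w (avv n i)) x * p x (w (bvv n i))) := by
    rw [← Fintype.piFinset_univ]
    exact (Finset.prod_univ_sum (fun _ : Fin (n / 3) => (univ : Finset S))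
      (fun i x => p (w (avv n i)) x * p x (w (bvv n i)))).symm
  have e3 : ∏ i, ∑ x, (p (w (avv n i)) x * p x (w (bvv n i)))
      = s ^ v * ∏ i ∈ univ.filter (fun i : Fin (n / 3) =>
          ¬ (w (avv n i) = A ∧ w (bvv n i) = B)),
            ∑ x, (p (w (avv n i)) x * p x (w (bvv n i))) := by
    rw [← Finset.prod_filter_mul_prod_filter_not univ
      (fun i : Fin (n / 3) => w (avv n i) = A ∧ w (bvv n i) = B)]
    congr 1
    rw [Finset.prod_congr rfl (fun i hi => ?_), Finset.prod_const, hV']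
    have hi' := (Finset.mem_filter.mp hi).2
    show ∑ x, (p (w (avv n i)) x * p x (w (bvv n i))) = s
    rw [hs]
    exact Finset.sum_congr rfl fun x _ => by rw [hi'.1, hi'.2]
  have hsv : s ^ v = s ^ u * s ^ (v - u) := by rw [← pow_add]; congr 1; omega
  have h1 : s - q * s = (1 - q) * s := by ring
  rw [e1, e2, e3, hts, h1, mul_pow, mul_pow, hsv]
  ring

end PerW

section Master
variable {S : Type*} [Fintype S] [DecidableEq S]

lemma ite_irrel {α : Sort*} {c : Prop} {d₁ : Decidable c} (d₂ : Decidable c) (x y : α) :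
    @ite α c d₁ x y = @ite α c d₂ x y := by
  rw [Subsingleton.elim d₁ d₂]

lemma main_claim (π : S → ℝ) (p : S → S → ℝ) (A B D : S) (n u v : ℕ) (hu : u ≤ v) (q : ℝ)
    (hts : p A D * p D B = q * ∑ x, p A x * p x B) :
    prOf (chainLaw π p n) (fun z => Ucount A B D n z = u ∧ Vcount A B n z = v)
      = (v.choose u : ℝ) * q ^ u * (1 - q) ^ (v - u)
        * prOf (chainLaw π p n) (fun z => Vcount A B n z = v) := by
  classical
  have expand1 : prOf (chainLaw π p n)
        (fun z => Ucount A B D n z = u ∧ Vcount A B n z = v)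
      = ∑ gw : (Fin (n / 3) → S) × ({j : Fin n // ¬ Mid n j} → S),
          if Ucount A B D n ((chainEquiv S n).symm gw) = u ∧
              Vcount A B n ((chainEquiv S n).symm gw) = v
            then chainLaw π p n ((chainEquiv S n).symm gw) else 0 := by
    unfold prOf
    refine Eq.trans (Finset.sum_congr rfl fun z _ => ite_irrel _ _ _)
      (Equiv.sum_comp (chainEquiv S n).symm
        (fun z => if Ucount A B D n z = u ∧ Vcount A B n z = v
          then chainLaw π p n z else 0)).symm
  have expand2 : prOf (chainLaw π p n) (fun z => Vcount A B n z = v)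
      = ∑ gw : (Fin (n / 3) → S) × ({j : Fin n // ¬ Mid n j} → S),
          if Vcount A B n ((chainEquiv S n).symm gw) = v
            then chainLaw π p n ((chainEquiv S n).symm gw) else 0 := by
    unfold prOf
    refine Eq.trans (Finset.sum_congr rfl fun z _ => ite_irrel _ _ _)
      (Equiv.sum_comp (chainEquiv S n).symm
        (fun z => if Vcount A B n z = v then chainLaw π p n z else 0)).symm
  rw [expand1, expand2]
  rw [Fintype.sum_prod_type, Fintype.sum_prod_type]
  conv_lhs => rw [Finset.sum_comm]
  conv_rhs => rw [Finset.sum_comm]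
  rw [Finset.mul_sum]
  refine Finset.sum_congr rfl fun w _ => ?_
  by_cases hV : (univ.filter fun i : Fin (n / 3) =>
      w (avv n i) = A ∧ w (bvv n i) = B).card = v
  · -- main case
    have lhs_eq : ∀ g : Fin (n / 3) → S,
        (if (Ucount A B D n ((chainEquiv S n).symm (g, w)) = u ∧
            Vcount A B n ((chainEquiv S n).symm (g, w)) = v)
          then chainLaw π p n ((chainEquiv S n).symm (g, w)) else 0)
        = (if (univ.filter fun i =>
              (w (avv n i) = A ∧ w (bvv n i) = B) ∧ g i = D).card = u
            then Fw π p n w *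
              ∏ i, (p (w (avv n i)) (g i) * p (g i) (w (bvv n i))) else 0) := by
      intro g
      rw [chain_factor]
      refine if_congr ?_ rfl rfl
      rw [Ucount_factor, Vcount_factor]
      constructor
      · rintro ⟨h1, _⟩; exact h1
      · intro h1; exact ⟨h1, hV⟩
    have rhs_eq : ∀ g : Fin (n / 3) → S,
        (if Vcount A B n ((chainEquiv S n).symm (g, w)) = v
          then chainLaw π p n ((chainEquiv S n).symm (g, w)) else 0)
        = Fw π p n w * ∏ i, (p (w (avv n i)) (g i) * p (g i) (w (bvv n i))) := by
      intro g
      rw [chain_factor]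
      refine if_pos ?_
      rw [Vcount_factor]; exact hV
    simp only [lhs_eq, rhs_eq]
    exact per_w_main p A B D n u v hu q _ (Fw π p n w) rfl hts w hV
  · -- degenerate case
    have lhs0 : ∀ g : Fin (n / 3) → S,
        (if (Ucount A B D n ((chainEquiv S n).symm (g, w)) = u ∧
            Vcount A B n ((chainEquiv S n).symm (g, w)) = v)
          then chainLaw π p n ((chainEquiv S n).symm (g, w)) else 0) = 0 := by
      intro g
      refine if_neg ?_
      rintro ⟨_, h2⟩
      rw [Vcount_factor] at h2
      exact hV h2
    have rhs0 : ∀ g : Fin (n / 3) → S,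
        (if Vcount A B n ((chainEquiv S n).symm (g, w)) = v
          then chainLaw π p n ((chainEquiv S n).symm (g, w)) else 0) = 0 := by
      intro g
      refine if_neg ?_
      intro h2
      rw [Vcount_factor] at h2
      exact hV h2
    simp only [lhs0, rhs0, Finset.sum_const_zero, mul_zero]

end Master

/-- for every `v` with `P(V = v) > 0`, the conditional distribution of
`U` given `V = v` is binomial `B(v, q)` with
`q = p 𝐀 𝐃 * p 𝐃 𝐁 / Σ_{𝐃'} p 𝐀 𝐃' * p 𝐃' 𝐁`:
`P(U = u | V = v) = C(v,u) q^u (1-q)^{v-u}` for all `u ≤ v`. -/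
theorem U_given_V_binomial
    {𝔸 : Type*} [Fintype 𝔸] [DecidableEq 𝔸]
    (p : (𝔸 × 𝔸) → (𝔸 × 𝔸) → ℝ)
    (hpnn : ∀ x y, 0 ≤ p x y) (hprow : ∀ x, ∑ y, p x y = 1)
    (π : (𝔸 × 𝔸) → ℝ) (hπnn : ∀ x, 0 ≤ π x) (hπsum : ∑ x, π x = 1)
    (hstat : ∀ y, ∑ x, π x * p x y = π y)
    (haper : ∃ m : ℕ, ∀ x y, 0 < (Matrix.of p ^ m) x y)
    (A B D : 𝔸 × 𝔸)
    (hAB : 0 < π A * ∑ C : 𝔸 × 𝔸, p A C * p C B)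
    (q : ℝ) (hq : q = p A D * p D B / ∑ D' : 𝔸 × 𝔸, p A D' * p D' B)
    (hqpos : 0 < q)
    (n : ℕ) (v : ℕ)
    (hv : 0 < prOf (chainLaw π p n) (fun z => Vcount A B n z = v)) :
    ∀ u : ℕ, u ≤ v →
      prOf (chainLaw π p n) (fun z => Ucount A B D n z = u ∧ Vcount A B n z = v) /
          prOf (chainLaw π p n) (fun z => Vcount A B n z = v)
        = (v.choose u : ℝ) * q ^ u * (1 - q) ^ (v - u) := by
  intro u hu
  classical
  have hs : (∑ D' : 𝔸 × 𝔸, p A D' * p D' B) ≠ 0 := by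
    intro h0
    rw [h0, div_zero] at hq
    rw [hq] at hqpos
    exact lt_irrefl 0 hqpos
  have hts : p A D * p D B = q * ∑ x : 𝔸 × 𝔸, p A x * p x B := by
    rw [hq]; field_simp
  rw [main_claim π p A B D n u v hu q hts, mul_div_assoc, div_self (ne_of_gt hv), mul_one]
end
end
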